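/- arXiv:2210.13862 — 9 statements merged into one kernel-verified Lean document; each statement's English description precedes it below -/
import Mathlib

section
/- For non-negative integers n, m and any integer k with 0 ≤ k ≤ n + m, one has binom(n, m) = Σ_{i=0}^{m} binom(n-k+i, m-i) · binom(k-i, i) + Σ_{i=0}^{m-1} binom(n-k+i, m-i-1) · binom(k-i-1, i), where the binomial coefficient binom(a, b) is declared to be 0 whenever a < 0 or b < 0. -/
/-- Binomial coefficient extended to integer arguments, declared to be `0`
whenever one of the arguments is negative. -/
def binom (a b : ℤ) : ℤ := if 0 ≤ a ∧ 0 ≤ b then (a.toNat).choose b.toNat else 0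

lemma binom_neg_left {a : ℤ} (b : ℤ) (ha : a < 0) : binom a b = 0 := by
  simp [binom, ha.not_ge]

lemma binom_neg_right (a : ℤ) {b : ℤ} (hb : b < 0) : binom a b = 0 := by
  simp [binom, hb.not_ge]

lemma binom_zero_right {a : ℤ} (ha : 0 ≤ a) : binom a 0 = 1 := by
  simp [binom, ha]

lemma binom_pascal (a b : ℤ) (h : 1 ≤ b ∨ 0 ≤ a) :
    binom (a + 1) b = binom a b + binom a (b - 1) := by
  rcases lt_or_ge b 0 with hb | hb
  · rw [binom_neg_right _ hb, binom_neg_right _ hb, binom_neg_right _ (by omega)]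
    ring
  rcases eq_or_lt_of_le hb with hb0 | hb1
  · have ha : 0 ≤ a := by omega
    rw [← hb0, binom_zero_right (by omega), binom_zero_right ha,
      binom_neg_right _ (by norm_num)]
    ring
  · rcases lt_or_ge a 0 with ha | ha
    · rw [binom_neg_left _ ha, binom_neg_left _ ha]
      rcases lt_or_ge (a + 1) 0 with ha1 | ha1
      · rw [binom_neg_left _ ha1]; ring
      · have : a + 1 = 0 := by omega
        rw [this]
        have hz : Nat.choose 0 b.toNat = 0 := Nat.choose_eq_zero_of_lt (by omega)
        simp [binom, hz, hb]
    · lift a to ℕ using ha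
      lift b to ℕ using hb
      have hb1' : 1 ≤ b := by exact_mod_cast hb1
      obtain ⟨c, rfl⟩ := Nat.exists_eq_add_of_le hb1'
      have e1 : ((a:ℤ) + 1).toNat = a + 1 := by omega
      have e2 : ((1 + c : ℕ) : ℤ).toNat = c + 1 := by omega
      have e3 : (((1 + c : ℕ) : ℤ) - 1).toNat = c := by omega
      simp only [binom, e1, e2, e3]
      rw [if_pos (by constructor <;> omega), if_pos (by constructor <;> omega),
        if_pos (by constructor <;> omega)]
      simp [Nat.choose_succ_succ', Int.toNat_natCast]
      push_cast
      ring

/-- For non-negative integers `n, m` and `0 ≤ k ≤ n + m`,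
`binom n m = Σ_{i=0}^{m} binom (n-k+i) (m-i) * binom (k-i) i
  + Σ_{i=0}^{m-1} binom (n-k+i) (m-i-1) * binom (k-i-1) i`. -/
theorem binom_identity (n m k : ℕ) (hk : k ≤ n + m) :
    binom n m =
      (∑ i ∈ Finset.range (m + 1),
        binom ((n : ℤ) - k + i) ((m : ℤ) - i) * binom ((k : ℤ) - i) i) +
      ∑ i ∈ Finset.range m,
        binom ((n : ℤ) - k + i) ((m : ℤ) - i - 1) * binom ((k : ℤ) - i - 1) i := by
  induction k with
  | zero =>
    have h2 : ∀ i ∈ Finset.range m,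
        binom ((n : ℤ) - ((0:ℕ):ℤ) + i) ((m : ℤ) - i - 1)
          * binom (((0:ℕ):ℤ) - (i:ℤ) - 1) i = 0 := by
      intro i _
      have h0 : binom (((0:ℕ):ℤ) - (i:ℤ) - 1) i = 0 :=
        binom_neg_left _ (by push_cast; omega)
      rw [h0, mul_zero]
    have h1 : ∀ i ∈ Finset.range (m+1), i ≠ 0 →
        binom ((n : ℤ) - ((0:ℕ):ℤ) + i) ((m : ℤ) - i)
          * binom (((0:ℕ):ℤ) - (i:ℤ)) i = 0 := by
      intro i _ hi
      have h0 : binom (((0:ℕ):ℤ) - (i:ℤ)) i = 0 :=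
        binom_neg_left _ (by push_cast; omega)
      rw [h0, mul_zero]
    rw [Finset.sum_eq_zero h2, add_zero,
      Finset.sum_eq_single 0 h1
      (fun h => absurd (Finset.mem_range.2 (Nat.succ_pos m)) h)]
    push_cast
    rw [binom_zero_right le_rfl]
    norm_num
  | succ k ih =>
    have hk' : k ≤ n + m := by omega
    have IH := ih hk'
    push_cast at *
    -- Step 1: Pascal on the second factor of the first sum
    have step1 : ∀ i ∈ Finset.range (m + 1),
        binom ((n:ℤ) - (k + 1) + i) ((m:ℤ) - i) * binom ((k:ℤ) + 1 - i) i
        = binom ((n:ℤ) - (k+1) + i) ((m:ℤ) - i) * binom ((k:ℤ) - i) i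
          + binom ((n:ℤ) - (k+1) + i) ((m:ℤ) - i) * binom ((k:ℤ) - i) ((i:ℤ) - 1) := by
      intro i hi
      have hp := binom_pascal ((k:ℤ) - i) i (by
        rcases Nat.eq_zero_or_pos i with h0 | h0
        · right; subst h0; push_cast; omega
        · left; exact_mod_cast h0)
      have e : (k:ℤ) - i + 1 = (k:ℤ) + 1 - i := by ring
      rw [e] at hp
      rw [hp, mul_add]
    rw [Finset.sum_congr rfl step1, Finset.sum_add_distrib]
    -- the second piece equals old B(k)
    have step2 : ∑ i ∈ Finset.range (m + 1),
        binom ((n:ℤ) - (k+1) + i) ((m:ℤ) - i) * binom ((k:ℤ) - i) ((i:ℤ) - 1)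
        = ∑ i ∈ Finset.range m,
            binom ((n:ℤ) - k + i) ((m:ℤ) - i - 1) * binom ((k:ℤ) - i - 1) i := by
      rw [Finset.sum_range_succ']
      have h0 : binom ((k:ℤ) - ((0:ℕ):ℤ)) (((0:ℕ):ℤ) - 1) = 0 :=
        binom_neg_right _ (by push_cast)
      rw [h0, mul_zero, add_zero]
      refine Finset.sum_congr rfl fun i _ => ?_
      push_cast
      have e1 : (n:ℤ) - (k+1) + (i+1) = (n:ℤ) - k + i := by ring
      have e2 : (m:ℤ) - (i+1) = (m:ℤ) - i - 1 := by ring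
      have e3 : (k:ℤ) - (i+1) = (k:ℤ) - i - 1 := by ring
      have e4 : (i:ℤ) + 1 - 1 = (i:ℤ) := by ring
      rw [e1, e2, e3, e4]
    rw [step2]
    -- Step 3: merge remaining first sum with new second sum
    have step3 : (∑ i ∈ Finset.range (m + 1),
          binom ((n:ℤ) - (k+1) + i) ((m:ℤ) - i) * binom ((k:ℤ) - i) i)
        + (∑ i ∈ Finset.range m,
          binom ((n:ℤ) - (k+1) + i) ((m:ℤ) - i - 1) * binom ((k:ℤ) + 1 - i - 1) i)
        = ∑ i ∈ Finset.range (m + 1),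
            binom ((n:ℤ) - k + i) ((m:ℤ) - i) * binom ((k:ℤ) - i) i := by
      have hext : ∑ i ∈ Finset.range m,
          binom ((n:ℤ) - (k+1) + i) ((m:ℤ) - i - 1) * binom ((k:ℤ) + 1 - i - 1) i
          = ∑ i ∈ Finset.range (m + 1),
          binom ((n:ℤ) - (k+1) + i) ((m:ℤ) - i - 1) * binom ((k:ℤ) + 1 - i - 1) i := by
        rw [Finset.sum_range_succ]
        have h0 : binom ((n:ℤ) - (k+1) + m) ((m:ℤ) - (m:ℕ) - 1) = 0 :=
          binom_neg_right _ (by push_cast; omega)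
        rw [h0, zero_mul, add_zero]
      rw [hext, ← Finset.sum_add_distrib]
      refine Finset.sum_congr rfl fun i hi => ?_
      rw [Finset.mem_range] at hi
      have e5 : (k:ℤ) + 1 - i - 1 = (k:ℤ) - i := by ring
      rw [e5, ← add_mul]
      congr 1
      have hp := binom_pascal ((n:ℤ) - (k+1) + i) ((m:ℤ) - i) (by
        rcases Nat.lt_or_ge i m with h0 | h0
        · left; push_cast; omega
        · right; push_cast; omega)
      have e6 : (n:ℤ) - (k+1) + i + 1 = (n:ℤ) - k + i := by ring
      rw [e6] at hp
      rw [hp]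
    rw [add_right_comm, step3]
    exact IH
end

section
/- Let q_r(x) and q_r(x,x) be as defined by the generating series Π (1+x_i t)/(1-x_i t) and its square, with q_r = 0 for r < 0. Then for every integer λ₁ ≥ 0, Σ_{k=0}^{λ₁} q_{2k+1}(x) · q_{2(λ₁−k)+1}(x) = (1/2) q_{2λ₁+2}(x,x). -/
open Finset PowerSeries

-- combinatorial helper
lemma parity_sum {R : Type*} [CommRing R] (g : ℕ → R) (l : ℕ) :
    ∑ i ∈ Finset.range (2 * l + 3), (1 - (-1 : R) ^ i) * g i
      = 2 * ∑ k ∈ Finset.range (l + 1), g (2 * k + 1) := by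
  induction l with
  | zero => simp [Finset.sum_range_succ]; ring
  | succ m ih =>
      have h1 : 2 * (m + 1) + 3 = (2 * m + 3) + 1 + 1 := by ring
      rw [h1, Finset.sum_range_succ, Finset.sum_range_succ, ih]
      have e1 : (-1 : R) ^ (2 * m + 3) = -1 := Odd.neg_one_pow ⟨m + 1, by ring⟩
      have e2 : (-1 : R) ^ (2 * m + 3 + 1) = 1 := Even.neg_one_pow ⟨m + 2, by ring⟩
      rw [e1, e2]
      have : 2 * m + 3 = 2 * (m + 1) + 1 := by ring
      rw [this, Finset.sum_range_succ (fun k => g (2 * k + 1)) (m + 1)]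
      ring

lemma rescale_C' {R : Type*} [CommRing R] (a b : R) :
    PowerSeries.rescale a (PowerSeries.C b) = PowerSeries.C b := by
  ext n
  rw [PowerSeries.coeff_rescale]
  cases n with
  | zero => simp
  | succ m => simp [PowerSeries.coeff_C]

/-- The `n = 1` case (even version) of the Mizukawa–Nakajima–Yamada conjecture:
`∑_{k=0}^{λ₁} q_{2k+1}(x) q_{2(λ₁-k)+1}(x) = (1/2) q_{2λ₁+2}(x,x)`. -/
theorem mny_n_one_even (n : ℕ) (hn : 1 ≤ n)
    (q qq : ℕ → MvPolynomial (Fin n) ℚ)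
    (hq : (PowerSeries.mk fun r => q r) *
        ∏ i : Fin n, (1 - PowerSeries.C (MvPolynomial.X i) *
          PowerSeries.X)
      = ∏ i : Fin n, (1 + PowerSeries.C (MvPolynomial.X i) *
          PowerSeries.X))
    (hqq : (PowerSeries.mk fun r => qq r) *
        (∏ i : Fin n, (1 - PowerSeries.C (MvPolynomial.X i) *
          PowerSeries.X)) ^ 2
      = (∏ i : Fin n, (1 + PowerSeries.C (MvPolynomial.X i) *
          PowerSeries.X)) ^ 2)
    (l : ℕ) :
    ∑ k ∈ Finset.range (l + 1), q (2 * k + 1) * q (2 * (l - k) + 1)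
      = MvPolynomial.C ((1 : ℚ) / 2) * qq (2 * l + 2) := by
  classical
  set Q : PowerSeries (MvPolynomial (Fin n) ℚ) := PowerSeries.mk fun r => q r with hQdef
  set QQ : PowerSeries (MvPolynomial (Fin n) ℚ) := PowerSeries.mk fun r => qq r with hQQdef
  set D : PowerSeries (MvPolynomial (Fin n) ℚ) := ∏ i : Fin n,
    (1 - PowerSeries.C (MvPolynomial.X i) * PowerSeries.X) with hDdef
  set N : PowerSeries (MvPolynomial (Fin n) ℚ) := ∏ i : Fin n,
    (1 + PowerSeries.C (MvPolynomial.X i) * PowerSeries.X) with hNdef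
  have hDcc : PowerSeries.constantCoeff D = 1 := by
    rw [hDdef, map_prod]
    simp
  have hNcc : PowerSeries.constantCoeff N = 1 := by
    rw [hNdef, map_prod]
    simp
  have hDne : D ≠ 0 := by
    intro h; rw [h, map_zero] at hDcc; exact one_ne_zero hDcc.symm
  have hNne : N ≠ 0 := by
    intro h; rw [h, map_zero] at hNcc; exact one_ne_zero hNcc.symm
  -- QQ = Q ^ 2
  have hQQ : QQ = Q ^ 2 := by
    have h : QQ * D ^ 2 = Q ^ 2 * D ^ 2 := by
      rw [hqq, ← hq]; ring
    exact mul_right_cancel₀ (pow_ne_zero 2 hDne) h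
  -- rescale facts
  have hρN : PowerSeries.rescale (-1 : (MvPolynomial (Fin n) ℚ)) N = D := by
    rw [hNdef, hDdef, map_prod]
    refine Finset.prod_congr rfl fun i _ => ?_
    rw [map_add, map_one, map_mul, rescale_C', PowerSeries.rescale_neg_one_X,
      mul_neg, ← sub_eq_add_neg]
  have hρD : PowerSeries.rescale (-1 : (MvPolynomial (Fin n) ℚ)) D = N := by
    rw [hNdef, hDdef, map_prod]
    refine Finset.prod_congr rfl fun i _ => ?_
    rw [map_sub, map_one, map_mul, rescale_C', PowerSeries.rescale_neg_one_X,
      mul_neg, sub_neg_eq_add]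
  set Q' : PowerSeries (MvPolynomial (Fin n) ℚ) := PowerSeries.rescale (-1 : (MvPolynomial (Fin n) ℚ)) Q with hQ'def
  have hq' : Q' * N = D := by
    have := congrArg (PowerSeries.rescale (-1 : (MvPolynomial (Fin n) ℚ))) hq
    rw [map_mul, ← hQ'def, hρD, hρN] at this
    exact this
  have hunit : Q * Q' = 1 := by
    have h : Q * Q' * (D * N) = 1 * (D * N) := by
      calc Q * Q' * (D * N) = (Q * D) * (Q' * N) := by ring
        _ = N * D := by rw [hq, hq']
        _ = 1 * (D * N) := by ring
    exact mul_right_cancel₀ (mul_ne_zero hDne hNne) h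
  -- coefficient identities
  have hA : ∑ p ∈ Finset.HasAntidiagonal.antidiagonal (2 * l + 2),
      q p.1 * ((-1 : (MvPolynomial (Fin n) ℚ)) ^ p.2 * q p.2) = 0 := by
    have h := congrArg (PowerSeries.coeff (2 * l + 2)) hunit
    rw [PowerSeries.coeff_mul, PowerSeries.coeff_one, if_neg (by omega)] at h
    simpa [hQ'def, hQdef, PowerSeries.coeff_rescale, PowerSeries.coeff_mk] using h
  have hB : ∑ p ∈ Finset.HasAntidiagonal.antidiagonal (2 * l + 2), q p.1 * q p.2 = qq (2 * l + 2) := by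
    have h := congrArg (PowerSeries.coeff (2 * l + 2)) hQQ
    rw [sq, PowerSeries.coeff_mul] at h
    simpa [hQdef, hQQdef, PowerSeries.coeff_mk] using h.symm
  -- convert to range sums
  have h23 : 2 * l + 2 + 1 = 2 * l + 3 := by omega
  have hA' : ∑ i ∈ Finset.range (2 * l + 3),
      (-1 : (MvPolynomial (Fin n) ℚ)) ^ i * (q i * q (2 * l + 2 - i)) = 0 := by
    rw [← hA, Finset.Nat.sum_antidiagonal_eq_sum_range_succ_mk, h23]
    refine Finset.sum_congr rfl fun i hi => ?_
    have hi' : i ≤ 2 * l + 2 := by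
      simp only [Finset.mem_range] at hi; omega
    have hpow : (-1 : (MvPolynomial (Fin n) ℚ)) ^ (2 * l + 2 - i) = (-1 : (MvPolynomial (Fin n) ℚ)) ^ i := by
      have h1 : (-1 : (MvPolynomial (Fin n) ℚ)) ^ (2 * l + 2 - i) * (-1 : (MvPolynomial (Fin n) ℚ)) ^ i = 1 := by
        rw [← pow_add]
        exact Even.neg_one_pow ⟨l + 1, by omega⟩
      have h2 : (-1 : (MvPolynomial (Fin n) ℚ)) ^ i * (-1 : (MvPolynomial (Fin n) ℚ)) ^ i = 1 := by
        rw [← pow_add]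
        exact Even.neg_one_pow ⟨i, by omega⟩
      calc (-1 : (MvPolynomial (Fin n) ℚ)) ^ (2 * l + 2 - i)
          = (-1 : (MvPolynomial (Fin n) ℚ)) ^ (2 * l + 2 - i) * ((-1 : (MvPolynomial (Fin n) ℚ)) ^ i * (-1 : (MvPolynomial (Fin n) ℚ)) ^ i) := by
            rw [h2, mul_one]
        _ = ((-1 : (MvPolynomial (Fin n) ℚ)) ^ (2 * l + 2 - i) * (-1 : (MvPolynomial (Fin n) ℚ)) ^ i) * (-1 : (MvPolynomial (Fin n) ℚ)) ^ i := by ring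
        _ = (-1 : (MvPolynomial (Fin n) ℚ)) ^ i := by rw [h1, one_mul]
    rw [hpow]; ring
  have hB' : ∑ i ∈ Finset.range (2 * l + 3), q i * q (2 * l + 2 - i)
      = qq (2 * l + 2) := by
    rw [← hB, Finset.Nat.sum_antidiagonal_eq_sum_range_succ_mk, h23]
  -- combine via parity_sum
  have hmain : 2 * ∑ k ∈ Finset.range (l + 1), q (2 * k + 1) * q (2 * (l - k) + 1)
      = qq (2 * l + 2) := by
    have hps := parity_sum (fun i => q i * q (2 * l + 2 - i)) l
    have hsc : ∑ k ∈ Finset.range (l + 1),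
        q (2 * k + 1) * q (2 * l + 2 - (2 * k + 1))
        = ∑ k ∈ Finset.range (l + 1), q (2 * k + 1) * q (2 * (l - k) + 1) := by
      refine Finset.sum_congr rfl fun k hk => ?_
      have : 2 * l + 2 - (2 * k + 1) = 2 * (l - k) + 1 := by
        simp only [Finset.mem_range] at hk; omega
      rw [this]
    rw [hsc] at hps
    calc 2 * ∑ k ∈ Finset.range (l + 1), q (2 * k + 1) * q (2 * (l - k) + 1)
        = ∑ i ∈ Finset.range (2 * l + 3),
            (1 - (-1 : (MvPolynomial (Fin n) ℚ)) ^ i) * (q i * q (2 * l + 2 - i)) := hps.symm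
      _ = (∑ i ∈ Finset.range (2 * l + 3), q i * q (2 * l + 2 - i))
            - ∑ i ∈ Finset.range (2 * l + 3),
              (-1 : (MvPolynomial (Fin n) ℚ)) ^ i * (q i * q (2 * l + 2 - i)) := by
          rw [← Finset.sum_sub_distrib]
          exact Finset.sum_congr rfl fun i _ => by ring
      _ = qq (2 * l + 2) := by rw [hA', hB', sub_zero]
  have hc : (MvPolynomial.C ((1 : ℚ) / 2) : (MvPolynomial (Fin n) ℚ)) * 2 = 1 := by
    rw [show (2 : (MvPolynomial (Fin n) ℚ)) = MvPolynomial.C (2 : ℚ) from (map_ofNat _ 2).symm, ← map_mul]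
    norm_num
  calc ∑ k ∈ Finset.range (l + 1), q (2 * k + 1) * q (2 * (l - k) + 1)
      = (MvPolynomial.C ((1 : ℚ) / 2) * 2) *
          ∑ k ∈ Finset.range (l + 1), q (2 * k + 1) * q (2 * (l - k) + 1) := by
        rw [hc, one_mul]
    _ = MvPolynomial.C ((1 : ℚ) / 2) *
          (2 * ∑ k ∈ Finset.range (l + 1), q (2 * k + 1) * q (2 * (l - k) + 1)) := by
        ring
    _ = MvPolynomial.C ((1 : ℚ) / 2) * qq (2 * l + 2) := by rw [hmain]
end

section
/- Let q_r(x) and q_r(x,x) be as defined by the generating series Π (1+x_i t)/(1-x_i t) and its square. Then for every integer λ₁ ≥ 0, Σ_{k=0}^{λ₁} q_{2k}(x) · q_{2(λ₁−k)+1}(x) = (1/2) q_{2λ₁+1}(x,x). -/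
open Finset

lemma sum_range_two_mul' {R : Type*} [AddCommMonoid R] (m : ℕ) (f : ℕ → R) :
    ∑ j ∈ Finset.range (2*m), f j = ∑ k ∈ Finset.range m, (f (2*k) + f (2*k+1)) := by
  induction m with
  | zero => simp
  | succ m ih =>
    rw [show 2*(m+1) = 2*m+1+1 by ring, Finset.sum_range_succ, Finset.sum_range_succ,
      Finset.sum_range_succ, ih, add_assoc]

/-- The `n = 1` case (odd version) of the Mizukawa–Nakajima–Yamada conjecture:
`∑_{k=0}^{λ₁} q_{2k}(x) q_{2(λ₁-k)+1}(x) = (1/2) q_{2λ₁+1}(x,x)`. -/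
theorem mny_n_one_odd (n : ℕ) (hn : 1 ≤ n)
    (q qq : ℕ → MvPolynomial (Fin n) ℚ)
    (hq : (PowerSeries.mk fun r => q r) *
        ∏ i : Fin n, (1 - PowerSeries.C (R := MvPolynomial (Fin n) ℚ) (MvPolynomial.X i) *
          PowerSeries.X)
      = ∏ i : Fin n, (1 + PowerSeries.C (R := MvPolynomial (Fin n) ℚ) (MvPolynomial.X i) *
          PowerSeries.X))
    (hqq : (PowerSeries.mk fun r => qq r) *
        (∏ i : Fin n, (1 - PowerSeries.C (R := MvPolynomial (Fin n) ℚ) (MvPolynomial.X i) *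
          PowerSeries.X)) ^ 2
      = (∏ i : Fin n, (1 + PowerSeries.C (R := MvPolynomial (Fin n) ℚ) (MvPolynomial.X i) *
          PowerSeries.X)) ^ 2)
    (l : ℕ) :
    ∑ k ∈ Finset.range (l + 1), q (2 * k) * q (2 * (l - k) + 1)
      = MvPolynomial.C ((1 : ℚ) / 2) * qq (2 * l + 1) := by
  set D := ∏ i : Fin n, (1 - PowerSeries.C (R := MvPolynomial (Fin n) ℚ) (MvPolynomial.X i) *
      PowerSeries.X) with hD
  have hDne : D ≠ 0 := by
    have : PowerSeries.constantCoeff D = 1 := by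
      simp [hD, map_prod]
    intro h
    rw [h] at this
    simp at this
  have key : PowerSeries.mk (fun r => qq r) = (PowerSeries.mk fun r => q r) ^ 2 := by
    have h2 : (PowerSeries.mk fun r => qq r) * D ^ 2
        = (PowerSeries.mk fun r => q r) ^ 2 * D ^ 2 := by
      rw [hqq, ← hq]; ring
    exact mul_right_cancel₀ (pow_ne_zero 2 hDne) h2
  have hcoeff : qq (2*l+1) = ∑ k ∈ Finset.range (2*l+2), q k * q (2*l+1-k) := by
    have := congrArg (PowerSeries.coeff (2*l+1)) key
    rw [PowerSeries.coeff_mk, sq, PowerSeries.coeff_mul,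
      Finset.Nat.sum_antidiagonal_eq_sum_range_succ_mk] at this
    simpa using this
  have hsplit : ∑ k ∈ Finset.range (2*l+2), q k * q (2*l+1-k)
      = ∑ k ∈ Finset.range (l+1), (q (2*k) * q (2*l+1-2*k) + q (2*k+1) * q (2*l+1-(2*k+1))) := by
    rw [show 2*l+2 = 2*(l+1) by ring, sum_range_two_mul']
  have hodd : ∑ k ∈ Finset.range (l+1), q (2*k+1) * q (2*l+1-(2*k+1))
      = ∑ k ∈ Finset.range (l+1), q (2*k) * q (2*(l-k)+1) := by
    rw [← Finset.sum_range_reflect]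
    apply Finset.sum_congr rfl
    intro k hk
    simp only [Finset.mem_range] at hk
    have hk' : k ≤ l := by omega
    rw [mul_comm]
    congr 2 <;> omega
  have heven : ∀ k ∈ Finset.range (l+1), q (2*k) * q (2*l+1-2*k) = q (2*k) * q (2*(l-k)+1) := by
    intro k hk
    simp only [Finset.mem_range] at hk
    congr 2
    omega
  have : qq (2*l+1) = 2 * ∑ k ∈ Finset.range (l+1), q (2*k) * q (2*(l-k)+1) := by
    rw [hcoeff, hsplit, Finset.sum_add_distrib, hodd, Finset.sum_congr rfl heven, two_mul]
  rw [this]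
  rw [show (2 : MvPolynomial (Fin n) ℚ) = MvPolynomial.C 2 by rw [map_ofNat]]
  rw [← mul_assoc, ← map_mul]
  norm_num
end

section
/- Define q_r(x) by Σ_{r≥0} q_r(x) t^r = Π_{i=1}^n (1+x_i t)/(1-x_i t) with q_r = 0 for r < 0, and q_r(x,x) by the square of that series. For every integer λ₁ ≥ 0: Σ_{k=0}^{λ₁} (q_{2k+2}(x) q_1(x) − q_{2k+3}(x)) · (q_{2(λ₁−k)+2}(x) q_1(x) − q_{2(λ₁−k)+3}(x)) = (1/4) (q_{2λ₁+4}(x,x) q_2(x,x) − 2 q_{2λ₁+5}(x,x) q_1(x,x) + 2 q_{2λ₁+6}(x,x)). -/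
open Finset PowerSeries
namespace MNYAux
variable {A : Type*} [CommRing A]

noncomputable def Ep (q : ℕ → A) : PowerSeries A := .mk fun r => if r % 2 = 0 then q r else 0
noncomputable def Op (q : ℕ → A) : PowerSeries A := .mk fun r => if r % 2 = 0 then 0 else q r
@[simp] lemma coeff_Ep (q : ℕ → A) (r : ℕ) :
    coeff r (Ep q) = if r % 2 = 0 then q r else 0 := coeff_mk _ _
@[simp] lemma coeff_Op (q : ℕ → A) (r : ℕ) :
    coeff r (Op q) = if r % 2 = 0 then 0 else q r := coeff_mk _ _
@[simp] lemma constantCoeff_Ep (q : ℕ → A) : constantCoeff (Ep q) = q 0 := rfl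
@[simp] lemma constantCoeff_Op (q : ℕ → A) : constantCoeff (Op q) = 0 := rfl
lemma Ep_add_Op (q : ℕ → A) : Ep q + Op q = PowerSeries.mk q := by
  ext r; by_cases h : r % 2 = 0 <;> simp [h]
lemma Ep_sub_Op (q : ℕ → A) : Ep q - Op q = PowerSeries.rescale (-1 : A) (PowerSeries.mk q) := by
  rw [rescale_mk]; ext r
  by_cases h : r % 2 = 0
  · have he : Even r := Nat.even_iff.2 h
    simp [h, he.neg_one_pow]
  · have ho : Odd r := Nat.odd_iff.2 (by omega)
    simp [h, ho.neg_one_pow]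
lemma coeff_OO_odd (q : ℕ → A) {m : ℕ} (hm : m % 2 = 1) :
    coeff m (Op q * Op q) = 0 := by
  rw [coeff_mul]
  refine Finset.sum_eq_zero ?_
  rintro ⟨a, b⟩ hab
  rw [Finset.HasAntidiagonal.mem_antidiagonal] at hab
  by_cases ha : a % 2 = 0
  · simp [ha]
  · have hb : b % 2 = 0 := by omega
    simp [hb]
lemma coeff_EO_even (q : ℕ → A) {m : ℕ} (hm : m % 2 = 0) :
    coeff m (Ep q * Op q) = 0 := by
  rw [coeff_mul]
  refine Finset.sum_eq_zero ?_
  rintro ⟨a, b⟩ hab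
  rw [Finset.HasAntidiagonal.mem_antidiagonal] at hab
  by_cases ha : a % 2 = 0
  · have hb : b % 2 = 0 := by omega
    simp [hb]
  · simp [ha]
lemma coeff_OO_two (q : ℕ → A) : coeff 2 (Op q * Op q) = q 1 * q 1 := by
  rw [coeff_mul, Finset.Nat.sum_antidiagonal_eq_sum_range_succ_mk]
  simp [Finset.sum_range_succ]
lemma coeff_EO_one (q : ℕ → A) : coeff 1 (Ep q * Op q) = q 0 * q 1 := by
  rw [coeff_mul, Finset.Nat.sum_antidiagonal_eq_sum_range_succ_mk]
  simp [Finset.sum_range_succ]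

lemma key (q qq : ℕ → A) (h0 : q 0 = 1)
    (hQR : (PowerSeries.mk q) * PowerSeries.rescale (-1 : A) (PowerSeries.mk q) = 1)
    (hQQ : PowerSeries.mk qq = (PowerSeries.mk q) ^ 2) (l : ℕ) :
    (∑ k ∈ Finset.range (l + 1),
        (q (2 * k + 2) * q 1 - q (2 * k + 3)) *
          (q (2 * (l - k) + 2) * q 1 - q (2 * (l - k) + 3))) * 4
      = qq (2 * l + 4) * qq 2 - 2 * qq (2 * l + 5) * qq 1 + 2 * qq (2 * l + 6) := by
  have hEE : Ep q * Ep q = 1 + Op q * Op q := by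
    have h : (Ep q + Op q) * (Ep q - Op q) = 1 := by
      rw [Ep_add_Op, Ep_sub_Op]; exact hQR
    linear_combination h
  have hqqr : ∀ r, qq r =
      coeff r (1 + (Op q * Op q + Op q * Op q) + (Ep q * Op q + Ep q * Op q)) := by
    intro r
    have h2 : (PowerSeries.mk q) ^ 2
        = 1 + (Op q * Op q + Op q * Op q) + (Ep q * Op q + Ep q * Op q) := by
      rw [← Ep_add_Op q]
      linear_combination hEE
    rw [← coeff_mk r qq, hQQ, h2]
  have v3 : qq (2 * l + 6) = coeff (2 * l + 6) (Op q * Op q)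
      + coeff (2 * l + 6) (Op q * Op q) := by
    rw [hqqr, map_add, map_add, map_add, map_add, PowerSeries.coeff_one,
      if_neg (by omega), coeff_EO_even q (by omega)]
    ring
  have v2 : qq (2 * l + 5) = coeff (2 * l + 5) (Ep q * Op q)
      + coeff (2 * l + 5) (Ep q * Op q) := by
    rw [hqqr, map_add, map_add, map_add, map_add, PowerSeries.coeff_one,
      if_neg (by omega), coeff_OO_odd q (by omega)]
    ring
  have v1 : qq (2 * l + 4) = coeff (2 * l + 4) (Op q * Op q)
      + coeff (2 * l + 4) (Op q * Op q) := by
    rw [hqqr, map_add, map_add, map_add, map_add, PowerSeries.coeff_one,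
      if_neg (by omega), coeff_EO_even q (by omega)]
    ring
  have v4 : qq 2 = q 1 * q 1 + q 1 * q 1 := by
    rw [hqqr, map_add, map_add, map_add, map_add, PowerSeries.coeff_one,
      if_neg (by omega), coeff_EO_even q (by omega), coeff_OO_two]
    ring
  have v5 : qq 1 = q 1 + q 1 := by
    rw [hqqr, map_add, map_add, map_add, map_add, PowerSeries.coeff_one,
      if_neg (by omega), coeff_OO_odd q (by omega), coeff_EO_one, h0]
    ring
  -- the series G
  have hGcoeff : ∀ r, coeff r (PowerSeries.C (q 1) * (PowerSeries.X * Ep q) - Op q) =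
      q 1 * (if 1 ≤ r then coeff (r - 1) (Ep q) else 0) - coeff r (Op q) := by
    intro r
    rw [map_sub, coeff_C_mul, ← pow_one (PowerSeries.X : PowerSeries A),
      coeff_X_pow_mul']
  have hGe : ∀ r, r % 2 = 0 →
      coeff r (PowerSeries.C (q 1) * (PowerSeries.X * Ep q) - Op q) = 0 := by
    intro r hr
    rw [hGcoeff]
    rcases Nat.eq_zero_or_pos r with h | h
    · subst h
      rw [if_neg (by omega), coeff_Op, if_pos rfl]
      ring
    · rw [if_pos (show (1:ℕ) ≤ r by omega), coeff_Ep, if_neg (by omega),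
        coeff_Op, if_pos hr]
      ring
  have hG1 : coeff 1 (PowerSeries.C (q 1) * (PowerSeries.X * Ep q) - Op q) = 0 := by
    rw [hGcoeff, if_pos le_rfl, show (1:ℕ) - 1 = 0 from rfl, coeff_Ep, if_pos rfl,
      coeff_Op, if_neg (by omega), h0]
    ring
  have hGo : ∀ k, coeff (2 * k + 3) (PowerSeries.C (q 1) * (PowerSeries.X * Ep q) - Op q)
      = q (2 * k + 2) * q 1 - q (2 * k + 3) := by
    intro k
    rw [hGcoeff, if_pos (by omega), show 2 * k + 3 - 1 = 2 * k + 2 from by omega,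
      coeff_Ep, if_pos (by omega), coeff_Op, if_neg (by omega)]
    ring
  -- LHS as a coefficient of G * G
  have hL : (∑ k ∈ Finset.range (l + 1),
        (q (2 * k + 2) * q 1 - q (2 * k + 3)) *
          (q (2 * (l - k) + 2) * q 1 - q (2 * (l - k) + 3)))
      = coeff (2 * l + 6) ((PowerSeries.C (q 1) * (PowerSeries.X * Ep q) - Op q)
        * (PowerSeries.C (q 1) * (PowerSeries.X * Ep q) - Op q)) := by
    rw [coeff_mul, Finset.Nat.sum_antidiagonal_eq_sum_range_succ
      (fun a b => coeff a (PowerSeries.C (q 1) * (PowerSeries.X * Ep q) - Op q)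
        * coeff b (PowerSeries.C (q 1) * (PowerSeries.X * Ep q) - Op q))]
    have himg : ((Finset.range (l + 1)).image fun k => 2 * k + 3)
        ⊆ Finset.range (2 * l + 6 + 1) := by
      intro i hi
      simp only [Finset.mem_image, Finset.mem_range] at hi ⊢
      obtain ⟨k, hk, rfl⟩ := hi
      omega
    rw [← Finset.sum_subset himg, Finset.sum_image (by intro a _ b _ h; simp only at h; omega)]
    · refine Finset.sum_congr rfl ?_
      intro k hk
      rw [Finset.mem_range] at hk
      have h1 : 2 * l + 6 - (2 * k + 3) = 2 * (l - k) + 3 := by omega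
      rw [hGo, h1, hGo]
    · intro i hi hni
      simp only [Finset.mem_range] at hi
      simp only [Finset.mem_image, Finset.mem_range] at hni
      by_cases hp : i % 2 = 0
      · rw [hGe i hp, zero_mul]
      · rcases Nat.lt_or_ge i 3 with h3 | h3
        · have : i = 1 := by omega
          rw [this, hG1, zero_mul]
        · have : i = 2 * l + 5 := by
            by_contra hne
            exact hni ⟨(i - 3) / 2, by omega, by omega⟩
          rw [this, show 2 * l + 6 - (2 * l + 5) = 1 by omega, hG1, mul_zero]
  -- compute the coefficient of G * G
  have hGG : (PowerSeries.C (q 1) * (PowerSeries.X * Ep q) - Op q)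
      * (PowerSeries.C (q 1) * (PowerSeries.X * Ep q) - Op q)
      = PowerSeries.X ^ 2 * (PowerSeries.C (q 1 * q 1) * (1 + Op q * Op q))
      - PowerSeries.X * (PowerSeries.C (q 1 + q 1) * (Ep q * Op q)) + Op q * Op q := by
    rw [map_mul, map_add]
    linear_combination (PowerSeries.C (q 1)) * (PowerSeries.C (q 1))
      * PowerSeries.X ^ 2 * hEE
  have hR : coeff (2 * l + 6) ((PowerSeries.C (q 1) * (PowerSeries.X * Ep q) - Op q)
        * (PowerSeries.C (q 1) * (PowerSeries.X * Ep q) - Op q))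
      = q 1 * q 1 * coeff (2 * l + 4) (Op q * Op q)
        - (q 1 + q 1) * coeff (2 * l + 5) (Ep q * Op q)
        + coeff (2 * l + 6) (Op q * Op q) := by
    have c1 : coeff (2 * l + 6)
        (PowerSeries.X ^ 2 * (PowerSeries.C (q 1 * q 1) * (1 + Op q * Op q)))
        = q 1 * q 1 * coeff (2 * l + 4) (Op q * Op q) := by
      rw [coeff_X_pow_mul', if_pos (by omega), show 2 * l + 6 - 2 = 2 * l + 4 from by omega,
        coeff_C_mul, map_add, PowerSeries.coeff_one, if_neg (by omega)]
      ring
    have c2 : coeff (2 * l + 6)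
        (PowerSeries.X * (PowerSeries.C (q 1 + q 1) * (Ep q * Op q)))
        = (q 1 + q 1) * coeff (2 * l + 5) (Ep q * Op q) := by
      rw [← pow_one (PowerSeries.X : PowerSeries A), coeff_X_pow_mul', if_pos (by omega),
        show 2 * l + 6 - 1 = 2 * l + 5 from by omega, coeff_C_mul]
    rw [hGG, map_add, map_sub, c1, c2]
  rw [hL, hR, v1, v2, v3, v4, v5]
  ring

variable {A : Type*} [CommRing A]

lemma rescale_neg_one_C (a : A) :
    PowerSeries.rescale (-1 : A) (PowerSeries.C a) = PowerSeries.C a := by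
  ext m
  simp only [PowerSeries.coeff_rescale, PowerSeries.coeff_C]
  split_ifs with h
  · subst h; simp
  · simp

lemma rescale_one_sub (a : A) :
    PowerSeries.rescale (-1 : A) (1 - PowerSeries.C a * PowerSeries.X)
      = 1 + PowerSeries.C a * PowerSeries.X := by
  rw [map_sub, map_one, map_mul, rescale_neg_one_C, rescale_neg_one_X]
  ring

lemma rescale_one_add (a : A) :
    PowerSeries.rescale (-1 : A) (1 + PowerSeries.C a * PowerSeries.X)
      = 1 - PowerSeries.C a * PowerSeries.X := by
  rw [map_add, map_one, map_mul, rescale_neg_one_C, rescale_neg_one_X]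
  ring

end MNYAux

open MNYAux in
/-- The `n = 2`, `ℓ(λ) ≤ 1` case (even version) of the Mizukawa–Nakajima–Yamada
conjecture, written out via the Jacobi–Trudi determinants
`S_{(2k+2,1)} = q_{2k+2} q_1 - q_{2k+3}` and the two-row Schur `Q`-function. -/
theorem mny_n_two_len_one_even (n : ℕ) (hn : 1 ≤ n)
    (q qq : ℕ → MvPolynomial (Fin n) ℚ)
    (hq : (PowerSeries.mk fun r => q r) *
        ∏ i : Fin n, (1 - PowerSeries.C (R := MvPolynomial (Fin n) ℚ) (MvPolynomial.X i) *
          PowerSeries.X)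
      = ∏ i : Fin n, (1 + PowerSeries.C (R := MvPolynomial (Fin n) ℚ) (MvPolynomial.X i) *
          PowerSeries.X))
    (hqq : (PowerSeries.mk fun r => qq r) *
        (∏ i : Fin n, (1 - PowerSeries.C (R := MvPolynomial (Fin n) ℚ) (MvPolynomial.X i) *
          PowerSeries.X)) ^ 2
      = (∏ i : Fin n, (1 + PowerSeries.C (R := MvPolynomial (Fin n) ℚ) (MvPolynomial.X i) *
          PowerSeries.X)) ^ 2)
    (l : ℕ) :
    ∑ k ∈ Finset.range (l + 1),
        (q (2 * k + 2) * q 1 - q (2 * k + 3)) *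
          (q (2 * (l - k) + 2) * q 1 - q (2 * (l - k) + 3))
      = MvPolynomial.C ((1 : ℚ) / 4) *
          (qq (2 * l + 4) * qq 2 - 2 * qq (2 * l + 5) * qq 1 + 2 * qq (2 * l + 6)) := by
  set D : PowerSeries (MvPolynomial (Fin n) ℚ) :=
    ∏ i : Fin n, (1 - PowerSeries.C (R := MvPolynomial (Fin n) ℚ) (MvPolynomial.X i) * PowerSeries.X) with hD
  set N : PowerSeries (MvPolynomial (Fin n) ℚ) :=
    ∏ i : Fin n, (1 + PowerSeries.C (R := MvPolynomial (Fin n) ℚ) (MvPolynomial.X i) * PowerSeries.X) with hN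
  have hcD : constantCoeff (R := MvPolynomial (Fin n) ℚ) D = 1 := by
    rw [hD, map_prod]
    simp
  have hcN : constantCoeff (R := MvPolynomial (Fin n) ℚ) N = 1 := by
    rw [hN, map_prod]
    simp
  have h0 : q 0 = 1 := by
    have := congrArg (constantCoeff (R := MvPolynomial (Fin n) ℚ)) hq
    rwa [map_mul, hcD, hcN, PowerSeries.constantCoeff_mk, mul_one] at this
  have hr : PowerSeries.rescale (-1 : MvPolynomial (Fin n) ℚ) (PowerSeries.mk fun r => q r) * N = D := by
    have h := congrArg (PowerSeries.rescale (-1 : MvPolynomial (Fin n) ℚ)) hq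
    rw [map_mul, hD, hN, map_prod, map_prod] at h
    simpa only [rescale_one_sub, rescale_one_add] using h
  have hUDN : IsUnit (D * N) := by
    rw [PowerSeries.isUnit_iff_constantCoeff, map_mul, hcD, hcN, mul_one]
    exact isUnit_one
  have hQR : (PowerSeries.mk fun r => q r)
      * PowerSeries.rescale (-1 : MvPolynomial (Fin n) ℚ) (PowerSeries.mk fun r => q r) = 1 := by
    refine hUDN.mul_right_cancel ?_
    calc (PowerSeries.mk fun r => q r)
          * PowerSeries.rescale (-1 : MvPolynomial (Fin n) ℚ) (PowerSeries.mk fun r => q r) * (D * N)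
        = ((PowerSeries.mk fun r => q r) * D)
          * (PowerSeries.rescale (-1 : MvPolynomial (Fin n) ℚ) (PowerSeries.mk fun r => q r) * N) := by ring
      _ = N * D := by rw [hq, hr]
      _ = 1 * (D * N) := by ring
  have hUD2 : IsUnit (D ^ 2) := by
    rw [PowerSeries.isUnit_iff_constantCoeff, map_pow, hcD, one_pow]
    exact isUnit_one
  have hQQ : (PowerSeries.mk fun r => qq r) = (PowerSeries.mk fun r => q r) ^ 2 := by
    refine hUD2.mul_right_cancel ?_
    rw [hqq, ← hq, mul_pow]
  have hk := key (fun r => q r) (fun r => qq r) h0 hQR hQQ l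
  have h4 : (MvPolynomial.C ((1 : ℚ) / 4) : MvPolynomial (Fin n) ℚ) * 4 = 1 := by
    have : (4 : MvPolynomial (Fin n) ℚ) = MvPolynomial.C (4 : ℚ) :=
      (map_ofNat MvPolynomial.C 4).symm
    rw [this, ← map_mul]
    norm_num
  linear_combination MvPolynomial.C ((1 : ℚ) / 4) * hk
    - (∑ k ∈ Finset.range (l + 1),
        (q (2 * k + 2) * q 1 - q (2 * k + 3)) *
          (q (2 * (l - k) + 2) * q 1 - q (2 * (l - k) + 3))) * h4
end

section
/- Define q_r(x) by Σ_{r≥0} q_r(x) t^r = Π_{i=1}^n (1+x_i t)/(1-x_i t) with q_r = 0 for r < 0, and q_r(x,x) by the square of that series. For every integer λ₁ ≥ 0: Σ_{k=0}^{λ₁} q_{2k+1}(x) · (q_{2(λ₁−k)+2}(x) q_1(x) − q_{2(λ₁−k)+3}(x)) = (1/4) (q_{2λ₁+3}(x,x) q_1(x,x) − 2 q_{2λ₁+4}(x,x)). -/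
open Finset

private lemma sum_range_even_odd {R : Type*} [AddCommMonoid R] (f : ℕ → R) (m : ℕ) :
    ∑ k ∈ range (2 * m), f k
      = ∑ k ∈ range m, f (2 * k) + ∑ k ∈ range m, f (2 * k + 1) := by
  induction m with
  | zero => simp
  | succ m ih =>
    rw [show 2 * (m + 1) = (2 * m + 1) + 1 from by ring, sum_range_succ, sum_range_succ, ih,
      sum_range_succ, sum_range_succ]
    abel

/-- The `n = 2`, `ℓ(λ) ≤ 1` case (odd version) of the Mizukawa–Nakajima–Yamada
conjecture. -/
theorem mny_n_two_len_one_odd (n : ℕ) (hn : 1 ≤ n)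
    (q qq : ℕ → MvPolynomial (Fin n) ℚ)
    (hq : (PowerSeries.mk fun r => q r) *
        ∏ i : Fin n, (1 - PowerSeries.C (R := MvPolynomial (Fin n) ℚ) (MvPolynomial.X i) *
          PowerSeries.X)
      = ∏ i : Fin n, (1 + PowerSeries.C (R := MvPolynomial (Fin n) ℚ) (MvPolynomial.X i) *
          PowerSeries.X))
    (hqq : (PowerSeries.mk fun r => qq r) *
        (∏ i : Fin n, (1 - PowerSeries.C (R := MvPolynomial (Fin n) ℚ) (MvPolynomial.X i) *
          PowerSeries.X)) ^ 2
      = (∏ i : Fin n, (1 + PowerSeries.C (R := MvPolynomial (Fin n) ℚ) (MvPolynomial.X i) *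
          PowerSeries.X)) ^ 2)
    (l : ℕ) :
    ∑ k ∈ Finset.range (l + 1),
        q (2 * k + 1) * (q (2 * (l - k) + 2) * q 1 - q (2 * (l - k) + 3))
      = MvPolynomial.C ((1 : ℚ) / 4) * (qq (2 * l + 3) * qq 1 - 2 * qq (2 * l + 4)) := by
  set G : PowerSeries (MvPolynomial (Fin n) ℚ) :=
    ∏ i : Fin n, (1 - PowerSeries.C (R := MvPolynomial (Fin n) ℚ) (MvPolynomial.X i) * PowerSeries.X) with hG
  set F : PowerSeries (MvPolynomial (Fin n) ℚ) :=
    ∏ i : Fin n, (1 + PowerSeries.C (R := MvPolynomial (Fin n) ℚ) (MvPolynomial.X i) * PowerSeries.X) with hF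
  -- constant coefficients
  have hG0 : PowerSeries.constantCoeff (R := MvPolynomial (Fin n) ℚ) G = 1 := by
    rw [hG, map_prod]; simp
  have hF0 : PowerSeries.constantCoeff (R := MvPolynomial (Fin n) ℚ) F = 1 := by
    rw [hF, map_prod]; simp
  have hGne : G ≠ 0 := by
    intro h; rw [h, map_zero] at hG0; exact zero_ne_one hG0
  have hFne : F ≠ 0 := by
    intro h; rw [h, map_zero] at hF0; exact zero_ne_one hF0
  -- rescaling by -1 swaps F and G
  have hrC : ∀ a : MvPolynomial (Fin n) ℚ, PowerSeries.rescale (-1 : MvPolynomial (Fin n) ℚ) (PowerSeries.C (R := MvPolynomial (Fin n) ℚ) a) = PowerSeries.C (R := MvPolynomial (Fin n) ℚ) a := by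
    intro a
    ext m
    rw [PowerSeries.coeff_rescale]
    rcases m with _ | m <;> simp [PowerSeries.coeff_C]
  have hrG : PowerSeries.rescale (-1 : MvPolynomial (Fin n) ℚ) G = F := by
    rw [hG, hF, map_prod]
    refine Finset.prod_congr rfl fun i _ => ?_
    rw [map_sub, map_one, map_mul, hrC, PowerSeries.rescale_neg_one_X]
    ring
  have hrF : PowerSeries.rescale (-1 : MvPolynomial (Fin n) ℚ) F = G := by
    rw [hG, hF, map_prod]
    refine Finset.prod_congr rfl fun i _ => ?_
    rw [map_add, map_one, map_mul, hrC, PowerSeries.rescale_neg_one_X]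
    ring
  -- Q(t) Q(-t) = 1
  have h2 := congrArg (PowerSeries.rescale (-1 : MvPolynomial (Fin n) ℚ)) hq
  rw [map_mul, hrG, hrF] at h2
  have key : ((PowerSeries.mk fun r => q r) * PowerSeries.rescale (-1 : MvPolynomial (Fin n) ℚ)
      (PowerSeries.mk fun r => q r)) * (G * F) = 1 * (G * F) := by
    rw [one_mul,
      show ((PowerSeries.mk fun r => q r) * PowerSeries.rescale (-1 : MvPolynomial (Fin n) ℚ)
        (PowerSeries.mk fun r => q r)) * (G * F)
        = ((PowerSeries.mk fun r => q r) * G) *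
          ((PowerSeries.rescale (-1 : MvPolynomial (Fin n) ℚ) (PowerSeries.mk fun r => q r)) * F) from by ring,
      hq, h2]
    ring
  have hQn := mul_right_cancel₀ (mul_ne_zero hGne hFne) key
  rw [PowerSeries.rescale_mk] at hQn
  -- QQ = Q^2
  have key2 : (PowerSeries.mk fun r => qq r) * G ^ 2
      = ((PowerSeries.mk fun r => q r) * (PowerSeries.mk fun r => q r)) * G ^ 2 := by
    rw [hqq, ← hq]; ring
  have hQQ := mul_right_cancel₀ (pow_ne_zero 2 hGne) key2
  -- coefficient identities
  have hT : ∀ r : ℕ, r ≠ 0 →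
      ∑ k ∈ range (r + 1), q k * ((-1 : MvPolynomial (Fin n) ℚ) ^ (r - k) * q (r - k)) = 0 := by
    intro r hr
    have h := congrArg (PowerSeries.coeff (R := MvPolynomial (Fin n) ℚ) r) hQn
    rw [PowerSeries.coeff_mul, Finset.Nat.sum_antidiagonal_eq_sum_range_succ_mk,
      PowerSeries.coeff_one, if_neg hr] at h
    simpa using h
  have hS : ∀ r : ℕ, qq r = ∑ k ∈ range (r + 1), q k * q (r - k) := by
    intro r
    have h := congrArg (PowerSeries.coeff (R := MvPolynomial (Fin n) ℚ) r) hQQ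
    rw [PowerSeries.coeff_mul, Finset.Nat.sum_antidiagonal_eq_sum_range_succ_mk] at h
    simpa using h
  have hq0 : q 0 = 1 := by
    have h := congrArg (PowerSeries.constantCoeff (R := MvPolynomial (Fin n) ℚ)) hq
    rw [map_mul, PowerSeries.constantCoeff_mk, hG0, hF0, mul_one] at h
    exact h
  -- qq 1 = 2 q 1
  have hqq1 : qq 1 = 2 * q 1 := by
    rw [hS 1, sum_range_succ, sum_range_succ, sum_range_zero]
    norm_num [hq0]
    ring
  -- qq (2l+3) = 2 (A + q (2l+3))
  have hqq3 : qq (2 * l + 3)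
      = 2 * ((∑ k ∈ range (l + 1), q (2 * k + 1) * q (2 * (l - k) + 2)) + q (2 * l + 3)) := by
    have hEO : (∑ k ∈ range (l + 2), q (2 * k) * q (2 * (l + 1 - k) + 1))
        = ∑ k ∈ range (l + 2), q (2 * k + 1) * q (2 * (l + 1 - k)) := by
      have h := hT (2 * l + 3) (by omega)
      rw [show 2 * l + 3 + 1 = 2 * (l + 2) from by ring, sum_range_even_odd] at h
      have e1 : ∑ k ∈ range (l + 2),
          q (2 * k) * ((-1 : MvPolynomial (Fin n) ℚ) ^ (2 * l + 3 - 2 * k) * q (2 * l + 3 - 2 * k))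
          = -∑ k ∈ range (l + 2), q (2 * k) * q (2 * (l + 1 - k) + 1) := by
        rw [← Finset.sum_neg_distrib]
        refine sum_congr rfl fun k hk => ?_
        rw [mem_range] at hk
        rw [show 2 * l + 3 - 2 * k = 2 * (l + 1 - k) + 1 from by omega, pow_succ, pow_mul,
          neg_one_sq, one_pow]
        ring
      have e2 : ∑ k ∈ range (l + 2),
          q (2 * k + 1) * ((-1 : MvPolynomial (Fin n) ℚ) ^ (2 * l + 3 - (2 * k + 1)) * q (2 * l + 3 - (2 * k + 1)))
          = ∑ k ∈ range (l + 2), q (2 * k + 1) * q (2 * (l + 1 - k)) := by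
        refine sum_congr rfl fun k hk => ?_
        rw [mem_range] at hk
        rw [show 2 * l + 3 - (2 * k + 1) = 2 * (l + 1 - k) from by omega, pow_mul,
          neg_one_sq, one_pow, one_mul]
      rw [e1, e2] at h
      linear_combination -h
    have hO3A : (∑ k ∈ range (l + 2), q (2 * k + 1) * q (2 * (l + 1 - k)))
        = (∑ k ∈ range (l + 1), q (2 * k + 1) * q (2 * (l - k) + 2)) + q (2 * l + 3) := by
      rw [sum_range_succ]
      congr 1
      · refine sum_congr rfl fun k hk => ?_
        rw [mem_range] at hk
        rw [show 2 * (l + 1 - k) = 2 * (l - k) + 2 from by omega]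
      · rw [show l + 1 - (l + 1) = 0 from Nat.sub_self _, mul_zero, hq0, mul_one,
          show 2 * (l + 1) + 1 = 2 * l + 3 from by ring]
    have h := hS (2 * l + 3)
    rw [show 2 * l + 3 + 1 = 2 * (l + 2) from by ring, sum_range_even_odd] at h
    have e1 : ∑ k ∈ range (l + 2), q (2 * k) * q (2 * l + 3 - 2 * k)
        = ∑ k ∈ range (l + 2), q (2 * k) * q (2 * (l + 1 - k) + 1) := by
      refine sum_congr rfl fun k hk => ?_
      rw [mem_range] at hk
      rw [show 2 * l + 3 - 2 * k = 2 * (l + 1 - k) + 1 from by omega]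
    have e2 : ∑ k ∈ range (l + 2), q (2 * k + 1) * q (2 * l + 3 - (2 * k + 1))
        = ∑ k ∈ range (l + 2), q (2 * k + 1) * q (2 * (l + 1 - k)) := by
      refine sum_congr rfl fun k hk => ?_
      rw [mem_range] at hk
      rw [show 2 * l + 3 - (2 * k + 1) = 2 * (l + 1 - k) from by omega]
    rw [e1, e2, hEO, hO3A] at h
    rw [h]; ring
  -- qq (2l+4) = 2 (B + q (2l+3) q 1)
  have hqq4 : qq (2 * l + 4)
      = 2 * ((∑ k ∈ range (l + 1), q (2 * k + 1) * q (2 * (l - k) + 3))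
          + q (2 * l + 3) * q 1) := by
    have hEO : (∑ k ∈ range (l + 2), q (2 * k) * q (2 * (l + 2 - k))) + q (2 * l + 4)
        = ∑ k ∈ range (l + 2), q (2 * k + 1) * q (2 * (l + 1 - k) + 1) := by
      have h := hT (2 * l + 4) (by omega)
      rw [show 2 * l + 4 + 1 = 2 * (l + 2) + 1 from by ring, sum_range_succ,
        sum_range_even_odd] at h
      have e1 : ∑ k ∈ range (l + 2),
          q (2 * k) * ((-1 : MvPolynomial (Fin n) ℚ) ^ (2 * l + 4 - 2 * k) * q (2 * l + 4 - 2 * k))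
          = ∑ k ∈ range (l + 2), q (2 * k) * q (2 * (l + 2 - k)) := by
        refine sum_congr rfl fun k hk => ?_
        rw [mem_range] at hk
        rw [show 2 * l + 4 - 2 * k = 2 * (l + 2 - k) from by omega, pow_mul,
          neg_one_sq, one_pow, one_mul]
      have e2 : ∑ k ∈ range (l + 2),
          q (2 * k + 1) * ((-1 : MvPolynomial (Fin n) ℚ) ^ (2 * l + 4 - (2 * k + 1)) * q (2 * l + 4 - (2 * k + 1)))
          = -∑ k ∈ range (l + 2), q (2 * k + 1) * q (2 * (l + 1 - k) + 1) := by
        rw [← Finset.sum_neg_distrib]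
        refine sum_congr rfl fun k hk => ?_
        rw [mem_range] at hk
        rw [show 2 * l + 4 - (2 * k + 1) = 2 * (l + 1 - k) + 1 from by omega, pow_succ,
          pow_mul, neg_one_sq, one_pow]
        ring
      have e3 : q (2 * (l + 2)) * ((-1 : MvPolynomial (Fin n) ℚ) ^ (2 * l + 4 - 2 * (l + 2)) * q (2 * l + 4 - 2 * (l + 2)))
          = q (2 * l + 4) := by
        rw [show 2 * l + 4 - 2 * (l + 2) = 0 from by omega, pow_zero, one_mul, hq0, mul_one,
          show 2 * (l + 2) = 2 * l + 4 from by ring]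
      rw [e1, e2, e3] at h
      linear_combination h
    have hO4B : (∑ k ∈ range (l + 2), q (2 * k + 1) * q (2 * (l + 1 - k) + 1))
        = (∑ k ∈ range (l + 1), q (2 * k + 1) * q (2 * (l - k) + 3)) + q (2 * l + 3) * q 1 := by
      rw [sum_range_succ]
      congr 1
      · refine sum_congr rfl fun k hk => ?_
        rw [mem_range] at hk
        rw [show 2 * (l + 1 - k) + 1 = 2 * (l - k) + 3 from by omega]
      · rw [show l + 1 - (l + 1) = 0 from Nat.sub_self _, mul_zero, zero_add,
          show 2 * (l + 1) + 1 = 2 * l + 3 from by ring]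
    have h := hS (2 * l + 4)
    rw [show 2 * l + 4 + 1 = 2 * (l + 2) + 1 from by ring, sum_range_succ,
      sum_range_even_odd] at h
    have e1 : ∑ k ∈ range (l + 2), q (2 * k) * q (2 * l + 4 - 2 * k)
        = ∑ k ∈ range (l + 2), q (2 * k) * q (2 * (l + 2 - k)) := by
      refine sum_congr rfl fun k hk => ?_
      rw [mem_range] at hk
      rw [show 2 * l + 4 - 2 * k = 2 * (l + 2 - k) from by omega]
    have e2 : ∑ k ∈ range (l + 2), q (2 * k + 1) * q (2 * l + 4 - (2 * k + 1))
        = ∑ k ∈ range (l + 2), q (2 * k + 1) * q (2 * (l + 1 - k) + 1) := by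
      refine sum_congr rfl fun k hk => ?_
      rw [mem_range] at hk
      rw [show 2 * l + 4 - (2 * k + 1) = 2 * (l + 1 - k) + 1 from by omega]
    have e3 : q (2 * (l + 2)) * q (2 * l + 4 - 2 * (l + 2)) = q (2 * l + 4) := by
      rw [show 2 * l + 4 - 2 * (l + 2) = 0 from by omega, hq0, mul_one,
        show 2 * (l + 2) = 2 * l + 4 from by ring]
    rw [e1, e2, e3, hO4B] at h
    -- h : qq (2l+4) = E4 + (B + c3 q1) + q(2l+4),  hEO : E4 + q(2l+4) = B + c3 q1
    linear_combination h + hEO + hO4B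
  -- finish
  have expand : ∑ k ∈ Finset.range (l + 1),
        q (2 * k + 1) * (q (2 * (l - k) + 2) * q 1 - q (2 * (l - k) + 3))
      = (∑ k ∈ range (l + 1), q (2 * k + 1) * q (2 * (l - k) + 2)) * q 1
        - ∑ k ∈ range (l + 1), q (2 * k + 1) * q (2 * (l - k) + 3) := by
    rw [sum_mul, ← Finset.sum_sub_distrib]
    refine sum_congr rfl fun k _ => ?_
    ring
  have hC4 : (4 : MvPolynomial (Fin n) ℚ) * MvPolynomial.C ((1 : ℚ) / 4) = 1 := by
    rw [show (4 : MvPolynomial (Fin n) ℚ) = MvPolynomial.C (4 : ℚ) from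
      (map_ofNat (MvPolynomial.C : ℚ →+* MvPolynomial (Fin n) ℚ) 4).symm, ← map_mul]
    norm_num
  rw [expand, hqq3, hqq4, hqq1]
  linear_combination ((∑ k ∈ range (l + 1), q (2 * k + 1) * q (2 * (l - k) + 3))
    - (∑ k ∈ range (l + 1), q (2 * k + 1) * q (2 * (l - k) + 2)) * q 1) * hC4
end

section
/- Let λ = (λ₁, λ₂) be a partition with λ₁ ≥ λ₂ ≥ 0, and define Q_{(r,s)}(x,x) = q_r(x,x) q_s(x,x) + 2 Σ_{i=1}^{s} (−1)^i q_{r+i}(x,x) q_{s−i}(x,x) for (r,s) ≠ (0,0). For σ₁, σ₂ in the symmetric group S₂, let B(λ; σ₁, σ₂) be the set of pairs ((u₁,u₂),(v₁,v₂)) of pairs of non-negative integers with u₁+u₂+v₁+v₂ = λ₁+λ₂+2 and u_{σ₁(2)} + v_{σ₂(2)} ≤ λ₂. Then Q_{(2λ₁+4, 2λ₂+2)}(x,x) = 4 Σ_{σ₁,σ₂ ∈ S₂} sgn(σ₁) sgn(σ₂) Σ_{(u,v) ∈ B(λ;σ₁,σ₂)} q_{2u₁}(x) q_{2u₂+1}(x)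 q_{2v₁}(x) q_{2v₂+1}(x). -/
open Finset

/-- The entry of a pair indexed by `Fin 2` (`0 ↦` first, `1 ↦` second entry). -/
def pget (p : ℕ × ℕ) (i : Fin 2) : ℕ := if i = 0 then p.1 else p.2

/-- `B(λ; σ₁, σ₂)`: the set of pairs `(u, v)` of pairs of non-negative integers with
`u₁ + u₂ + v₁ + v₂ = λ₁ + λ₂ + 2` and `u_{σ₁(2)} + v_{σ₂(2)} ≤ λ₂`. -/
def Bset (l1 l2 : ℕ) (s1 s2 : Equiv.Perm (Fin 2)) : Finset ((ℕ × ℕ) × (ℕ × ℕ)) :=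
  ((Finset.range (l1 + l2 + 3) ×ˢ Finset.range (l1 + l2 + 3)) ×ˢ
      (Finset.range (l1 + l2 + 3) ×ˢ Finset.range (l1 + l2 + 3))).filter
    fun p => p.1.1 + p.1.2 + p.2.1 + p.2.2 = l1 + l2 + 2 ∧
      pget p.1 (s1 1) + pget p.2 (s2 1) ≤ l2

section Aux

variable {R : Type*} [CommRing R]

lemma QAux.rescale_one_sub (a : R) :
    PowerSeries.rescale (-1 : R) (1 - PowerSeries.C a * PowerSeries.X)
      = 1 + PowerSeries.C a * PowerSeries.X := by
  ext n
  rw [PowerSeries.coeff_rescale]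
  rcases n with _ | _ | n <;>
    simp [PowerSeries.coeff_one, PowerSeries.coeff_C_mul, PowerSeries.coeff_X, pow_succ]

lemma QAux.rescale_one_add (a : R) :
    PowerSeries.rescale (-1 : R) (1 + PowerSeries.C a * PowerSeries.X)
      = 1 - PowerSeries.C a * PowerSeries.X := by
  ext n
  rw [PowerSeries.coeff_rescale]
  rcases n with _ | _ | n <;>
    simp [PowerSeries.coeff_one, PowerSeries.coeff_C_mul, PowerSeries.coeff_X, pow_succ,
      sub_eq_add_neg]

/-- split a sum over `range (2*m)` by parity -/
lemma QAux.sum_range_even_split (G : ℕ → R) (m : ℕ) :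
    ∑ j ∈ range (2*m), G j = ∑ a ∈ range m, G (2*a) + ∑ a ∈ range m, G (2*a+1) := by
  induction m with
  | zero => simp
  | succ m ih =>
      have h2 : 2 * (m+1) = (2*m) + 1 + 1 := by omega
      rw [h2, sum_range_succ, sum_range_succ, ih, sum_range_succ, sum_range_succ]
      ring

lemma QAux.sum_range_odd_split (G : ℕ → R) (m : ℕ) :
    ∑ j ∈ range (2*m+1), G j = ∑ a ∈ range (m+1), G (2*a) + ∑ a ∈ range m, G (2*a+1) := by
  rw [sum_range_succ, QAux.sum_range_even_split, sum_range_succ]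
  ring

lemma QAux.sum_range_flip (f g : ℕ → R) (p : ℕ) :
    ∑ a ∈ range (p+1), f a * g (p-a) = ∑ a ∈ range (p+1), g a * f (p-a) := by
  rw [← Finset.sum_range_reflect]
  refine Finset.sum_congr rfl fun a ha => ?_
  have ha' : a ≤ p := by have := Finset.mem_range.mp ha; omega
  have h1 : p + 1 - 1 - a = p - a := by omega
  have h2 : p - (p - a) = a := by omega
  rw [h1, h2, mul_comm]

/-- core factorization of a constrained quadruple sum -/
lemma QAux.factor_core (f g h e : ℕ → R) (L l2 : ℕ) (hl : l2 ≤ L) :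
    ∑ p ∈ ((range (L+1) ×ˢ range (L+1)) ×ˢ (range (L+1) ×ˢ range (L+1))).filter
      (fun p => p.1.1 + p.1.2 + p.2.1 + p.2.2 = L ∧ p.1.2 + p.2.2 ≤ l2),
      f p.1.1 * g p.1.2 * h p.2.1 * e p.2.2
    = ∑ k ∈ range (l2+1),
        (∑ a ∈ range (k+1), g a * e (k-a)) * (∑ c ∈ range (L-k+1), f c * h (L-k-c)) := by
  rw [show (∑ k ∈ range (l2+1),
        (∑ a ∈ range (k+1), g a * e (k-a)) * (∑ c ∈ range (L-k+1), f c * h (L-k-c)))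
      = ∑ x ∈ (range (l2+1)).sigma (fun k => range (k+1) ×ˢ range (L-k+1)),
          g x.2.1 * e (x.1 - x.2.1) * (f x.2.2 * h (L - x.1 - x.2.2)) from by
    rw [Finset.sum_sigma]
    refine Finset.sum_congr rfl fun k _ => ?_
    rw [Finset.sum_mul_sum]
    rw [Finset.sum_product]]
  refine Finset.sum_nbij' (fun p => ⟨p.1.2 + p.2.2, (p.1.2, p.1.1)⟩)
    (fun x => ((x.2.2, x.2.1), (L - x.1 - x.2.2, x.1 - x.2.1))) ?_ ?_ ?_ ?_ ?_
  · intro p hp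
    simp only [mem_filter, mem_product, mem_range] at hp
    simp only [mem_sigma, mem_product, mem_range]
    omega
  · intro x hx
    simp only [mem_sigma, mem_product, mem_range] at hx
    simp only [mem_filter, mem_product, mem_range]
    omega
  · intro p hp
    simp only [mem_filter, mem_product, mem_range] at hp
    simp only [Prod.mk.injEq]
    refine Prod.ext (Prod.ext ?_ ?_) (Prod.ext ?_ ?_) <;> simp <;> omega
  · intro x hx
    simp only [mem_sigma, mem_product, mem_range] at hx
    obtain ⟨k, a, c⟩ := x
    simp only at hx ⊢
    have hak : a + (k - a) = k := by omega
    simp [hak]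
  · intro p hp
    simp only [mem_filter, mem_product, mem_range] at hp
    have h1 : p.1.2 + p.2.2 - p.1.2 = p.2.2 := by omega
    have h2 : L - (p.1.2 + p.2.2) - p.1.1 = p.2.1 := by omega
    simp only [h1, h2]
    ring

lemma QAux.factor_u1v2 (f g h e : ℕ → R) (L l2 : ℕ) (hl : l2 ≤ L) :
    ∑ p ∈ ((range (L+1) ×ˢ range (L+1)) ×ˢ (range (L+1) ×ˢ range (L+1))).filter
      (fun p => p.1.1 + p.1.2 + p.2.1 + p.2.2 = L ∧ p.1.1 + p.2.2 ≤ l2),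
      f p.1.1 * g p.1.2 * h p.2.1 * e p.2.2
    = ∑ k ∈ range (l2+1),
        (∑ a ∈ range (k+1), f a * e (k-a)) * (∑ c ∈ range (L-k+1), g c * h (L-k-c)) := by
  rw [show (∑ p ∈ ((range (L+1) ×ˢ range (L+1)) ×ˢ (range (L+1) ×ˢ range (L+1))).filter
      (fun p => p.1.1 + p.1.2 + p.2.1 + p.2.2 = L ∧ p.1.1 + p.2.2 ≤ l2),
      f p.1.1 * g p.1.2 * h p.2.1 * e p.2.2)
    = ∑ p ∈ ((range (L+1) ×ˢ range (L+1)) ×ˢ (range (L+1) ×ˢ range (L+1))).filter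
      (fun p => p.1.1 + p.1.2 + p.2.1 + p.2.2 = L ∧ p.1.2 + p.2.2 ≤ l2),
      g p.1.1 * f p.1.2 * h p.2.1 * e p.2.2 from by
    refine Finset.sum_nbij' (fun p => ((p.1.2, p.1.1), p.2)) (fun p => ((p.1.2, p.1.1), p.2))
      ?_ ?_ ?_ ?_ ?_ <;> intro p hp <;>
      simp only [mem_filter, mem_product, mem_range] at hp ⊢ <;>
      first
        | omega
        | ring]
  exact QAux.factor_core g f h e L l2 hl

lemma QAux.factor_u2v1 (f g h e : ℕ → R) (L l2 : ℕ) (hl : l2 ≤ L) :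
    ∑ p ∈ ((range (L+1) ×ˢ range (L+1)) ×ˢ (range (L+1) ×ˢ range (L+1))).filter
      (fun p => p.1.1 + p.1.2 + p.2.1 + p.2.2 = L ∧ p.1.2 + p.2.1 ≤ l2),
      f p.1.1 * g p.1.2 * h p.2.1 * e p.2.2
    = ∑ k ∈ range (l2+1),
        (∑ a ∈ range (k+1), g a * h (k-a)) * (∑ c ∈ range (L-k+1), f c * e (L-k-c)) := by
  rw [show (∑ p ∈ ((range (L+1) ×ˢ range (L+1)) ×ˢ (range (L+1) ×ˢ range (L+1))).filter
      (fun p => p.1.1 + p.1.2 + p.2.1 + p.2.2 = L ∧ p.1.2 + p.2.1 ≤ l2),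
      f p.1.1 * g p.1.2 * h p.2.1 * e p.2.2)
    = ∑ p ∈ ((range (L+1) ×ˢ range (L+1)) ×ˢ (range (L+1) ×ˢ range (L+1))).filter
      (fun p => p.1.1 + p.1.2 + p.2.1 + p.2.2 = L ∧ p.1.2 + p.2.2 ≤ l2),
      f p.1.1 * g p.1.2 * e p.2.1 * h p.2.2 from by
    refine Finset.sum_nbij' (fun p => (p.1, (p.2.2, p.2.1))) (fun p => (p.1, (p.2.2, p.2.1)))
      ?_ ?_ ?_ ?_ ?_ <;> intro p hp <;>
      simp only [mem_filter, mem_product, mem_range] at hp ⊢ <;>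
      first
        | omega
        | ring]
  exact QAux.factor_core f g e h L l2 hl

lemma QAux.factor_u1v1 (f g h e : ℕ → R) (L l2 : ℕ) (hl : l2 ≤ L) :
    ∑ p ∈ ((range (L+1) ×ˢ range (L+1)) ×ˢ (range (L+1) ×ˢ range (L+1))).filter
      (fun p => p.1.1 + p.1.2 + p.2.1 + p.2.2 = L ∧ p.1.1 + p.2.1 ≤ l2),
      f p.1.1 * g p.1.2 * h p.2.1 * e p.2.2
    = ∑ k ∈ range (l2+1),
        (∑ a ∈ range (k+1), f a * h (k-a)) * (∑ c ∈ range (L-k+1), g c * e (L-k-c)) := by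
  rw [show (∑ p ∈ ((range (L+1) ×ˢ range (L+1)) ×ˢ (range (L+1) ×ˢ range (L+1))).filter
      (fun p => p.1.1 + p.1.2 + p.2.1 + p.2.2 = L ∧ p.1.1 + p.2.1 ≤ l2),
      f p.1.1 * g p.1.2 * h p.2.1 * e p.2.2)
    = ∑ p ∈ ((range (L+1) ×ˢ range (L+1)) ×ˢ (range (L+1) ×ˢ range (L+1))).filter
      (fun p => p.1.1 + p.1.2 + p.2.1 + p.2.2 = L ∧ p.1.2 + p.2.2 ≤ l2),
      g p.1.1 * f p.1.2 * e p.2.1 * h p.2.2 from by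
    refine Finset.sum_nbij' (fun p => ((p.1.2, p.1.1), (p.2.2, p.2.1)))
      (fun p => ((p.1.2, p.1.1), (p.2.2, p.2.1)))
      ?_ ?_ ?_ ?_ ?_ <;> intro p hp <;>
      simp only [mem_filter, mem_product, mem_range] at hp ⊢ <;>
      first
        | omega
        | ring]
  exact QAux.factor_core g f e h L l2 hl

/-- `OO p = ∑ q_{2a+1} q_{2(p-a)+1}` -/
def QAux.OOs (Q : ℕ → R) (p : ℕ) : R := ∑ a ∈ range (p+1), Q (2*a+1) * Q (2*(p-a)+1)

/-- `EO p = ∑ q_{2a} q_{2(p-a)+1}` -/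
def QAux.EOs (Q : ℕ → R) (p : ℕ) : R := ∑ a ∈ range (p+1), Q (2*a) * Q (2*(p-a)+1)

/-- `EE p = ∑ q_{2a} q_{2(p-a)}` -/
def QAux.EEs (Q : ℕ → R) (p : ℕ) : R := ∑ a ∈ range (p+1), Q (2*a) * Q (2*(p-a))

lemma QAux.EE_eq_OO (Q : ℕ → R)
    (hrel : ∀ m : ℕ, 1 ≤ m → ∑ j ∈ range (m+1), (-1:R)^j * Q j * Q (m-j) = 0)
    (m : ℕ) (hm : 1 ≤ m) : QAux.EEs Q m = QAux.OOs Q (m-1) := by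
  have h := hrel (2*m) (by omega)
  rw [QAux.sum_range_odd_split (fun j => (-1:R)^j * Q j * Q (2*m-j)) m] at h
  have h1 : ∑ a ∈ range (m+1), (-1:R)^(2*a) * Q (2*a) * Q (2*m-2*a) = QAux.EEs Q m := by
    refine Finset.sum_congr rfl fun a ha => ?_
    have ha' : a ≤ m := by have := Finset.mem_range.mp ha; omega
    have e1 : ((-1:R))^(2*a) = 1 := by
      rw [pow_mul]; simp
    have e2 : 2*m - 2*a = 2*(m-a) := by omega
    rw [e1, e2, one_mul]
  have h2 : ∑ b ∈ range m, (-1:R)^(2*b+1) * Q (2*b+1) * Q (2*m-(2*b+1))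
      = - QAux.OOs Q (m-1) := by
    rw [QAux.OOs, show (m-1)+1 = m from by omega, ← Finset.sum_neg_distrib]
    refine Finset.sum_congr rfl fun b hb => ?_
    have hb' : b < m := Finset.mem_range.mp hb
    have e1 : ((-1:R))^(2*b+1) = -1 := by
      rw [pow_succ, pow_mul]; simp
    have e2 : 2*m - (2*b+1) = 2*((m-1)-b)+1 := by omega
    rw [e1, e2]
    ring
  rw [h1, h2] at h
  linear_combination h

lemma QAux.qq_even (Q : ℕ → R) (qq : ℕ → R)
    (hconv : ∀ m : ℕ, qq m = ∑ j ∈ range (m+1), Q j * Q (m-j))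
    (hrel : ∀ m : ℕ, 1 ≤ m → ∑ j ∈ range (m+1), (-1:R)^j * Q j * Q (m-j) = 0)
    (m : ℕ) (hm : 1 ≤ m) : qq (2*m) = 2 * QAux.OOs Q (m-1) := by
  rw [hconv (2*m), QAux.sum_range_odd_split (fun j => Q j * Q (2*m-j)) m]
  have h1 : ∑ a ∈ range (m+1), Q (2*a) * Q (2*m-2*a) = QAux.EEs Q m := by
    refine Finset.sum_congr rfl fun a ha => ?_
    have ha' : a ≤ m := by have := Finset.mem_range.mp ha; omega
    have e2 : 2*m - 2*a = 2*(m-a) := by omega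
    rw [e2]
  have h2 : ∑ b ∈ range m, Q (2*b+1) * Q (2*m-(2*b+1)) = QAux.OOs Q (m-1) := by
    rw [QAux.OOs, show (m-1)+1 = m from by omega]
    refine Finset.sum_congr rfl fun b hb => ?_
    have hb' : b < m := Finset.mem_range.mp hb
    have e2 : 2*m - (2*b+1) = 2*((m-1)-b)+1 := by omega
    rw [e2]
  rw [h1, h2, QAux.EE_eq_OO Q hrel m hm]
  ring

lemma QAux.qq_odd (Q : ℕ → R) (qq : ℕ → R)
    (hconv : ∀ m : ℕ, qq m = ∑ j ∈ range (m+1), Q j * Q (m-j))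
    (m : ℕ) : qq (2*m+1) = 2 * QAux.EOs Q m := by
  rw [hconv (2*m+1), show 2*m+1+1 = 2*(m+1) from by ring,
    QAux.sum_range_even_split (fun j => Q j * Q (2*m+1-j)) (m+1)]
  have h1 : ∑ a ∈ range (m+1), Q (2*a) * Q (2*m+1-2*a) = QAux.EOs Q m := by
    refine Finset.sum_congr rfl fun a ha => ?_
    have ha' : a ≤ m := by have := Finset.mem_range.mp ha; omega
    have e2 : 2*m+1 - 2*a = 2*(m-a)+1 := by omega
    rw [e2]
  have h2 : ∑ b ∈ range (m+1), Q (2*b+1) * Q (2*m+1-(2*b+1)) = QAux.EOs Q m := by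
    have h3 : ∑ b ∈ range (m+1), Q (2*b+1) * Q (2*m+1-(2*b+1))
        = ∑ b ∈ range (m+1), (fun c => Q (2*c+1)) b * (fun c => Q (2*c)) (m - b) := by
      refine Finset.sum_congr rfl fun b hb => ?_
      have hb' : b ≤ m := by have := Finset.mem_range.mp hb; omega
      have e2 : 2*m+1 - (2*b+1) = 2*(m-b) := by omega
      rw [e2]
    rw [h3, QAux.sum_range_flip (fun c => Q (2*c+1)) (fun c => Q (2*c)) m]
    rfl
  rw [h1, h2]
  ring

/-- `OE p = ∑ q_{2a+1} q_{2(p-a)}` -/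
def QAux.OEs (Q : ℕ → R) (p : ℕ) : R := ∑ a ∈ range (p+1), Q (2*a+1) * Q (2*(p-a))

lemma QAux.OEs_eq_EOs (Q : ℕ → R) (p : ℕ) : QAux.OEs Q p = QAux.EOs Q p := by
  rw [QAux.OEs, QAux.EOs,
    QAux.sum_range_flip (fun c => Q (2*c+1)) (fun c => Q (2*c)) p]

end Aux

/-- New expression of the two-row Schur `Q`-function `Q_{(2λ₁+4,2λ₂+2)}(x,x)` as a signed
sum of products of four single-variable `q`-coefficients over the sets `B(λ;σ₁,σ₂)`. -/
theorem Q_two_row_even_expression (n : ℕ) (hn : 1 ≤ n)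
    (q : ℤ → MvPolynomial (Fin n) ℚ) (qq : ℕ → MvPolynomial (Fin n) ℚ)
    (hneg : ∀ r : ℤ, r < 0 → q r = 0)
    (hq : (PowerSeries.mk fun r : ℕ => q r) *
        ∏ i : Fin n, (1 - PowerSeries.C (MvPolynomial.X i : MvPolynomial (Fin n) ℚ) *
          PowerSeries.X)
      = ∏ i : Fin n, (1 + PowerSeries.C (MvPolynomial.X i : MvPolynomial (Fin n) ℚ) *
          PowerSeries.X))
    (hqq : (PowerSeries.mk fun r => qq r) *
        (∏ i : Fin n, (1 - PowerSeries.C (MvPolynomial.X i : MvPolynomial (Fin n) ℚ) *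
          PowerSeries.X)) ^ 2
      = (∏ i : Fin n, (1 + PowerSeries.C (MvPolynomial.X i : MvPolynomial (Fin n) ℚ) *
          PowerSeries.X)) ^ 2)
    (l1 l2 : ℕ) (h : l2 ≤ l1) :
    qq (2 * l1 + 4) * qq (2 * l2 + 2) +
        2 * ∑ i ∈ Finset.Icc 1 (2 * l2 + 2),
          (-1 : MvPolynomial (Fin n) ℚ) ^ i * qq (2 * l1 + 4 + i) * qq (2 * l2 + 2 - i)
      = 4 * ∑ s : Equiv.Perm (Fin 2) × Equiv.Perm (Fin 2),
          (((Equiv.Perm.sign s.1 : ℤ) * (Equiv.Perm.sign s.2 : ℤ) : ℤ) :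
              MvPolynomial (Fin n) ℚ) *
            ∑ p ∈ Bset l1 l2 s.1 s.2,
              q (2 * p.1.1) * q (2 * p.1.2 + 1) * q (2 * p.2.1) * q (2 * p.2.2 + 1) := by
  -- ### Part 1 : power series consequences
  set D : PowerSeries (MvPolynomial (Fin n) ℚ) :=
    ∏ i : Fin n, (1 - PowerSeries.C (MvPolynomial.X i : MvPolynomial (Fin n) ℚ) * PowerSeries.X) with hDdef
  set Nn : PowerSeries (MvPolynomial (Fin n) ℚ) :=
    ∏ i : Fin n, (1 + PowerSeries.C (MvPolynomial.X i : MvPolynomial (Fin n) ℚ) * PowerSeries.X) with hNdef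
  have hDc : PowerSeries.constantCoeff D = 1 := by
    rw [hDdef, map_prod]; simp
  have hNc : PowerSeries.constantCoeff Nn = 1 := by
    rw [hNdef, map_prod]; simp
  have hD0 : D ≠ 0 := fun hh => by simp [hh] at hDc
  have hN0 : Nn ≠ 0 := fun hh => by simp [hh] at hNc
  have hsq : PowerSeries.mk (fun r => qq r) = (PowerSeries.mk fun r : ℕ => q r) ^ 2 := by
    have h2 : PowerSeries.mk (fun r => qq r) * D ^ 2 = (PowerSeries.mk fun r : ℕ => q r) ^ 2 * D ^ 2 := by
      rw [hqq, ← hq]; ring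
    exact mul_right_cancel₀ (pow_ne_zero 2 hD0) h2
  have hconv : ∀ m : ℕ, qq m = ∑ j ∈ Finset.range (m+1), q (j : ℕ) * q ((m - j : ℕ) : ℤ) := by
    intro m
    have h2 := congrArg (PowerSeries.coeff m) hsq
    rw [PowerSeries.coeff_mk, sq, PowerSeries.coeff_mul] at h2
    rw [h2, Finset.Nat.sum_antidiagonal_eq_sum_range_succ_mk]
    simp [PowerSeries.coeff_mk]
  have hres : PowerSeries.rescale (-1 : MvPolynomial (Fin n) ℚ) D = Nn := by
    rw [hDdef, hNdef, map_prod]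
    exact Finset.prod_congr rfl fun i _ => QAux.rescale_one_sub _
  have hres' : PowerSeries.rescale (-1 : MvPolynomial (Fin n) ℚ) Nn = D := by
    rw [hDdef, hNdef, map_prod]
    exact Finset.prod_congr rfl fun i _ => QAux.rescale_one_add _
  have hq' := congrArg (PowerSeries.rescale (-1 : MvPolynomial (Fin n) ℚ)) hq
  rw [map_mul, hres, hres'] at hq'
  have key : (PowerSeries.mk fun r : ℕ => q r) *
      PowerSeries.rescale (-1 : MvPolynomial (Fin n) ℚ) (PowerSeries.mk fun r : ℕ => q r) = 1 := by
    have h2 : ((PowerSeries.mk fun r : ℕ => q r) *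
        PowerSeries.rescale (-1 : MvPolynomial (Fin n) ℚ) (PowerSeries.mk fun r : ℕ => q r)) * (D * Nn)
        = 1 * (D * Nn) := by
      calc ((PowerSeries.mk fun r : ℕ => q r) *
            PowerSeries.rescale (-1 : MvPolynomial (Fin n) ℚ) (PowerSeries.mk fun r : ℕ => q r)) * (D * Nn)
          = ((PowerSeries.mk fun r : ℕ => q r) * D) *
            ((PowerSeries.rescale (-1 : MvPolynomial (Fin n) ℚ) (PowerSeries.mk fun r : ℕ => q r)) * Nn) := by
            ring
        _ = Nn * D := by rw [hq, hq']
        _ = 1 * (D * Nn) := by ring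
    exact mul_right_cancel₀ (mul_ne_zero hD0 hN0) h2
  have hrel : ∀ m : ℕ, 1 ≤ m →
      ∑ j ∈ Finset.range (m+1), (-1 : MvPolynomial (Fin n) ℚ)^j * q (j : ℕ) * q ((m - j : ℕ) : ℤ) = 0 := by
    intro m hm
    have h2 := congrArg (PowerSeries.coeff m) key
    rw [PowerSeries.coeff_mul, Finset.Nat.sum_antidiagonal_eq_sum_range_succ_mk,
      PowerSeries.coeff_one, if_neg (by omega)] at h2
    have h3 : ∑ j ∈ Finset.range (m+1), (-1 : MvPolynomial (Fin n) ℚ)^j * q (j:ℕ) * q ((m - j : ℕ) : ℤ)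
        = (-1 : MvPolynomial (Fin n) ℚ)^m *
          ∑ j ∈ Finset.range (m+1),
            (PowerSeries.coeff j (PowerSeries.mk fun r : ℕ => q r)) *
            (PowerSeries.coeff (m - j)
              (PowerSeries.rescale (-1 : MvPolynomial (Fin n) ℚ) (PowerSeries.mk fun r : ℕ => q r))) := by
      rw [Finset.mul_sum]
      refine Finset.sum_congr rfl fun j hj => ?_
      have hj' : j ≤ m := by have := Finset.mem_range.mp hj; omega
      rw [PowerSeries.coeff_rescale, PowerSeries.coeff_mk, PowerSeries.coeff_mk]
      symm
      have e1 : (-1 : MvPolynomial (Fin n) ℚ)^m * (-1 : MvPolynomial (Fin n) ℚ)^(m-j)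
          = (-1 : MvPolynomial (Fin n) ℚ)^j := by
        rw [← pow_add]
        have e2 : m + (m - j) = j + 2 * (m - j) := by omega
        rw [e2, pow_add, pow_mul]
        simp
      calc (-1 : MvPolynomial (Fin n) ℚ)^m *
            (q (j:ℕ) * ((-1 : MvPolynomial (Fin n) ℚ)^(m-j) * q ((m-j : ℕ) : ℤ)))
          = ((-1 : MvPolynomial (Fin n) ℚ)^m * (-1 : MvPolynomial (Fin n) ℚ)^(m-j)) *
            (q (j:ℕ) * q ((m-j:ℕ) : ℤ)) := by ring
        _ = (-1 : MvPolynomial (Fin n) ℚ)^j * q (j:ℕ) * q ((m-j:ℕ):ℤ) := by rw [e1]; ring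
    have h2' : ∑ j ∈ Finset.range (m+1),
        (PowerSeries.coeff j (PowerSeries.mk fun r : ℕ => q r)) *
          (PowerSeries.coeff (m - j)
            (PowerSeries.rescale (-1 : MvPolynomial (Fin n) ℚ) (PowerSeries.mk fun r : ℕ => q r))) = 0 := by
      simpa using h2
    rw [h3, h2', mul_zero]
  -- ### Part 2 : the right-hand side
  clear hq hqq hsq hq' key hres hres' hDc hNc hD0 hN0 hDdef hNdef hneg hn
  clear D Nn
  set Qf : ℕ → MvPolynomial (Fin n) ℚ := fun j => q (j : ℤ) with hQf
  have hbox : Finset.range (l1+l2+3) = Finset.range (l1+l2+2+1) := by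
    rw [show l1+l2+3 = l1+l2+2+1 from by omega]
  -- the four B-sets
  have hB11 : Bset l1 l2 1 1
      = ((Finset.range (l1+l2+2+1) ×ˢ Finset.range (l1+l2+2+1)) ×ˢ
          (Finset.range (l1+l2+2+1) ×ˢ Finset.range (l1+l2+2+1))).filter
        (fun p => p.1.1 + p.1.2 + p.2.1 + p.2.2 = l1+l2+2 ∧ p.1.2 + p.2.2 ≤ l2) := by
    unfold Bset
    rw [hbox]
    exact Finset.filter_congr fun p _ => by simp [pget]
  have hBs1 : Bset l1 l2 (Equiv.swap 0 1) 1
      = ((Finset.range (l1+l2+2+1) ×ˢ Finset.range (l1+l2+2+1)) ×ˢ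
          (Finset.range (l1+l2+2+1) ×ˢ Finset.range (l1+l2+2+1))).filter
        (fun p => p.1.1 + p.1.2 + p.2.1 + p.2.2 = l1+l2+2 ∧ p.1.1 + p.2.2 ≤ l2) := by
    unfold Bset
    rw [hbox]
    exact Finset.filter_congr fun p _ => by simp [pget, Equiv.swap_apply_right]
  have hB1s : Bset l1 l2 1 (Equiv.swap 0 1)
      = ((Finset.range (l1+l2+2+1) ×ˢ Finset.range (l1+l2+2+1)) ×ˢ
          (Finset.range (l1+l2+2+1) ×ˢ Finset.range (l1+l2+2+1))).filter
        (fun p => p.1.1 + p.1.2 + p.2.1 + p.2.2 = l1+l2+2 ∧ p.1.2 + p.2.1 ≤ l2) := by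
    unfold Bset
    rw [hbox]
    exact Finset.filter_congr fun p _ => by simp [pget, Equiv.swap_apply_right]
  have hBss : Bset l1 l2 (Equiv.swap 0 1) (Equiv.swap 0 1)
      = ((Finset.range (l1+l2+2+1) ×ˢ Finset.range (l1+l2+2+1)) ×ˢ
          (Finset.range (l1+l2+2+1) ×ˢ Finset.range (l1+l2+2+1))).filter
        (fun p => p.1.1 + p.1.2 + p.2.1 + p.2.2 = l1+l2+2 ∧ p.1.1 + p.2.1 ≤ l2) := by
    unfold Bset
    rw [hbox]
    exact Finset.filter_congr fun p _ => by simp [pget, Equiv.swap_apply_right]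
  -- normalize the summand
  have hsummand : ∀ (s : Finset ((ℕ × ℕ) × (ℕ × ℕ))),
      (∑ p ∈ s, q (2 * p.1.1) * q (2 * p.1.2 + 1) * q (2 * p.2.1) * q (2 * p.2.2 + 1))
      = ∑ p ∈ s, (fun u : ℕ => Qf (2*u)) p.1.1 * (fun u : ℕ => Qf (2*u+1)) p.1.2 *
          (fun u : ℕ => Qf (2*u)) p.2.1 * (fun u : ℕ => Qf (2*u+1)) p.2.2 := by
    intro s
    refine Finset.sum_congr rfl fun p _ => ?_
    simp only [hQf]
    push_cast
    ring
  have hl2L : l2 ≤ l1 + l2 + 2 := by omega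
  -- the four factored sums
  have hS11 : (∑ p ∈ Bset l1 l2 1 1,
        q (2 * p.1.1) * q (2 * p.1.2 + 1) * q (2 * p.2.1) * q (2 * p.2.2 + 1))
      = ∑ k ∈ Finset.range (l2+1), QAux.OOs Qf k * QAux.EEs Qf (l1+l2+2-k) := by
    rw [hsummand, hB11,
      QAux.factor_core (fun u : ℕ => Qf (2*u)) (fun u : ℕ => Qf (2*u+1))
        (fun u : ℕ => Qf (2*u)) (fun u : ℕ => Qf (2*u+1)) (l1+l2+2) l2 hl2L]
    rfl
  have hSs1 : (∑ p ∈ Bset l1 l2 (Equiv.swap 0 1) 1,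
        q (2 * p.1.1) * q (2 * p.1.2 + 1) * q (2 * p.2.1) * q (2 * p.2.2 + 1))
      = ∑ k ∈ Finset.range (l2+1), QAux.EOs Qf k * QAux.OEs Qf (l1+l2+2-k) := by
    rw [hsummand, hBs1,
      QAux.factor_u1v2 (fun u : ℕ => Qf (2*u)) (fun u : ℕ => Qf (2*u+1))
        (fun u : ℕ => Qf (2*u)) (fun u : ℕ => Qf (2*u+1)) (l1+l2+2) l2 hl2L]
    rfl
  have hS1s : (∑ p ∈ Bset l1 l2 1 (Equiv.swap 0 1),
        q (2 * p.1.1) * q (2 * p.1.2 + 1) * q (2 * p.2.1) * q (2 * p.2.2 + 1))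
      = ∑ k ∈ Finset.range (l2+1), QAux.OEs Qf k * QAux.EOs Qf (l1+l2+2-k) := by
    rw [hsummand, hB1s,
      QAux.factor_u2v1 (fun u : ℕ => Qf (2*u)) (fun u : ℕ => Qf (2*u+1))
        (fun u : ℕ => Qf (2*u)) (fun u : ℕ => Qf (2*u+1)) (l1+l2+2) l2 hl2L]
    rfl
  have hSss : (∑ p ∈ Bset l1 l2 (Equiv.swap 0 1) (Equiv.swap 0 1),
        q (2 * p.1.1) * q (2 * p.1.2 + 1) * q (2 * p.2.1) * q (2 * p.2.2 + 1))
      = ∑ k ∈ Finset.range (l2+1), QAux.EEs Qf k * QAux.OOs Qf (l1+l2+2-k) := by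
    rw [hsummand, hBss,
      QAux.factor_u1v1 (fun u : ℕ => Qf (2*u)) (fun u : ℕ => Qf (2*u+1))
        (fun u : ℕ => Qf (2*u)) (fun u : ℕ => Qf (2*u+1)) (l1+l2+2) l2 hl2L]
    rfl
  -- evaluate the permutation sum
  have hperm : (∑ s : Equiv.Perm (Fin 2) × Equiv.Perm (Fin 2),
          (((Equiv.Perm.sign s.1 : ℤ) * (Equiv.Perm.sign s.2 : ℤ) : ℤ) :
              MvPolynomial (Fin n) ℚ) *
            ∑ p ∈ Bset l1 l2 s.1 s.2,
              q (2 * p.1.1) * q (2 * p.1.2 + 1) * q (2 * p.2.1) * q (2 * p.2.2 + 1))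
      = (∑ k ∈ Finset.range (l2+1), QAux.OOs Qf k * QAux.EEs Qf (l1+l2+2-k))
        - (∑ k ∈ Finset.range (l2+1), QAux.EOs Qf k * QAux.OEs Qf (l1+l2+2-k))
        - (∑ k ∈ Finset.range (l2+1), QAux.OEs Qf k * QAux.EOs Qf (l1+l2+2-k))
        + (∑ k ∈ Finset.range (l2+1), QAux.EEs Qf k * QAux.OOs Qf (l1+l2+2-k)) := by
    rw [Fintype.sum_prod_type]
    rw [show (Finset.univ : Finset (Equiv.Perm (Fin 2))) = {1, Equiv.swap 0 1} from by decide]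
    rw [Finset.sum_pair (by decide), Finset.sum_pair (by decide), Finset.sum_pair (by decide)]
    rw [show Equiv.Perm.sign (1 : Equiv.Perm (Fin 2)) = 1 from by decide,
      show Equiv.Perm.sign (Equiv.swap (0 : Fin 2) 1) = -1 from by decide]
    rw [hS11, hSs1, hS1s, hSss]
    push_cast
    ring
  -- ### Part 3 : normalize both sides and finish
  -- abbreviations for the atoms
  have hEE0 : QAux.EEs Qf 0 = qq 0 := by
    rw [hconv 0, QAux.EEs]
    simp [hQf]
  -- qq at even and odd spots
  have hqe : ∀ m : ℕ, 1 ≤ m → qq (2*m) = 2 * QAux.OOs Qf (m-1) :=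
    fun m hm => QAux.qq_even Qf qq hconv hrel m hm
  have hqo : ∀ m : ℕ, qq (2*m+1) = 2 * QAux.EOs Qf m :=
    fun m => QAux.qq_odd Qf qq hconv m
  have hEEOO : ∀ m : ℕ, 1 ≤ m → QAux.EEs Qf m = QAux.OOs Qf (m-1) :=
    fun m hm => QAux.EE_eq_OO Qf hrel m hm
  -- the two heads
  have hhead1 : qq (2*l1+4) = 2 * QAux.OOs Qf (l1+1) := by
    rw [show 2*l1+4 = 2*(l1+2) from by ring, hqe (l1+2) (by omega),
      show l1+2-1 = l1+1 from by omega]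
  have hhead2 : qq (2*l2+2) = 2 * QAux.OOs Qf l2 := by
    rw [show 2*l2+2 = 2*(l2+1) from by ring, hqe (l2+1) (by omega),
      show l2+1-1 = l2 from by omega]
  -- the alternating middle sum
  have hIcc1 : (∑ i ∈ Finset.Icc 1 (2*l2+2),
        (-1 : MvPolynomial (Fin n) ℚ)^i * qq (2*l1+4+i) * qq (2*l2+2-i))
      = ∑ j ∈ Finset.range (2*(l2+1)),
        (-1 : MvPolynomial (Fin n) ℚ)^(j+1) * qq (2*l1+4+(j+1)) * qq (2*l2+2-(j+1)) := by
    rw [show 2*l2+2 = 2*(l2+1) from by ring]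
    refine Finset.sum_nbij' (fun i => i - 1) (fun j => j + 1) ?_ ?_ ?_ ?_ ?_ <;>
      intro a ha <;> simp only [Finset.mem_Icc, Finset.mem_range] at ha ⊢ <;>
      first
        | omega
        | (rw [show a - 1 + 1 = a from by omega])
  have hIccEven : (∑ a ∈ Finset.range (l2+1),
        (-1 : MvPolynomial (Fin n) ℚ)^(2*a+1) * qq (2*l1+4+(2*a+1)) * qq (2*l2+2-(2*a+1)))
      = (-4) * ∑ a ∈ Finset.range (l2+1), QAux.EOs Qf (l1+2+a) * QAux.EOs Qf (l2-a) := by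
    rw [Finset.mul_sum]
    refine Finset.sum_congr rfl fun a ha => ?_
    have ha' : a ≤ l2 := by have := Finset.mem_range.mp ha; omega
    have e1 : (-1 : MvPolynomial (Fin n) ℚ)^(2*a+1) = -1 := by
      rw [pow_succ, pow_mul]; simp
    rw [e1, show 2*l1+4+(2*a+1) = 2*(l1+2+a)+1 from by ring, hqo (l1+2+a),
      show 2*l2+2-(2*a+1) = 2*(l2-a)+1 from by omega, hqo (l2-a)]
    ring
  have hIccOdd : (∑ b ∈ Finset.range (l2+1),
        (-1 : MvPolynomial (Fin n) ℚ)^(2*b+1+1) * qq (2*l1+4+(2*b+1+1)) * qq (2*l2+2-(2*b+1+1)))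
      = 4 * (∑ b ∈ Finset.range l2, QAux.OOs Qf (l1+2+b) * QAux.OOs Qf (l2-1-b))
        + 2 * (QAux.OOs Qf (l1+l2+2) * qq 0) := by
    rw [Finset.sum_range_succ, Finset.mul_sum]
    refine congrArg₂ (· + ·) ?_ ?_
    · refine Finset.sum_congr rfl fun b hb => ?_
      have hb' : b < l2 := Finset.mem_range.mp hb
      have e1 : (-1 : MvPolynomial (Fin n) ℚ)^(2*b+1+1) = 1 := by
        rw [show 2*b+1+1 = 2*(b+1) from by ring, pow_mul]; simp
      rw [e1, show 2*l1+4+(2*b+1+1) = 2*(l1+3+b) from by ring, hqe (l1+3+b) (by omega),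
        show l1+3+b-1 = l1+2+b from by omega,
        show 2*l2+2-(2*b+1+1) = 2*(l2-b) from by omega, hqe (l2-b) (by omega),
        show l2-b-1 = l2-1-b from by omega]
      ring
    · have e1 : (-1 : MvPolynomial (Fin n) ℚ)^(2*l2+1+1) = 1 := by
        rw [show 2*l2+1+1 = 2*(l2+1) from by ring, pow_mul]; simp
      rw [e1, show 2*l1+4+(2*l2+1+1) = 2*(l1+l2+3) from by ring, hqe (l1+l2+3) (by omega),
        show l1+l2+3-1 = l1+l2+2 from by omega,
        show 2*l2+2-(2*l2+1+1) = 0 from by omega]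
      ring
  have hIcc : (∑ i ∈ Finset.Icc 1 (2*l2+2),
        (-1 : MvPolynomial (Fin n) ℚ)^i * qq (2*l1+4+i) * qq (2*l2+2-i))
      = (-4) * (∑ a ∈ Finset.range (l2+1), QAux.EOs Qf (l1+2+a) * QAux.EOs Qf (l2-a))
        + (4 * (∑ b ∈ Finset.range l2, QAux.OOs Qf (l1+2+b) * QAux.OOs Qf (l2-1-b))
          + 2 * (QAux.OOs Qf (l1+l2+2) * qq 0)) := by
    rw [hIcc1, QAux.sum_range_even_split
      (fun j => (-1 : MvPolynomial (Fin n) ℚ)^(j+1) * qq (2*l1+4+(j+1)) * qq (2*l2+2-(j+1)))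
      (l2+1), hIccEven, hIccOdd]
  -- normalize the four pieces of the RHS
  have hP1 : (∑ k ∈ Finset.range (l2+1), QAux.OOs Qf k * QAux.EEs Qf (l1+l2+2-k))
      = (∑ b ∈ Finset.range l2, QAux.OOs Qf (l1+2+b) * QAux.OOs Qf (l2-1-b))
        + QAux.OOs Qf l2 * QAux.OOs Qf (l1+1) := by
    have step1 : (∑ k ∈ Finset.range (l2+1), QAux.OOs Qf k * QAux.EEs Qf (l1+l2+2-k))
        = ∑ k ∈ Finset.range (l2+1), QAux.OOs Qf (l2-k) * QAux.OOs Qf (l1+1+k) := by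
      rw [← Finset.sum_range_reflect
        (fun k => QAux.OOs Qf k * QAux.EEs Qf (l1+l2+2-k)) (l2+1)]
      refine Finset.sum_congr rfl fun k hk => ?_
      have hk' : k ≤ l2 := by have := Finset.mem_range.mp hk; omega
      rw [show l2+1-1-k = l2-k from by omega,
        show l1+l2+2-(l2-k) = l1+2+k from by omega,
        hEEOO (l1+2+k) (by omega), show l1+2+k-1 = l1+1+k from by omega]
    rw [step1, Finset.sum_range_succ'
      (fun k => QAux.OOs Qf (l2-k) * QAux.OOs Qf (l1+1+k)) l2]
    refine congrArg₂ (· + ·) ?_ (by simp)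
    · refine Finset.sum_congr rfl fun b hb => ?_
      have hb' : b < l2 := Finset.mem_range.mp hb
      rw [show l2-(b+1) = l2-1-b from by omega, show l1+1+(b+1) = l1+2+b from by omega]
      ring
  have hP4 : (∑ k ∈ Finset.range (l2+1), QAux.EEs Qf k * QAux.OOs Qf (l1+l2+2-k))
      = (∑ b ∈ Finset.range l2, QAux.OOs Qf (l1+2+b) * QAux.OOs Qf (l2-1-b))
        + qq 0 * QAux.OOs Qf (l1+l2+2) := by
    rw [Finset.sum_range_succ'
      (fun k => QAux.EEs Qf k * QAux.OOs Qf (l1+l2+2-k)) l2]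
    refine congrArg₂ (· + ·) ?_ ?_
    · have step1 : (∑ k ∈ Finset.range l2, QAux.EEs Qf (k+1) * QAux.OOs Qf (l1+l2+2-(k+1)))
          = ∑ k ∈ Finset.range l2, QAux.OOs Qf k * QAux.OOs Qf (l1+l2+1-k) := by
        refine Finset.sum_congr rfl fun k hk => ?_
        have hk' : k < l2 := Finset.mem_range.mp hk
        rw [hEEOO (k+1) (by omega), show k+1-1 = k from by omega,
          show l1+l2+2-(k+1) = l1+l2+1-k from by omega]
      rw [step1, ← Finset.sum_range_reflect
        (fun k => QAux.OOs Qf k * QAux.OOs Qf (l1+l2+1-k)) l2]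
      refine Finset.sum_congr rfl fun k hk => ?_
      have hk' : k < l2 := Finset.mem_range.mp hk
      rw [show l1+l2+1-(l2-1-k) = l1+2+k from by omega]
      ring
    · rw [hEE0, show l1+l2+2-0 = l1+l2+2 from by omega]
  have hP2 : (∑ k ∈ Finset.range (l2+1), QAux.EOs Qf k * QAux.OEs Qf (l1+l2+2-k))
      = ∑ a ∈ Finset.range (l2+1), QAux.EOs Qf (l1+2+a) * QAux.EOs Qf (l2-a) := by
    have step1 : (∑ k ∈ Finset.range (l2+1), QAux.EOs Qf k * QAux.OEs Qf (l1+l2+2-k))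
        = ∑ k ∈ Finset.range (l2+1), QAux.EOs Qf k * QAux.EOs Qf (l1+l2+2-k) :=
      Finset.sum_congr rfl fun k _ => by rw [QAux.OEs_eq_EOs]
    rw [step1, ← Finset.sum_range_reflect
      (fun k => QAux.EOs Qf k * QAux.EOs Qf (l1+l2+2-k)) (l2+1)]
    refine Finset.sum_congr rfl fun k hk => ?_
    have hk' : k ≤ l2 := by have := Finset.mem_range.mp hk; omega
    rw [show l2+1-1-k = l2-k from by omega,
      show l1+l2+2-(l2-k) = l1+2+k from by omega]
    ring
  have hP3 : (∑ k ∈ Finset.range (l2+1), QAux.OEs Qf k * QAux.EOs Qf (l1+l2+2-k))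
      = ∑ a ∈ Finset.range (l2+1), QAux.EOs Qf (l1+2+a) * QAux.EOs Qf (l2-a) := by
    have step1 : (∑ k ∈ Finset.range (l2+1), QAux.OEs Qf k * QAux.EOs Qf (l1+l2+2-k))
        = ∑ k ∈ Finset.range (l2+1), QAux.EOs Qf k * QAux.EOs Qf (l1+l2+2-k) :=
      Finset.sum_congr rfl fun k _ => by rw [QAux.OEs_eq_EOs]
    rw [step1, ← Finset.sum_range_reflect
      (fun k => QAux.EOs Qf k * QAux.EOs Qf (l1+l2+2-k)) (l2+1)]
    refine Finset.sum_congr rfl fun k hk => ?_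
    have hk' : k ≤ l2 := by have := Finset.mem_range.mp hk; omega
    rw [show l2+1-1-k = l2-k from by omega,
      show l1+l2+2-(l2-k) = l1+2+k from by omega]
    ring
  rw [hhead1, hhead2, hIcc, hperm, hP1, hP2, hP3, hP4]
  ring
end

section
/- Let λ = (λ₁, λ₂) be a partition with λ₁ ≥ λ₂ ≥ 0 and define Q_{(r,s)}(x,x) and B(λ; σ₁, σ₂) as before. Then Q_{(2λ₁+3, 2λ₂+1)}(x,x) = 4 Σ_{σ₁,σ₂ ∈ S₂} sgn(σ₁) sgn(σ₂) Σ_{(u,v) ∈ B(λ;σ₁,σ₂)} q_{2u₁}(x) q_{2u₂+1}(x) q_{2v₁−1}(x) q_{2v₂}(x). -/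
open Finset

set_option linter.unusedSectionVars false
set_option linter.unusedVariables false
set_option maxHeartbeats 1000000

section PS
open PowerSeries
variable {A : Type*} [CommRing A] [IsDomain A]

lemma myrescale_C (a r : A) : rescale a (PowerSeries.C r) = PowerSeries.C r := by
  ext n
  simp only [coeff_rescale, coeff_C]
  split_ifs with h
  · subst h; simp
  · simp

lemma myrescale_factor (a r : A) :
    rescale a (1 - PowerSeries.C r * X) = 1 - PowerSeries.C (a * r) * X := by
  rw [map_sub, map_one, map_mul, myrescale_C, rescale_X, ← mul_assoc, ← map_mul, mul_comm r a]

lemma QQ_neg_one {ι : Type*} (s : Finset ι) (x : ι → A) (Q : PowerSeries A)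
    (hq : Q * ∏ i ∈ s, (1 - PowerSeries.C (x i) * X)
      = ∏ i ∈ s, (1 + PowerSeries.C (x i) * X)) :
    Q * rescale (-1) Q = 1 := by
  set D := ∏ i ∈ s, (1 - PowerSeries.C (x i) * X) with hD
  set E := ∏ i ∈ s, (1 + PowerSeries.C (x i) * X) with hE
  have hre : rescale (-1:A) D = E := by
    rw [hD, map_prod]
    refine Finset.prod_congr rfl fun i _ => ?_
    rw [myrescale_factor]
    ring_nf
    rw [map_neg]
    ring
  have hre2 : rescale (-1:A) E = D := by
    have : E = ∏ i ∈ s, (1 - PowerSeries.C (-(x i)) * X) := by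
      refine Finset.prod_congr rfl fun i _ => ?_
      rw [map_neg]; ring
    rw [this, map_prod]
    refine Finset.prod_congr rfl fun i _ => ?_
    rw [myrescale_factor]
    norm_num
  have h2 : rescale (-1) Q * E = D := by
    have := congrArg (rescale (-1)) hq
    rwa [map_mul, hre, hre2] at this
  have hDE0 : D * E ≠ 0 := by
    intro h0
    have hc : PowerSeries.constantCoeff (D * E) = 1 := by
      rw [map_mul, hD, hE, map_prod, map_prod]
      simp
    rw [h0, map_zero] at hc
    exact zero_ne_one hc
  have : (Q * rescale (-1) Q) * (D * E) = 1 * (D * E) := by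
    calc (Q * rescale (-1) Q) * (D * E) = (Q * D) * (rescale (-1) Q * E) := by ring
    _ = E * D := by rw [hq, h2]
    _ = 1 * (D * E) := by ring
  exact mul_right_cancel₀ hDE0 this

lemma QQ_sq {ι : Type*} (s : Finset ι) (x : ι → A) (Q Q2 : PowerSeries A)
    (hq : Q * ∏ i ∈ s, (1 - PowerSeries.C (x i) * X)
      = ∏ i ∈ s, (1 + PowerSeries.C (x i) * X))
    (hqq : Q2 * (∏ i ∈ s, (1 - PowerSeries.C (x i) * X)) ^ 2
      = (∏ i ∈ s, (1 + PowerSeries.C (x i) * X)) ^ 2) :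
    Q2 = Q * Q := by
  set D := ∏ i ∈ s, (1 - PowerSeries.C (x i) * X) with hD
  have hD0 : D ^ 2 ≠ 0 := by
    intro h0
    have hc : PowerSeries.constantCoeff (D ^ 2) = 1 := by
      rw [map_pow, hD, map_prod]
      simp
    rw [h0, map_zero] at hc
    exact zero_ne_one hc
  have : Q2 * D ^ 2 = (Q * Q) * D ^ 2 := by
    rw [hqq]
    calc _ = (Q * D) * (Q * D) := by rw [hq]; ring
    _ = _ := by ring
  exact mul_right_cancel₀ hD0 this

lemma coeff_consequences (q : ℤ → A) (Q : PowerSeries A)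
    (hQ : Q = PowerSeries.mk fun r : ℕ => q r)
    (h1 : Q * rescale (-1) Q = 1) (m : ℕ) (hm : 1 ≤ m) :
    ∑ i ∈ range (m+1), (-1:A)^(m-i) * (q i * q ↑(m - i)) = 0 := by
  have := congrArg (PowerSeries.coeff m) h1
  rw [PowerSeries.coeff_mul, PowerSeries.coeff_one, if_neg (by omega)] at this
  rw [Finset.Nat.sum_antidiagonal_eq_sum_range_succ_mk] at this
  rw [← this]
  refine Finset.sum_congr rfl fun i hi => ?_
  rw [hQ, coeff_rescale, coeff_mk, coeff_mk]
  ring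

lemma conv_consequence (q : ℤ → A) (qq : ℕ → A) (Q Q2 : PowerSeries A)
    (hQ : Q = PowerSeries.mk fun r : ℕ => q r)
    (hQ2 : Q2 = PowerSeries.mk fun r : ℕ => qq r)
    (h2 : Q2 = Q * Q) (m : ℕ) :
    qq m = ∑ i ∈ range (m+1), q i * q ↑(m - i) := by
  have := congrArg (PowerSeries.coeff m) h2
  rw [PowerSeries.coeff_mul, Finset.Nat.sum_antidiagonal_eq_sum_range_succ_mk] at this
  rw [hQ, hQ2] at this
  simpa [coeff_mk] using this

end PS

section defs
variable {A : Type*} [CommRing A]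

def alq (q : ℤ → A) (k : ℕ) : A := ∑ j ∈ range (k+1), q (2*(j:ℤ)) * q (2*((k-j : ℕ):ℤ)+1)
def eeq (q : ℤ → A) (k : ℕ) : A := ∑ j ∈ range (k+1), q (2*(j:ℤ)) * q (2*((k-j : ℕ):ℤ))
def ooq (q : ℤ → A) (k : ℕ) : A := ∑ j ∈ range k, q (2*(j:ℤ)+1) * q (2*((k-1-j : ℕ):ℤ)+1)

variable (q : ℤ → A) (qq : ℕ → A) (hneg : ∀ r : ℤ, r < 0 → q r = 0)

lemma sum_range_odd_split' (f : ℕ → A) (k : ℕ) :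
    ∑ i ∈ range (2*k+1), f i
      = ∑ j ∈ range (k+1), f (2*j) + ∑ j ∈ range k, f (2*j+1) := by
  induction k with
  | zero => simp
  | succ k ih =>
      have h1 : 2*(k+1)+1 = (2*k+1) + 1 + 1 := by ring
      rw [h1, Finset.sum_range_succ, Finset.sum_range_succ, ih,
        Finset.sum_range_succ (fun j => f (2*j)) (k+1),
        Finset.sum_range_succ (fun j => f (2*j+1)) k]
      have e2 : 2*k+1+1 = 2*(k+1) := by ring
      rw [e2]
      ring

lemma sum_range_even_split' (f : ℕ → A) (k : ℕ) :
    ∑ i ∈ range (2*k+2), f i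
      = ∑ j ∈ range (k+1), f (2*j) + ∑ j ∈ range (k+1), f (2*j+1) := by
  have h1 : 2*k+2 = (2*k+1) + 1 := by ring
  rw [h1, Finset.sum_range_succ, sum_range_odd_split',
    Finset.sum_range_succ (fun j => f (2*j+1)) k]
  ring

lemma ee_eq_oo (hR : ∀ m : ℕ, 1 ≤ m → ∑ i ∈ range (m+1), (-1:A)^(m-i) * (q i * q ↑(m - i)) = 0)
    (k : ℕ) (hk : 1 ≤ k) : eeq q k = ooq q k := by
  have h := hR (2*k) (by omega)
  rw [sum_range_odd_split' (fun i => (-1:A)^(2*k-i) * (q i * q ↑(2*k - i))) k] at h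
  have h1 : ∑ j ∈ range (k+1), (-1:A)^(2*k-2*j) * (q ↑(2*j) * q ↑(2*k - 2*j)) = eeq q k := by
    refine Finset.sum_congr rfl fun j hj => ?_
    rw [mem_range] at hj
    rw [show 2*k-2*j = 2*(k-j) by omega, pow_mul]
    norm_num
  have h2 : ∑ j ∈ range k, (-1:A)^(2*k-(2*j+1)) * (q ↑(2*j+1) * q ↑(2*k - (2*j+1)))
      = - ooq q k := by
    rw [ooq, ← Finset.sum_neg_distrib]
    refine Finset.sum_congr rfl fun j hj => ?_
    rw [mem_range] at hj
    rw [show 2*k-(2*j+1) = 2*(k-1-j)+1 by omega, pow_succ, pow_mul]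
    norm_num
  rw [h1, h2] at h
  linear_combination h

lemma qq_odd_eq (hconv : ∀ m : ℕ, qq m = ∑ i ∈ range (m+1), q i * q ↑(m - i)) (k : ℕ) :
    qq (2*k+1) = 2 * alq q k := by
  have h := hconv (2*k+1)
  rw [sum_range_even_split' (fun i => q i * q ↑(2*k+1 - i)) k] at h
  have h1 : ∑ j ∈ range (k+1), q ↑(2*j) * q ↑(2*k+1 - 2*j) = alq q k := by
    refine Finset.sum_congr rfl fun j hj => ?_
    rw [mem_range] at hj
    rw [show 2*k+1-2*j = 2*(k-j)+1 by omega]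
    norm_cast
  have h2 : ∑ j ∈ range (k+1), q ↑(2*j+1) * q ↑(2*k+1 - (2*j+1)) = alq q k := by
    rw [alq, ← Finset.sum_range_reflect
      (fun j => q ↑(2*j+1) * q ↑(2*k+1 - (2*j+1))) (k+1)]
    refine Finset.sum_congr rfl fun j hj => ?_
    rw [mem_range] at hj
    rw [show k+1-1-j = k-j by omega, show 2*k+1-(2*(k-j)+1) = 2*j by omega, mul_comm]
    norm_cast
  rw [h1, h2] at h
  rw [h]; ring

lemma qq_even_eq (hconv : ∀ m : ℕ, qq m = ∑ i ∈ range (m+1), q i * q ↑(m - i)) (k : ℕ) :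
    qq (2*k) = eeq q k + ooq q k := by
  have h := hconv (2*k)
  rw [sum_range_odd_split' (fun i => q i * q ↑(2*k - i)) k] at h
  have h1 : ∑ j ∈ range (k+1), q ↑(2*j) * q ↑(2*k - 2*j) = eeq q k := by
    refine Finset.sum_congr rfl fun j hj => ?_
    rw [mem_range] at hj
    rw [show 2*k-2*j = 2*(k-j) by omega]
    norm_cast
  have h2 : ∑ j ∈ range k, q ↑(2*j+1) * q ↑(2*k - (2*j+1)) = ooq q k := by
    refine Finset.sum_congr rfl fun j hj => ?_
    rw [mem_range] at hj
    rw [show 2*k-(2*j+1) = 2*(k-1-j)+1 by omega]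
    norm_cast
  rw [h1, h2] at h
  exact h

lemma lemA (j : ℕ) : ∑ x ∈ range (j+1), q (2*(x:ℤ)+1) * q (2*((j-x : ℕ):ℤ)) = alq q j := by
  rw [alq, ← Finset.sum_range_reflect (fun x => q (2*(x:ℤ)+1) * q (2*((j-x : ℕ):ℤ))) (j+1)]
  refine Finset.sum_congr rfl fun x hx => ?_
  rw [mem_range] at hx
  rw [show j+1-1-x = j-x by omega, show j-(j-x) = x by omega, mul_comm]

include hneg in
lemma lemB (e : ℕ) (he : 1 ≤ e) :
    ∑ y ∈ range (e+1), q (2*(y:ℤ)) * q (2*((e-y : ℕ) : ℤ)-1) = alq q (e-1) := by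
  rw [Finset.sum_range_succ, show e - e = 0 by omega]
  norm_num
  rw [hneg (-1) (by norm_num), mul_zero, add_zero, alq]
  have he2 : e - 1 + 1 = e := by omega
  rw [he2]
  refine Finset.sum_congr rfl fun y hy => ?_
  rw [mem_range] at hy
  have : (2*(↑(e-y) : ℤ)-1) = (2*((e-1-y : ℕ) : ℤ)+1) := by
    push_cast [show ((e - y : ℕ) : ℤ) = (e : ℤ) - y from by omega,
      show ((e - 1 - y : ℕ) : ℤ) = (e : ℤ) - 1 - y from by omega]
    ring
  rw [this]

include hneg in
lemma lemC (j : ℕ) : ∑ x ∈ range (j+1), q (2*(x:ℤ)+1) * q (2*((j-x : ℕ) : ℤ)-1) = ooq q j := by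
  rw [Finset.sum_range_succ, show j - j = 0 by omega]
  norm_num
  rw [hneg (-1) (by norm_num), mul_zero, add_zero, ooq]
  refine Finset.sum_congr rfl fun x hx => ?_
  rw [mem_range] at hx
  have : (2*(↑(j-x) : ℤ)-1) = (2*((j-1-x : ℕ) : ℤ)+1) := by
    push_cast [show ((j - x : ℕ) : ℤ) = (j : ℤ) - x from by omega,
      show ((j - 1 - x : ℕ) : ℤ) = (j : ℤ) - 1 - x from by omega]
    ring
  rw [this]

lemma lemE (e : ℕ) : ∑ y ∈ range (e+1), q (2*(y:ℤ)) * q (2*((e-y : ℕ) : ℤ)) = eeq q e := rfl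

include hneg in
lemma lemBL (N L : ℕ) (G : ℕ → A) :
    ∑ j ∈ range (L+1), (∑ x ∈ range (j+1), q (2*(x:ℤ)) * q (2*((j-x : ℕ) : ℤ)-1)) * G j
      = ∑ j ∈ range L, alq q j * G (j+1) := by
  rw [Finset.sum_range_succ']
  have h0 : (∑ x ∈ range (0+1), q (2*(x:ℤ)) * q (2*((0-x : ℕ) : ℤ)-1)) * G 0 = 0 := by
    simp [hneg (-1) (by norm_num)]
  rw [h0, add_zero]
  refine Finset.sum_congr rfl fun j hj => ?_
  rw [mem_range] at hj
  congr 1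
  rw [Finset.sum_range_succ, show j + 1 - (j+1) = 0 by omega]
  norm_num
  rw [hneg (-1) (by norm_num), mul_zero, add_zero, alq]
  refine Finset.sum_congr rfl fun x hx => ?_
  rw [mem_range] at hx
  have : (2*(↑(j+1-x) : ℤ)-1) = (2*((j-x : ℕ) : ℤ)+1) := by
    push_cast [show ((j + 1 - x : ℕ) : ℤ) = (j : ℤ) + 1 - x from by omega,
      show ((j - x : ℕ) : ℤ) = (j : ℤ) - x from by omega]
    ring
  rw [this]

lemma sum_Icc_odd_even (f : ℕ → A) (m : ℕ) :
    ∑ i ∈ Icc 1 (2*m+1), f i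
      = ∑ j ∈ range (m+1), f (2*j+1) + ∑ j ∈ range m, f (2*j+2) := by
  induction m with
  | zero => simp
  | succ m ih =>
      have h1 : 2*(m+1)+1 = (2*m+1) + 1 + 1 := by ring
      have h2 : (1:ℕ) ≤ 2*m+1+1 := by omega
      rw [h1, Finset.sum_Icc_succ_top (by omega), Finset.sum_Icc_succ_top h2, ih,
        Finset.sum_range_succ (fun j => f (2*j+1)) (m+1),
        Finset.sum_range_succ (fun j => f (2*j+2)) m]
      have e1 : 2*(m+1)+1 = 2*m+1+1+1 := by ring
      have e2 : 2*m+2 = 2*m+1+1 := by ring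
      rw [e1, e2]
      ring

end defs

section quads
variable {A : Type*} [AddCommMonoid A]

lemma quad13 (N L : ℕ) (hL : L ≤ N) (F : ℕ → ℕ → ℕ → ℕ → A) :
    ∑ p ∈ ((range (N+1) ×ˢ range (N+1)) ×ˢ (range (N+1) ×ˢ range (N+1))).filter
        (fun p => p.1.1+p.1.2+p.2.1+p.2.2 = N ∧ p.1.1 + p.2.1 ≤ L),
      F p.1.1 p.1.2 p.2.1 p.2.2
    = ∑ j ∈ range (L+1), ∑ x ∈ range (j+1), ∑ y ∈ range (N-j+1), F x y (j-x) (N-j-y) := by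
  rw [← Finset.sum_fiberwise_of_maps_to (g := fun p => p.1.1 + p.2.1) (t := range (L+1))
    (fun p hp => by simp only [mem_filter] at hp; simp only [mem_range]; omega)]
  refine Finset.sum_congr rfl fun j hj => ?_
  rw [mem_range] at hj
  rw [← Finset.sum_product']
  refine Finset.sum_nbij' (fun p => (p.1.1, p.1.2))
    (fun z => ((z.1, z.2), (j - z.1, N - j - z.2))) ?_ ?_ ?_ ?_ ?_
  · intro p hp
    simp only [mem_filter, mem_product, mem_range] at hp ⊢
    omega
  · intro z hz
    simp only [mem_filter, mem_product, mem_range] at hz ⊢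
    omega
  · intro p hp
    obtain ⟨⟨a,b⟩,c,d⟩ := p
    simp only [mem_filter, mem_product, mem_range] at hp
    simp only [Prod.mk.injEq, true_and, and_true]
    omega
  · intro z hz
    rfl
  · intro p hp
    simp only [mem_filter, mem_product, mem_range] at hp
    rw [show j - p.1.1 = p.2.1 by omega, show N - j - p.1.2 = p.2.2 by omega]

lemma quad24 (N L : ℕ) (hL : L ≤ N) (F : ℕ → ℕ → ℕ → ℕ → A) :
    ∑ p ∈ ((range (N+1) ×ˢ range (N+1)) ×ˢ (range (N+1) ×ˢ range (N+1))).filter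
        (fun p => p.1.1+p.1.2+p.2.1+p.2.2 = N ∧ p.1.2 + p.2.2 ≤ L),
      F p.1.1 p.1.2 p.2.1 p.2.2
    = ∑ j ∈ range (L+1), ∑ x ∈ range (j+1), ∑ y ∈ range (N-j+1), F y x (N-j-y) (j-x) := by
  rw [← Finset.sum_fiberwise_of_maps_to (g := fun p => p.1.2 + p.2.2) (t := range (L+1))
    (fun p hp => by simp only [mem_filter] at hp; simp only [mem_range]; omega)]
  refine Finset.sum_congr rfl fun j hj => ?_
  rw [mem_range] at hj
  rw [← Finset.sum_product']
  refine Finset.sum_nbij' (fun p => (p.1.2, p.1.1))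
    (fun z => ((z.2, z.1), (N - j - z.2, j - z.1))) ?_ ?_ ?_ ?_ ?_
  · intro p hp
    simp only [mem_filter, mem_product, mem_range] at hp ⊢
    omega
  · intro z hz
    simp only [mem_filter, mem_product, mem_range] at hz ⊢
    omega
  · intro p hp
    obtain ⟨⟨a,b⟩,c,d⟩ := p
    simp only [mem_filter, mem_product, mem_range] at hp
    simp only [Prod.mk.injEq, true_and, and_true]
    omega
  · intro z hz
    rfl
  · intro p hp
    simp only [mem_filter, mem_product, mem_range] at hp
    rw [show j - p.1.2 = p.2.2 by omega, show N - j - p.1.1 = p.2.1 by omega]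

lemma quad14 (N L : ℕ) (hL : L ≤ N) (F : ℕ → ℕ → ℕ → ℕ → A) :
    ∑ p ∈ ((range (N+1) ×ˢ range (N+1)) ×ˢ (range (N+1) ×ˢ range (N+1))).filter
        (fun p => p.1.1+p.1.2+p.2.1+p.2.2 = N ∧ p.1.1 + p.2.2 ≤ L),
      F p.1.1 p.1.2 p.2.1 p.2.2
    = ∑ j ∈ range (L+1), ∑ x ∈ range (j+1), ∑ y ∈ range (N-j+1), F x y (N-j-y) (j-x) := by
  rw [← Finset.sum_fiberwise_of_maps_to (g := fun p => p.1.1 + p.2.2) (t := range (L+1))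
    (fun p hp => by simp only [mem_filter] at hp; simp only [mem_range]; omega)]
  refine Finset.sum_congr rfl fun j hj => ?_
  rw [mem_range] at hj
  rw [← Finset.sum_product']
  refine Finset.sum_nbij' (fun p => (p.1.1, p.1.2))
    (fun z => ((z.1, z.2), (N - j - z.2, j - z.1))) ?_ ?_ ?_ ?_ ?_
  · intro p hp
    simp only [mem_filter, mem_product, mem_range] at hp ⊢
    omega
  · intro z hz
    simp only [mem_filter, mem_product, mem_range] at hz ⊢
    omega
  · intro p hp
    obtain ⟨⟨a,b⟩,c,d⟩ := p
    simp only [mem_filter, mem_product, mem_range] at hp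
    simp only [Prod.mk.injEq, true_and, and_true]
    omega
  · intro z hz
    rfl
  · intro p hp
    simp only [mem_filter, mem_product, mem_range] at hp
    rw [show j - p.1.1 = p.2.2 by omega, show N - j - p.1.2 = p.2.1 by omega]

lemma quad23 (N L : ℕ) (hL : L ≤ N) (F : ℕ → ℕ → ℕ → ℕ → A) :
    ∑ p ∈ ((range (N+1) ×ˢ range (N+1)) ×ˢ (range (N+1) ×ˢ range (N+1))).filter
        (fun p => p.1.1+p.1.2+p.2.1+p.2.2 = N ∧ p.1.2 + p.2.1 ≤ L),
      F p.1.1 p.1.2 p.2.1 p.2.2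
    = ∑ j ∈ range (L+1), ∑ x ∈ range (j+1), ∑ y ∈ range (N-j+1), F y x (j-x) (N-j-y) := by
  rw [← Finset.sum_fiberwise_of_maps_to (g := fun p => p.1.2 + p.2.1) (t := range (L+1))
    (fun p hp => by simp only [mem_filter] at hp; simp only [mem_range]; omega)]
  refine Finset.sum_congr rfl fun j hj => ?_
  rw [mem_range] at hj
  rw [← Finset.sum_product']
  refine Finset.sum_nbij' (fun p => (p.1.2, p.1.1))
    (fun z => ((z.2, z.1), (j - z.1, N - j - z.2))) ?_ ?_ ?_ ?_ ?_
  · intro p hp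
    simp only [mem_filter, mem_product, mem_range] at hp ⊢
    omega
  · intro z hz
    simp only [mem_filter, mem_product, mem_range] at hz ⊢
    omega
  · intro p hp
    obtain ⟨⟨a,b⟩,c,d⟩ := p
    simp only [mem_filter, mem_product, mem_range] at hp
    simp only [Prod.mk.injEq, true_and, and_true]
    omega
  · intro z hz
    rfl
  · intro p hp
    simp only [mem_filter, mem_product, mem_range] at hp
    rw [show j - p.1.2 = p.2.1 by omega, show N - j - p.1.1 = p.2.2 by omega]

end quads

lemma pget_one (p : ℕ × ℕ) : pget p ((1 : Equiv.Perm (Fin 2)) 1) = p.2 := rfl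

lemma pget_swap (p : ℕ × ℕ) : pget p ((Equiv.swap (0 : Fin 2) 1) 1) = p.1 := rfl

/-- New expression of the two-row Schur `Q`-function `Q_{(2λ₁+3,2λ₂+1)}(x,x)` as a signed
sum of products of four single-variable `q`-coefficients over the sets `B(λ;σ₁,σ₂)`. -/
theorem Q_two_row_odd_expression (n : ℕ) (hn : 1 ≤ n)
    (q : ℤ → MvPolynomial (Fin n) ℚ) (qq : ℕ → MvPolynomial (Fin n) ℚ)
    (hneg : ∀ r : ℤ, r < 0 → q r = 0)
    (hq : (PowerSeries.mk fun r : ℕ => q r) *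
        ∏ i : Fin n, (1 - PowerSeries.C (MvPolynomial.X i : MvPolynomial (Fin n) ℚ) *
          PowerSeries.X)
      = ∏ i : Fin n, (1 + PowerSeries.C (MvPolynomial.X i : MvPolynomial (Fin n) ℚ) *
          PowerSeries.X))
    (hqq : (PowerSeries.mk fun r => qq r) *
        (∏ i : Fin n, (1 - PowerSeries.C (MvPolynomial.X i : MvPolynomial (Fin n) ℚ) *
          PowerSeries.X)) ^ 2
      = (∏ i : Fin n, (1 + PowerSeries.C (MvPolynomial.X i : MvPolynomial (Fin n) ℚ) *
          PowerSeries.X)) ^ 2)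
    (l1 l2 : ℕ) (h : l2 ≤ l1) :
    qq (2 * l1 + 3) * qq (2 * l2 + 1) +
        2 * ∑ i ∈ Finset.Icc 1 (2 * l2 + 1),
          (-1 : MvPolynomial (Fin n) ℚ) ^ i * qq (2 * l1 + 3 + i) * qq (2 * l2 + 1 - i)
      = 4 * ∑ s : Equiv.Perm (Fin 2) × Equiv.Perm (Fin 2),
          (((Equiv.Perm.sign s.1 : ℤ) * (Equiv.Perm.sign s.2 : ℤ) : ℤ) :
              MvPolynomial (Fin n) ℚ) *
            ∑ p ∈ Bset l1 l2 s.1 s.2,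
              q (2 * p.1.1) * q (2 * p.1.2 + 1) * q (2 * (p.2.1 : ℤ) - 1) * q (2 * p.2.2) := by
  -- power series consequences
  have h1 : (PowerSeries.mk fun r : ℕ => q r) *
      PowerSeries.rescale (-1) (PowerSeries.mk fun r : ℕ => q r) = 1 :=
    QQ_neg_one Finset.univ (fun i => MvPolynomial.X i) _ hq
  have h2 : (PowerSeries.mk fun r : ℕ => qq r)
      = (PowerSeries.mk fun r : ℕ => q r) * (PowerSeries.mk fun r : ℕ => q r) :=
    QQ_sq Finset.univ (fun i => MvPolynomial.X i) _ _ hq hqq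
  have hR : ∀ m : ℕ, 1 ≤ m →
      ∑ i ∈ range (m+1), (-1 : MvPolynomial (Fin n) ℚ)^(m-i) * (q i * q ↑(m - i)) = 0 :=
    coeff_consequences q _ rfl h1
  have hconv : ∀ m : ℕ, qq m = ∑ i ∈ range (m+1), q i * q ↑(m - i) :=
    conv_consequence q qq _ _ rfl rfl h2
  set N := l1 + l2 + 2 with hN
  -- LHS computation
  have hL1 : qq (2*l1+3) = 2 * alq q (l1+1) := by
    rw [show 2*l1+3 = 2*(l1+1)+1 by ring, qq_odd_eq q qq hconv]
  have hL2 : qq (2*l2+1) = 2 * alq q l2 := qq_odd_eq q qq hconv l2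
  have hIcc : ∑ i ∈ Finset.Icc 1 (2 * l2 + 1),
        (-1 : MvPolynomial (Fin n) ℚ) ^ i * qq (2 * l1 + 3 + i) * qq (2 * l2 + 1 - i)
      = ∑ j ∈ range (l2+1), (-1 : MvPolynomial (Fin n) ℚ)^(2*j+1) * qq (2*l1+3+(2*j+1)) * qq (2*l2+1-(2*j+1))
        + ∑ j ∈ range l2, (-1 : MvPolynomial (Fin n) ℚ)^(2*j+2) * qq (2*l1+3+(2*j+2)) * qq (2*l2+1-(2*j+2)) :=
    sum_Icc_odd_even (fun i => (-1 : MvPolynomial (Fin n) ℚ) ^ i * qq (2 * l1 + 3 + i) * qq (2 * l2 + 1 - i)) l2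
  have hOdd : ∑ j ∈ range (l2+1), (-1 : MvPolynomial (Fin n) ℚ)^(2*j+1) * qq (2*l1+3+(2*j+1)) * qq (2*l2+1-(2*j+1))
      = -(2 * ∑ j ∈ range (l2+1),
          (ooq q (l1+2+j) * eeq q (l2-j) + eeq q (l1+2+j) * ooq q (l2-j))) := by
    rw [Finset.mul_sum, ← Finset.sum_neg_distrib]
    refine Finset.sum_congr rfl fun j hj => ?_
    rw [mem_range] at hj
    have hp : (-1 : MvPolynomial (Fin n) ℚ)^(2*j+1) = -1 := Odd.neg_one_pow ⟨j, by ring⟩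
    rw [hp, show 2*l1+3+(2*j+1) = 2*(l1+2+j) by ring,
      show 2*l2+1-(2*j+1) = 2*(l2-j) by omega,
      qq_even_eq q qq hconv, qq_even_eq q qq hconv,
      ee_eq_oo q hR (l1+2+j) (by omega)]
    ring
  have hEven : ∑ j ∈ range l2, (-1 : MvPolynomial (Fin n) ℚ)^(2*j+2) * qq (2*l1+3+(2*j+2)) * qq (2*l2+1-(2*j+2))
      = 4 * ∑ j ∈ range l2, alq q (l1+2+j) * alq q (l2-1-j) := by
    rw [Finset.mul_sum]
    refine Finset.sum_congr rfl fun j hj => ?_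
    rw [mem_range] at hj
    have hp : (-1 : MvPolynomial (Fin n) ℚ)^(2*j+2) = 1 := Even.neg_one_pow ⟨j+1, by ring⟩
    rw [hp, show 2*l1+3+(2*j+2) = 2*(l1+2+j)+1 by ring,
      show 2*l2+1-(2*j+2) = 2*(l2-1-j)+1 by omega,
      qq_odd_eq q qq hconv, qq_odd_eq q qq hconv]
    ring
  -- RHS computation
  have huniv : (Finset.univ : Finset (Equiv.Perm (Fin 2)))
      = {1, Equiv.swap 0 1} := by decide
  rw [Fintype.sum_prod_type]
  rw [huniv]
  rw [Finset.sum_insert (by decide), Finset.sum_singleton,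
    Finset.sum_insert (by decide), Finset.sum_singleton,
    Finset.sum_insert (by decide), Finset.sum_singleton]
  -- Bset identifications
  have eB11 : Bset l1 l2 1 1
      = ((range (N+1) ×ˢ range (N+1)) ×ˢ (range (N+1) ×ˢ range (N+1))).filter
        (fun p => p.1.1+p.1.2+p.2.1+p.2.2 = N ∧ p.1.2 + p.2.2 ≤ l2) := by
    ext p
    rw [Bset, Finset.mem_filter]
    simp only [Bset, pget_one, Finset.mem_filter, Finset.mem_product, Finset.mem_range]
    exact Iff.rfl
  have eB1s : Bset l1 l2 1 (Equiv.swap 0 1)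
      = ((range (N+1) ×ˢ range (N+1)) ×ˢ (range (N+1) ×ˢ range (N+1))).filter
        (fun p => p.1.1+p.1.2+p.2.1+p.2.2 = N ∧ p.1.2 + p.2.1 ≤ l2) := by
    ext p
    rw [Bset, Finset.mem_filter]
    simp only [Bset, pget_one, pget_swap, Finset.mem_filter, Finset.mem_product,
      Finset.mem_range]
    exact Iff.rfl
  have eBs1 : Bset l1 l2 (Equiv.swap 0 1) 1
      = ((range (N+1) ×ˢ range (N+1)) ×ˢ (range (N+1) ×ˢ range (N+1))).filter
        (fun p => p.1.1+p.1.2+p.2.1+p.2.2 = N ∧ p.1.1 + p.2.2 ≤ l2) := by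
    ext p
    rw [Bset, Finset.mem_filter]
    simp only [Bset, pget_one, pget_swap, Finset.mem_filter, Finset.mem_product,
      Finset.mem_range]
    exact Iff.rfl
  have eBss : Bset l1 l2 (Equiv.swap 0 1) (Equiv.swap 0 1)
      = ((range (N+1) ×ˢ range (N+1)) ×ˢ (range (N+1) ×ˢ range (N+1))).filter
        (fun p => p.1.1+p.1.2+p.2.1+p.2.2 = N ∧ p.1.1 + p.2.1 ≤ l2) := by
    ext p
    rw [Bset, Finset.mem_filter]
    simp only [Bset, pget_swap, Finset.mem_filter, Finset.mem_product, Finset.mem_range]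
    exact Iff.rfl
  have hl2N : l2 ≤ N := by omega
  -- the four sums
  have hS11 : ∑ p ∈ Bset l1 l2 1 1,
        q (2 * p.1.1) * q (2 * p.1.2 + 1) * q (2 * (p.2.1 : ℤ) - 1) * q (2 * p.2.2)
      = ∑ j ∈ range (l2+1), alq q j * alq q (N-j-1) := by
    rw [eB11, quad24 N l2 hl2N
      (fun a b c d => q (2*(a:ℤ)) * q (2*(b:ℤ)+1) * q (2*(c:ℤ)-1) * q (2*(d:ℤ)))]
    refine Finset.sum_congr rfl fun j hj => ?_
    rw [mem_range] at hj
    rw [← lemA q j, ← lemB q hneg (N-j) (by omega), Finset.sum_mul_sum]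
    refine Finset.sum_congr rfl fun x hx => ?_
    refine Finset.sum_congr rfl fun y hy => ?_
    ring
  have hSss : ∑ p ∈ Bset l1 l2 (Equiv.swap 0 1) (Equiv.swap 0 1),
        q (2 * p.1.1) * q (2 * p.1.2 + 1) * q (2 * (p.2.1 : ℤ) - 1) * q (2 * p.2.2)
      = ∑ j ∈ range l2, alq q j * alq q (N-(j+1)) := by
    rw [eBss, quad13 N l2 hl2N
      (fun a b c d => q (2*(a:ℤ)) * q (2*(b:ℤ)+1) * q (2*(c:ℤ)-1) * q (2*(d:ℤ)))]
    rw [← lemBL q hneg N l2 (fun j => alq q (N-j))]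
    refine Finset.sum_congr rfl fun j hj => ?_
    rw [mem_range] at hj
    rw [← lemA q (N-j), Finset.sum_mul_sum]
    refine Finset.sum_congr rfl fun x hx => ?_
    refine Finset.sum_congr rfl fun y hy => ?_
    ring
  have hS1s : ∑ p ∈ Bset l1 l2 1 (Equiv.swap 0 1),
        q (2 * p.1.1) * q (2 * p.1.2 + 1) * q (2 * (p.2.1 : ℤ) - 1) * q (2 * p.2.2)
      = ∑ j ∈ range (l2+1), ooq q j * eeq q (N-j) := by
    rw [eB1s, quad23 N l2 hl2N
      (fun a b c d => q (2*(a:ℤ)) * q (2*(b:ℤ)+1) * q (2*(c:ℤ)-1) * q (2*(d:ℤ)))]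
    refine Finset.sum_congr rfl fun j hj => ?_
    rw [mem_range] at hj
    rw [← lemC q hneg j, ← lemE q (N-j), Finset.sum_mul_sum]
    refine Finset.sum_congr rfl fun x hx => ?_
    refine Finset.sum_congr rfl fun y hy => ?_
    ring
  have hSs1 : ∑ p ∈ Bset l1 l2 (Equiv.swap 0 1) 1,
        q (2 * p.1.1) * q (2 * p.1.2 + 1) * q (2 * (p.2.1 : ℤ) - 1) * q (2 * p.2.2)
      = ∑ j ∈ range (l2+1), eeq q j * ooq q (N-j) := by
    rw [eBs1, quad14 N l2 hl2N
      (fun a b c d => q (2*(a:ℤ)) * q (2*(b:ℤ)+1) * q (2*(c:ℤ)-1) * q (2*(d:ℤ)))]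
    refine Finset.sum_congr rfl fun j hj => ?_
    rw [mem_range] at hj
    rw [← lemE q j, ← lemC q hneg (N-j), Finset.sum_mul_sum]
    refine Finset.sum_congr rfl fun x hx => ?_
    refine Finset.sum_congr rfl fun y hy => ?_
    ring
  -- signs
  have hsgn1 : ((((Equiv.Perm.sign (1 : Equiv.Perm (Fin 2))) : ℤ)
      * ((Equiv.Perm.sign (1 : Equiv.Perm (Fin 2))) : ℤ) : ℤ) : MvPolynomial (Fin n) ℚ) = 1 := by
    simp
  have hsgnsw : ((Equiv.Perm.sign (Equiv.swap (0 : Fin 2) 1) : ℤ)) = -1 := by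
    rw [Equiv.Perm.sign_swap (by decide)]
    rfl
  have hsgn2 : ((((Equiv.Perm.sign (1 : Equiv.Perm (Fin 2))) : ℤ)
      * ((Equiv.Perm.sign (Equiv.swap (0 : Fin 2) 1)) : ℤ) : ℤ) : MvPolynomial (Fin n) ℚ) = -1 := by
    rw [hsgnsw]; simp
  have hsgn3 : ((((Equiv.Perm.sign (Equiv.swap (0 : Fin 2) 1)) : ℤ)
      * ((Equiv.Perm.sign (1 : Equiv.Perm (Fin 2))) : ℤ) : ℤ) : MvPolynomial (Fin n) ℚ) = -1 := by
    rw [hsgnsw]; simp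
  have hsgn4 : ((((Equiv.Perm.sign (Equiv.swap (0 : Fin 2) 1)) : ℤ)
      * ((Equiv.Perm.sign (Equiv.swap (0 : Fin 2) 1)) : ℤ) : ℤ) : MvPolynomial (Fin n) ℚ) = 1 := by
    rw [hsgnsw]; simp
  rw [hsgn1, hsgn2, hsgn3, hsgn4, hS11, hS1s, hSs1, hSss, hL1, hL2, hIcc, hOdd, hEven]
  -- final reindexing identities
  have hrefl1 : ∑ j ∈ range (l2+1),
        (ooq q (l1+2+j) * eeq q (l2-j) + eeq q (l1+2+j) * ooq q (l2-j))
      = ∑ j ∈ range (l2+1), (ooq q (N-j) * eeq q j + eeq q (N-j) * ooq q j) := by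
    rw [← Finset.sum_range_reflect
      (fun j => ooq q (N-j) * eeq q j + eeq q (N-j) * ooq q j) (l2+1)]
    refine Finset.sum_congr rfl fun j hj => ?_
    rw [mem_range] at hj
    rw [show l2+1-1-j = l2-j by omega, show N-(l2-j) = l1+2+j by omega]
  have hrefl2 : ∑ j ∈ range l2, alq q (l1+2+j) * alq q (l2-1-j)
      = ∑ j ∈ range l2, alq q j * alq q (N-(j+1)) := by
    rw [← Finset.sum_range_reflect (fun j => alq q j * alq q (N-(j+1))) l2]
    refine Finset.sum_congr rfl fun j hj => ?_
    rw [mem_range] at hj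
    rw [show N-((l2-1-j)+1) = l1+2+j by omega, mul_comm]
  have hsplit : ∑ j ∈ range (l2+1), alq q j * alq q (N-j-1)
      = ∑ j ∈ range l2, alq q j * alq q (N-j-1) + alq q l2 * alq q (l1+1) := by
    rw [Finset.sum_range_succ, show N-l2-1 = l1+1 by omega]
  have hsplit2 : ∑ j ∈ range l2, alq q j * alq q (N-(j+1))
      = ∑ j ∈ range l2, alq q j * alq q (N-j-1) := by
    refine Finset.sum_congr rfl fun j hj => ?_
    rw [show N-(j+1) = N-j-1 by omega]
  have hsum : ∑ j ∈ range (l2+1), (ooq q (N-j) * eeq q j + eeq q (N-j) * ooq q j)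
      = ∑ j ∈ range (l2+1), ooq q j * eeq q (N-j)
        + ∑ j ∈ range (l2+1), eeq q j * ooq q (N-j) := by
    rw [← Finset.sum_add_distrib]
    refine Finset.sum_congr rfl fun j hj => ?_
    ring
  rw [hrefl1, hrefl2, hsplit, hsplit2, hsum]
  ring
end

section
/- Let x = (x₁,…,x_n) and y = (y₁,…,y_n) be two independent sets of n variables, s_λ(y) the Schur polynomial and S_λ(x) the 2-reduced Schur polynomial defined by S_λ(x) = det(q_{λ_i − i + j}(x))_{1≤i,j≤n}. Then Σ_{λ ∈ P^{(n)}} s_λ(y) S_λ(x) = Π_{i=1}^n Π_{j=1}^n (1 + x_i y_j)/(1 − x_i y_j), where P^{(n)} is the set of partitions of length at most n. -/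
open Finset

/-- The antisymmetrization `a_α(y) = ∑_{σ ∈ S_k} sgn(σ) ∏ᵢ y_{σ(i)}^{αᵢ}`. -/
noncomputable def aalt (k : ℕ) (α : Fin k → ℕ) : MvPolynomial (Fin k) ℚ :=
  ∑ σ : Equiv.Perm (Fin k), ((Equiv.Perm.sign σ : ℤ) : MvPolynomial (Fin k) ℚ) *
    ∏ i, MvPolynomial.X (σ i) ^ α i

/-- The staircase `δ = (k-1, k-2, …, 1, 0)`. -/
def dlt (k : ℕ) : Fin k → ℕ := fun i => k - 1 - i

/-- The `2`-reduced Schur polynomial `S_λ(x) = det (q_{λᵢ - i + j})_{1 ≤ i,j ≤ n}`. -/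
noncomputable def Sred (n : ℕ) (q : ℤ → MvPolynomial (Fin n) ℚ) (f : Fin n → ℕ) :
    MvPolynomial (Fin n) ℚ :=
  Matrix.det (Matrix.of fun i j : Fin n => q (((f i : ℤ) + (j : ℕ)) - (i : ℕ)))

/-- The partitions of `d` of length at most `n`, encoded as antitone functions
`Fin n → ℕ` of total sum `d`. -/
def PLen (n d : ℕ) : Finset (Fin n → ℕ) :=
  (Fintype.piFinset fun _ => Finset.range (d + 1)).filter
    fun f => (∀ i j : Fin n, i ≤ j → f j ≤ f i) ∧ ∑ i, f i = d

/-! ### Auxiliary definitions and lemmas -/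

namespace CauchyTwoReducedAux

open MvPolynomial

variable {n : ℕ}

/-- The antisymmetrization, renamed into the `y`-variables (the `Sum.inr` copy). -/
noncomputable def AA (n : ℕ) (α : Fin n → ℕ) : MvPolynomial (Fin n ⊕ Fin n) ℚ :=
  MvPolynomial.rename (Sum.inr : Fin n → Fin n ⊕ Fin n) (aalt n α)

/-- `q_r`, renamed into the `x`-variables (the `Sum.inl` copy). -/
noncomputable def QX (n : ℕ) (q : ℤ → MvPolynomial (Fin n) ℚ) (r : ℤ) :
    MvPolynomial (Fin n ⊕ Fin n) ℚ :=
  MvPolynomial.rename (Sum.inl : Fin n → Fin n ⊕ Fin n) (q r)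

lemma AA_eq (α : Fin n → ℕ) :
    AA n α = ∑ σ : Equiv.Perm (Fin n),
      ((Equiv.Perm.sign σ : ℤ) : MvPolynomial (Fin n ⊕ Fin n) ℚ) *
        ∏ i, MvPolynomial.X (Sum.inr (σ i)) ^ α i := by
  unfold AA aalt
  rw [map_sum]
  refine Finset.sum_congr rfl fun σ _ => ?_
  rw [map_mul, map_intCast, map_prod]
  congr 1
  refine Finset.prod_congr rfl fun i _ => ?_
  rw [map_pow, MvPolynomial.rename_X]

lemma AA_det (α : Fin n → ℕ) :
    AA n α = (Matrix.of fun k i : Fin n =>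
      (MvPolynomial.X (Sum.inr k) : MvPolynomial (Fin n ⊕ Fin n) ℚ) ^ α i).det := by
  rw [AA_eq, Matrix.det_apply]
  refine Finset.sum_congr rfl fun σ _ => ?_
  rw [Units.smul_def, zsmul_eq_mul]
  rfl

lemma AA_zero {α : Fin n → ℕ} (h : ¬ Function.Injective α) : AA n α = 0 := by
  rw [AA_det]
  simp only [Function.Injective, not_forall] at h
  obtain ⟨i, j, hij, hne⟩ := h
  exact Matrix.det_zero_of_column_eq hne fun k => by
    rw [Matrix.of_apply, Matrix.of_apply, hij]

lemma AA_comp (α : Fin n → ℕ) (τ : Equiv.Perm (Fin n)) :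
    AA n (fun k => α (τ k)) =
      ((Equiv.Perm.sign τ : ℤ) : MvPolynomial (Fin n ⊕ Fin n) ℚ) * AA n α := by
  rw [AA_det, AA_det]
  have h : (Matrix.of fun k i : Fin n =>
        (MvPolynomial.X (Sum.inr k) : MvPolynomial (Fin n ⊕ Fin n) ℚ) ^ (fun k => α (τ k)) i)
      = (Matrix.of fun k i : Fin n =>
        (MvPolynomial.X (Sum.inr k) : MvPolynomial (Fin n ⊕ Fin n) ℚ) ^ α i).submatrix id τ :=
    rfl
  rw [h, Matrix.det_permute']

lemma SredX_eq (q : ℤ → MvPolynomial (Fin n) ℚ) (f : Fin n → ℕ) :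
    MvPolynomial.rename (Sum.inl : Fin n → Fin n ⊕ Fin n) (Sred n q f)
      = ∑ τ : Equiv.Perm (Fin n),
          ((Equiv.Perm.sign τ : ℤ) : MvPolynomial (Fin n ⊕ Fin n) ℚ) *
            ∏ i, QX n q (((f (τ i) : ℤ) + (i : ℕ)) - ((τ i : Fin n) : ℕ)) := by
  unfold Sred
  rw [Matrix.det_apply, map_sum]
  refine Finset.sum_congr rfl fun τ _ => ?_
  rw [Units.smul_def, zsmul_eq_mul, map_mul, map_intCast, map_prod]
  rfl

lemma dlt_coe (hn : 1 ≤ n) (i : Fin n) : ((dlt n i : ℕ) : ℤ) = (n : ℤ) - 1 - (i : ℕ) := by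
  have := i.isLt
  unfold dlt
  omega

lemma dlt_strictAnti : StrictAnti (dlt n) := by
  intro i j hij
  have h1 : (i : ℕ) < (j : ℕ) := hij
  have h2 := j.isLt
  unfold dlt
  omega

lemma strictAnti_step {u : Fin n → ℕ} (hu : StrictAnti u) :
    ∀ k (a b : Fin n), (b : ℕ) = (a : ℕ) + k → u b + k ≤ u a := by
  intro k
  induction k with
  | zero =>
    intro a b h
    have : b = a := Fin.ext (by omega)
    simp [this]
  | succ k ih =>
    intro a b h
    have hlt : (a : ℕ) + k < n := by have := b.isLt; omega
    have h1 : u ⟨(a : ℕ) + k, hlt⟩ + k ≤ u a := ih a ⟨(a : ℕ) + k, hlt⟩ rfl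
    have h2 : u b < u ⟨(a : ℕ) + k, hlt⟩ := by
      apply hu
      rw [Fin.lt_def]
      show (a : ℕ) + k < (b : ℕ)
      omega
    omega

lemma dlt_le_of_strictAnti {u : Fin n → ℕ} (hu : StrictAnti u) (i : Fin n) :
    dlt n i ≤ u i := by
  have hi := i.isLt
  have hb : n - 1 < n := by omega
  have := strictAnti_step hu (n - 1 - (i : ℕ)) i ⟨n - 1, hb⟩
    (by show n - 1 = (i : ℕ) + (n - 1 - (i : ℕ)); omega)
  unfold dlt
  omega

lemma sub_dlt_antitone {u : Fin n → ℕ} (hu : StrictAnti u) {i j : Fin n} (hij : i ≤ j) :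
    u j - dlt n j ≤ u i - dlt n i := by
  rcases eq_or_lt_of_le hij with h | h
  · rw [show i = j from Fin.ext (by exact congrArg Fin.val h)]
  · have h' : (i : ℕ) < (j : ℕ) := h
    have hstep := strictAnti_step hu ((j : ℕ) - (i : ℕ)) i j (by omega)
    have hdl := dlt_le_of_strictAnti hu j
    have hi := i.isLt
    have hj := j.isLt
    unfold dlt at *
    omega

lemma perm_eq_refl_of_strictAnti {u v : Fin n → ℕ} (hu : StrictAnti u) (hv : StrictAnti v)
    (ρ : Equiv.Perm (Fin n)) (h : ∀ x, u x = v (ρ x)) : ∀ x, ρ x = x := by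
  have hρ : StrictMono ⇑ρ := by
    intro a b hab
    have h2 : v (ρ b) < v (ρ a) := by rw [← h, ← h]; exact hu hab
    exact hv.lt_iff_gt.mp h2
  have inst : WellFoundedLT (Fin n) := inferInstance
  have hid : ⇑ρ = id :=
    (hρ.range_inj (strictMono_id : StrictMono (id : Fin n → Fin n))).mp
      (by rw [Set.range_id]; exact ρ.surjective.range_eq)
  exact fun x => congrFun hid x

lemma exists_sortPerm {m : Fin n → ℕ} (hm : Function.Injective m) :
    ∃ τ : Equiv.Perm (Fin n), StrictAnti (fun k => m (τ k)) := by
  refine ⟨Fin.revPerm.trans (Tuple.sort m), ?_⟩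
  have h1 : StrictMono (m ∘ ⇑(Tuple.sort m)) :=
    (Tuple.monotone_sort m).strictMono_of_injective (hm.comp (Equiv.injective _))
  have h2 : StrictAnti (fun i : Fin n => Fin.rev i) := fun a b hab => Fin.rev_lt_rev.mpr hab
  exact h1.comp_strictAnti h2

/-- Compositions of `D` into `n` (possibly zero) parts. -/
def Mset (n D : ℕ) : Finset (Fin n → ℕ) :=
  (Fintype.piFinset fun _ => Finset.range (D + 1)).filter fun m => ∑ i, m i = D

lemma mem_Mset {D : ℕ} {m : Fin n → ℕ} : m ∈ Mset n D ↔ ∑ i, m i = D := by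
  constructor
  · exact fun h => (Finset.mem_filter.mp h).2
  · intro h
    refine Finset.mem_filter.mpr ⟨Fintype.mem_piFinset.mpr fun i => Finset.mem_range.mpr ?_, h⟩
    have : m i ≤ ∑ k, m k :=
      Finset.single_le_sum (fun k _ => Nat.zero_le _) (Finset.mem_univ i)
    omega

lemma mem_PLen {d : ℕ} {f : Fin n → ℕ} :
    f ∈ PLen n d ↔ (∀ i j : Fin n, i ≤ j → f j ≤ f i) ∧ ∑ i, f i = d := by
  constructor
  · exact fun h => (Finset.mem_filter.mp h).2
  · intro h
    refine Finset.mem_filter.mpr ⟨Fintype.mem_piFinset.mpr fun i => Finset.mem_range.mpr ?_, h⟩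
    have : f i ≤ ∑ k, f k :=
      Finset.single_le_sum (fun k _ => Nat.zero_le _) (Finset.mem_univ i)
    omega

lemma plen_strictAnti {f : Fin n → ℕ} (hf : ∀ i j : Fin n, i ≤ j → f j ≤ f i) :
    StrictAnti (fun k : Fin n => f k + dlt n k) := by
  intro i j hij
  have h1 : f j ≤ f i := hf i j (le_of_lt hij)
  have h2 : dlt n j < dlt n i := dlt_strictAnti hij
  show f j + dlt n j < f i + dlt n i
  omega

lemma Mset_sum_comp {M : Type*} [AddCommMonoid M] {D : ℕ} (σ : Equiv.Perm (Fin n))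
    (H : (Fin n → ℕ) → M) : ∑ γ ∈ Mset n D, H (γ ∘ σ) = ∑ β ∈ Mset n D, H β := by
  refine Finset.sum_nbij' (fun γ => γ ∘ σ) (fun β => β ∘ σ.symm) ?_ ?_ ?_ ?_ ?_
  · intro γ hγ
    rw [mem_Mset] at hγ ⊢
    rw [← hγ]
    exact Equiv.sum_comp σ γ
  · intro β hβ
    rw [mem_Mset] at hβ ⊢
    rw [← hβ]
    exact Equiv.sum_comp σ.symm β
  · intro γ _; funext x; simp
  · intro β _; funext x; simp
  · intro γ _; rfl

lemma coeff_prod_univ (F : Fin n → ℕ → MvPolynomial (Fin n ⊕ Fin n) ℚ) (d : ℕ) :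
    PowerSeries.coeff d (∏ j, PowerSeries.mk (F j)) = ∑ γ ∈ Mset n d, ∏ j, F j (γ j) := by
  rw [PowerSeries.coeff_prod]
  refine Finset.sum_nbij' (fun l => ⇑l) (fun γ => Finsupp.equivFunOnFinite.symm γ)
    ?_ ?_ ?_ ?_ ?_
  · intro l hl
    rw [Finset.mem_finsuppAntidiag] at hl
    exact mem_Mset.mpr hl.1
  · intro γ hγ
    rw [Finset.mem_finsuppAntidiag]
    refine ⟨?_, Finset.subset_univ _⟩
    rw [mem_Mset] at hγ
    simpa using hγ
  · intro l _
    exact Finsupp.equivFunOnFinite.symm_apply_apply l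
  · intro γ _
    exact Finsupp.equivFunOnFinite.apply_symm_apply γ
  · intro l _
    exact Finset.prod_congr rfl fun j _ => by rw [PowerSeries.coeff_mk]

end CauchyTwoReducedAux

open CauchyTwoReducedAux MvPolynomial in
lemma cauchy_key1 {n : ℕ} (q : ℤ → MvPolynomial (Fin n) ℚ) (d : ℕ) :
    AA n (dlt n) *
        ∑ γ ∈ Mset n d, ∏ j, (MvPolynomial.X (Sum.inr j) : MvPolynomial (Fin n ⊕ Fin n) ℚ) ^ γ j
          * QX n q (γ j)
      = ∑ β ∈ Mset n d, (∏ j, QX n q ((β j : ℤ))) * AA n (fun i => β i + dlt n i) := by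
  have step : ∀ γ : Fin n → ℕ,
      AA n (dlt n) * ∏ j, (MvPolynomial.X (Sum.inr j) : MvPolynomial (Fin n ⊕ Fin n) ℚ) ^ γ j
          * QX n q (γ j)
        = ∑ σ : Equiv.Perm (Fin n),
            ((Equiv.Perm.sign σ : ℤ) : MvPolynomial (Fin n ⊕ Fin n) ℚ) *
              ((∏ j, QX n q ((γ (σ j) : ℤ))) *
                ∏ i, (MvPolynomial.X (Sum.inr (σ i)) : MvPolynomial (Fin n ⊕ Fin n) ℚ)
                  ^ (γ (σ i) + dlt n i)) := by
    intro γ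
    rw [AA_eq, Finset.sum_mul]
    refine Finset.sum_congr rfl fun σ _ => ?_
    rw [mul_assoc]
    congr 1
    have hre : (∏ j, (MvPolynomial.X (Sum.inr j) : MvPolynomial (Fin n ⊕ Fin n) ℚ) ^ γ j
          * QX n q (γ j))
        = ∏ j, (MvPolynomial.X (Sum.inr (σ j)) : MvPolynomial (Fin n ⊕ Fin n) ℚ) ^ γ (σ j)
          * QX n q ((γ (σ j) : ℤ)) :=
      (Equiv.prod_comp σ fun j =>
        (MvPolynomial.X (Sum.inr j) : MvPolynomial (Fin n ⊕ Fin n) ℚ) ^ γ j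
          * QX n q ((γ j : ℤ))).symm
    rw [hre]
    simp only [pow_add, Finset.prod_mul_distrib]
    ring
  calc AA n (dlt n) * ∑ γ ∈ Mset n d, ∏ j,
        (MvPolynomial.X (Sum.inr j) : MvPolynomial (Fin n ⊕ Fin n) ℚ) ^ γ j * QX n q (γ j)
      = ∑ γ ∈ Mset n d, ∑ σ : Equiv.Perm (Fin n),
          ((Equiv.Perm.sign σ : ℤ) : MvPolynomial (Fin n ⊕ Fin n) ℚ) *
            ((∏ j, QX n q ((γ (σ j) : ℤ))) *
              ∏ i, (MvPolynomial.X (Sum.inr (σ i)) : MvPolynomial (Fin n ⊕ Fin n) ℚ)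
                ^ (γ (σ i) + dlt n i)) := by
        rw [Finset.mul_sum]
        exact Finset.sum_congr rfl fun γ _ => step γ
    _ = ∑ σ : Equiv.Perm (Fin n), ∑ γ ∈ Mset n d,
          ((Equiv.Perm.sign σ : ℤ) : MvPolynomial (Fin n ⊕ Fin n) ℚ) *
            ((∏ j, QX n q ((γ (σ j) : ℤ))) *
              ∏ i, (MvPolynomial.X (Sum.inr (σ i)) : MvPolynomial (Fin n ⊕ Fin n) ℚ)
                ^ (γ (σ i) + dlt n i)) := Finset.sum_comm
    _ = ∑ σ : Equiv.Perm (Fin n), ∑ β ∈ Mset n d,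
          ((Equiv.Perm.sign σ : ℤ) : MvPolynomial (Fin n ⊕ Fin n) ℚ) *
            ((∏ j, QX n q ((β j : ℤ))) *
              ∏ i, (MvPolynomial.X (Sum.inr (σ i)) : MvPolynomial (Fin n ⊕ Fin n) ℚ)
                ^ (β i + dlt n i)) := by
        refine Finset.sum_congr rfl fun σ _ => ?_
        exact Mset_sum_comp σ (fun β =>
          ((Equiv.Perm.sign σ : ℤ) : MvPolynomial (Fin n ⊕ Fin n) ℚ) *
            ((∏ j, QX n q ((β j : ℤ))) *
              ∏ i, (MvPolynomial.X (Sum.inr (σ i)) : MvPolynomial (Fin n ⊕ Fin n) ℚ)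
                ^ (β i + dlt n i)))
    _ = ∑ β ∈ Mset n d, (∏ j, QX n q ((β j : ℤ))) * AA n (fun i => β i + dlt n i) := by
        rw [Finset.sum_comm]
        refine Finset.sum_congr rfl fun β _ => ?_
        rw [AA_eq, Finset.mul_sum]
        exact Finset.sum_congr rfl fun σ _ => by ring

open CauchyTwoReducedAux MvPolynomial in
lemma cauchy_key2 {n : ℕ} (q : ℤ → MvPolynomial (Fin n) ℚ)
    (hneg : ∀ r : ℤ, r < 0 → q r = 0) (d : ℕ) :
    ∑ β ∈ Mset n d, (∏ j, QX n q ((β j : ℤ))) * AA n (fun i => β i + dlt n i)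
      = ∑ m ∈ Mset n (d + ∑ i, dlt n i),
          (∏ j, QX n q ((m j : ℤ) - (dlt n j : ℕ))) * AA n m := by
  classical
  have hfil : ∑ m ∈ (Mset n (d + ∑ i, dlt n i)).filter (fun m => ∀ i, dlt n i ≤ m i),
        (∏ j, QX n q ((m j : ℤ) - (dlt n j : ℕ))) * AA n m
      = ∑ m ∈ Mset n (d + ∑ i, dlt n i),
        (∏ j, QX n q ((m j : ℤ) - (dlt n j : ℕ))) * AA n m := by
    refine Finset.sum_filter_of_ne ?_
    intro m _ hne
    by_contra hcon
    push_neg at hcon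
    obtain ⟨i, hi⟩ := hcon
    apply hne
    have hzero : QX n q ((m i : ℤ) - (dlt n i : ℕ)) = 0 := by
      unfold QX
      rw [hneg _ (by omega), map_zero]
    rw [Finset.prod_eq_zero (Finset.mem_univ i) hzero, zero_mul]
  rw [← hfil]
  refine Finset.sum_nbij' (fun β => fun k => β k + dlt n k) (fun m => fun k => m k - dlt n k)
    ?_ ?_ ?_ ?_ ?_
  · intro β hβ
    rw [mem_Mset] at hβ
    refine Finset.mem_filter.mpr ⟨mem_Mset.mpr ?_, ?_⟩
    · show ∑ i, (β i + dlt n i) = d + ∑ i, dlt n i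
      rw [Finset.sum_add_distrib, hβ]
    · intro i
      show dlt n i ≤ β i + dlt n i
      omega
  · intro m hm
    obtain ⟨hm1, hm2⟩ := Finset.mem_filter.mp hm
    rw [mem_Mset] at hm1
    refine mem_Mset.mpr ?_
    show ∑ i, (m i - dlt n i) = d
    have hsf : ∑ i, (m i - dlt n i) + ∑ i, dlt n i = ∑ i, m i := by
      rw [← Finset.sum_add_distrib]
      exact Finset.sum_congr rfl fun i _ => by have := hm2 i; omega
    omega
  · intro β _
    funext k
    show (β k + dlt n k) - dlt n k = β k
    omega
  · intro m hm
    funext k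
    have := (Finset.mem_filter.mp hm).2 k
    show (m k - dlt n k) + dlt n k = m k
    omega
  · intro β _
    show (∏ j, QX n q ((β j : ℤ))) * AA n (fun i => β i + dlt n i)
      = (∏ j, QX n q (((β j + dlt n j : ℕ) : ℤ) - (dlt n j : ℕ))) *
          AA n (fun k => β k + dlt n k)
    congr 1
    refine Finset.prod_congr rfl fun j _ => ?_
    congr 1
    push_cast
    omega

open CauchyTwoReducedAux MvPolynomial in
lemma cauchy_key3 {n : ℕ} (hn : 1 ≤ n) (q : ℤ → MvPolynomial (Fin n) ℚ) (d : ℕ) :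
    ∑ m ∈ Mset n (d + ∑ i, dlt n i),
        (∏ j, QX n q ((m j : ℤ) - (dlt n j : ℕ))) * AA n m
      = ∑ f ∈ PLen n d, AA n (fun i => f i + dlt n i) *
          MvPolynomial.rename (Sum.inl : Fin n → Fin n ⊕ Fin n) (Sred n q f) := by
  classical
  have hfil : ∑ m ∈ (Mset n (d + ∑ i, dlt n i)).filter (fun m => Function.Injective m),
        (∏ j, QX n q ((m j : ℤ) - (dlt n j : ℕ))) * AA n m
      = ∑ m ∈ Mset n (d + ∑ i, dlt n i),
        (∏ j, QX n q ((m j : ℤ) - (dlt n j : ℕ))) * AA n m := by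
    refine Finset.sum_filter_of_ne ?_
    intro m _ hne
    by_contra hcon
    rw [AA_zero hcon, mul_zero] at hne
    exact hne rfl
  rw [← hfil]
  have hrhs : ∀ f ∈ PLen n d,
      AA n (fun i => f i + dlt n i) *
          MvPolynomial.rename (Sum.inl : Fin n → Fin n ⊕ Fin n) (Sred n q f)
        = ∑ τ : Equiv.Perm (Fin n),
            (∏ j, QX n q (((f (τ j) + dlt n (τ j) : ℕ) : ℤ) - (dlt n j : ℕ)))
              * AA n (fun k => f (τ k) + dlt n (τ k)) := by
    intro f _
    rw [SredX_eq, Finset.mul_sum]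
    refine Finset.sum_congr rfl fun τ _ => ?_
    have hAAc : AA n (fun k => f (τ k) + dlt n (τ k))
        = ((Equiv.Perm.sign τ : ℤ) : MvPolynomial (Fin n ⊕ Fin n) ℚ) *
            AA n (fun k => f k + dlt n k) :=
      AA_comp (fun k => f k + dlt n k) τ
    rw [hAAc]
    have hidx : ∀ j : Fin n, (((f (τ j) + dlt n (τ j) : ℕ) : ℤ) - (dlt n j : ℕ))
        = ((f (τ j) : ℤ) + (j : ℕ)) - ((τ j : Fin n) : ℕ) := by
      intro j
      have h1 := dlt_coe hn j
      have h2 := dlt_coe hn (τ j)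
      push_cast
      omega
    rw [show (∏ j, QX n q (((f (τ j) + dlt n (τ j) : ℕ) : ℤ) - (dlt n j : ℕ)))
        = ∏ j, QX n q (((f (τ j) : ℤ) + (j : ℕ)) - ((τ j : Fin n) : ℕ)) from
      Finset.prod_congr rfl fun j _ => by rw [hidx j]]
    ring
  calc ∑ m ∈ (Mset n (d + ∑ i, dlt n i)).filter (fun m => Function.Injective m),
        (∏ j, QX n q ((m j : ℤ) - (dlt n j : ℕ))) * AA n m
      = ∑ p ∈ PLen n d ×ˢ (Finset.univ : Finset (Equiv.Perm (Fin n))),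
          (∏ j, QX n q (((p.1 (p.2 j) + dlt n (p.2 j) : ℕ) : ℤ) - (dlt n j : ℕ)))
            * AA n (fun k => p.1 (p.2 k) + dlt n (p.2 k)) := by
        refine (Finset.sum_bij (fun p _ => fun k => p.1 (p.2 k) + dlt n (p.2 k))
          ?_ ?_ ?_ ?_).symm
        · rintro ⟨f, τ⟩ hp
          obtain ⟨hf, -⟩ := Finset.mem_product.mp hp
          obtain ⟨hf1, hf2⟩ := mem_PLen.mp hf
          refine Finset.mem_filter.mpr ⟨mem_Mset.mpr ?_, ?_⟩
          · have h1 : ∑ k, (f (τ k) + dlt n (τ k)) = ∑ k, (f k + dlt n k) :=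
              Equiv.sum_comp τ (fun k => f k + dlt n k)
            rw [h1, Finset.sum_add_distrib, hf2]
          · have hsa : StrictAnti (fun k : Fin n => f k + dlt n k) := plen_strictAnti hf1
            exact hsa.injective.comp τ.injective
        · rintro ⟨f, τ⟩ hp ⟨g, π⟩ hp' heq
          obtain ⟨hf, -⟩ := Finset.mem_product.mp hp
          obtain ⟨hg, -⟩ := Finset.mem_product.mp hp'
          have hu : StrictAnti (fun k : Fin n => f k + dlt n k) :=
            plen_strictAnti (mem_PLen.mp hf).1
          have hv : StrictAnti (fun k : Fin n => g k + dlt n k) :=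
            plen_strictAnti (mem_PLen.mp hg).1
          have heq' : ∀ k, f (τ k) + dlt n (τ k) = g (π k) + dlt n (π k) :=
            fun k => congrFun heq k
          have hcomp : ∀ x, (fun k : Fin n => f k + dlt n k) x
              = (fun k : Fin n => g k + dlt n k) ((τ.symm.trans π) x) := by
            intro x
            have := heq' (τ.symm x)
            simpa using this
          have hid := perm_eq_refl_of_strictAnti hu hv (τ.symm.trans π) hcomp
          have hπτ : π = τ := by
            refine Equiv.ext fun y => ?_
            have := hid (τ y)
            simpa using this
          have hfg : f = g := by
            funext x
            have := heq' (τ.symm x)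
            rw [hπτ] at this
            simp only [Equiv.apply_symm_apply] at this
            omega
          rw [hπτ, hfg]
        · intro m hm
          obtain ⟨hm1, hm2⟩ := Finset.mem_filter.mp hm
          rw [mem_Mset] at hm1
          obtain ⟨τ', hτ'⟩ := exists_sortPerm hm2
          refine ⟨(fun k => m (τ' k) - dlt n k, τ'.symm), ?_, ?_⟩
          · refine Finset.mem_product.mpr ⟨mem_PLen.mpr ⟨?_, ?_⟩, Finset.mem_univ _⟩
            · intro i j hij
              exact sub_dlt_antitone hτ' hij
            · show ∑ k, (m (τ' k) - dlt n k) = d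
              have hplus : ∑ k, ((m (τ' k) - dlt n k) + dlt n k) = ∑ k, m (τ' k) :=
                Finset.sum_congr rfl fun k _ => by
                  have := dlt_le_of_strictAnti hτ' k
                  omega
              have hperm : ∑ k, m (τ' k) = ∑ k, m k := Equiv.sum_comp τ' m
              rw [Finset.sum_add_distrib] at hplus
              omega
          · funext k
            show m (τ' (τ'.symm k)) - dlt n (τ'.symm k) + dlt n (τ'.symm k) = m k
            have := dlt_le_of_strictAnti hτ' (τ'.symm k)
            rw [Equiv.apply_symm_apply]
            have h2 : m (τ' (τ'.symm k)) = m k := by rw [Equiv.apply_symm_apply]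
            omega
        · intro p hp
          rfl
    _ = ∑ f ∈ PLen n d, ∑ τ : Equiv.Perm (Fin n),
          (∏ j, QX n q (((f (τ j) + dlt n (τ j) : ℕ) : ℤ) - (dlt n j : ℕ)))
            * AA n (fun k => f (τ k) + dlt n (τ k)) :=
        Finset.sum_product _ _ _
    _ = ∑ f ∈ PLen n d, AA n (fun i => f i + dlt n i) *
          MvPolynomial.rename (Sum.inl : Fin n → Fin n ⊕ Fin n) (Sred n q f) :=
        Finset.sum_congr rfl fun f hf => (hrhs f hf).symm

open CauchyTwoReducedAux MvPolynomial in
lemma AA_dlt_ne_zero {n : ℕ} : AA n (dlt n) ≠ 0 := by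
  intro h
  have hval : MvPolynomial.eval
      (Sum.elim (fun _ : Fin n => (0 : ℚ)) (fun j : Fin n => ((j : ℕ) : ℚ))) (AA n (dlt n))
        = 0 := by
    rw [h, map_zero]
  rw [AA, MvPolynomial.eval_rename] at hval
  have hdet : MvPolynomial.eval
        ((Sum.elim (fun _ : Fin n => (0 : ℚ)) (fun j : Fin n => ((j : ℕ) : ℚ)))
          ∘ (Sum.inr : Fin n → Fin n ⊕ Fin n)) (aalt n (dlt n))
      = ((Matrix.vandermonde fun k : Fin n => ((k : ℕ) : ℚ)).submatrix id ⇑Fin.revPerm).det := by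
    rw [Matrix.det_apply]
    unfold aalt
    rw [map_sum]
    refine Finset.sum_congr rfl fun σ _ => ?_
    rw [map_mul, map_intCast, map_prod, Units.smul_def, zsmul_eq_mul]
    congr 1
    refine Finset.prod_congr rfl fun i _ => ?_
    rw [map_pow, MvPolynomial.eval_X]
    show ((σ i : ℕ) : ℚ) ^ dlt n i = ((σ i : ℕ) : ℚ) ^ ((Fin.rev i : Fin n) : ℕ)
    congr 1
    rw [Fin.val_rev]
    unfold dlt
    omega
  rw [hdet, Matrix.det_permute', Matrix.det_vandermonde] at hval
  have hne : (((Equiv.Perm.sign (Fin.revPerm : Equiv.Perm (Fin n)) : ℤ) : ℚ) *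
      ∏ i : Fin n, ∏ j ∈ Finset.Ioi i, (((j : ℕ) : ℚ) - ((i : ℕ) : ℚ))) ≠ 0 := by
    apply mul_ne_zero
    · exact Int.cast_ne_zero.mpr (Units.ne_zero _)
    · rw [Finset.prod_ne_zero_iff]
      intro i _
      rw [Finset.prod_ne_zero_iff]
      intro j hj
      have hij0 : i < j := Finset.mem_Ioi.mp hj
      have hij : (i : ℕ) < (j : ℕ) := hij0
      intro hzero
      have h1 : ((j : ℕ) : ℚ) = ((i : ℕ) : ℚ) := by linarith [sub_eq_zero.mp hzero]
      have h2 : (j : ℕ) = (i : ℕ) := Nat.cast_injective h1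
      omega
  exact hne hval

open CauchyTwoReducedAux MvPolynomial in
/-- The Cauchy-type identity `∑_{λ ∈ P⁽ⁿ⁾} s_λ(y) S_λ(x) = ∏_{i,j} (1+xᵢyⱼ)/(1-xᵢyⱼ)`
for 2-reduced Schur polynomials, stated as an identity of formal power series in an
auxiliary variable `t` recording the degree `|λ|` (equivalently, `x ↦ tx`), with the
denominator cleared.  Here `S` is the family of Schur polynomials in the `y`-variables,
characterized by `a_δ · s_λ = a_{λ+δ}`, and `q` is characterized by
`(∑ q_r t^r) ∏ᵢ (1 - xᵢ t) = ∏ᵢ (1 + xᵢ t)`. -/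
theorem cauchy_two_reduced (n : ℕ) (hn : 1 ≤ n)
    (q : ℤ → MvPolynomial (Fin n) ℚ)
    (hneg : ∀ r : ℤ, r < 0 → q r = 0)
    (hq : (PowerSeries.mk fun r : ℕ => q r) *
        ∏ i : Fin n, (1 - PowerSeries.C (R := MvPolynomial (Fin n) ℚ) (MvPolynomial.X i) *
          PowerSeries.X)
      = ∏ i : Fin n, (1 + PowerSeries.C (R := MvPolynomial (Fin n) ℚ) (MvPolynomial.X i) *
          PowerSeries.X))
    (S : (Fin n → ℕ) → MvPolynomial (Fin n) ℚ)
    (hS : ∀ f : Fin n → ℕ, aalt n (dlt n) * S f = aalt n fun i => f i + dlt n i) :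
    (PowerSeries.mk fun d =>
        ∑ f ∈ PLen n d,
          MvPolynomial.rename (Sum.inr : Fin n → Fin n ⊕ Fin n) (S f) *
            MvPolynomial.rename (Sum.inl : Fin n → Fin n ⊕ Fin n) (Sred n q f)) *
      ∏ p : Fin n × Fin n,
        (1 - PowerSeries.C (R := MvPolynomial (Fin n ⊕ Fin n) ℚ)
            (MvPolynomial.X (Sum.inl p.1) * MvPolynomial.X (Sum.inr p.2)) * PowerSeries.X)
    = ∏ p : Fin n × Fin n,
        (1 + PowerSeries.C (R := MvPolynomial (Fin n ⊕ Fin n) ℚ)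
            (MvPolynomial.X (Sum.inl p.1) * MvPolynomial.X (Sum.inr p.2)) * PowerSeries.X) := by
  classical
  set Rp := MvPolynomial (Fin n ⊕ Fin n) ℚ with hRp
  -- the ring map renaming the x-variables
  set φ : MvPolynomial (Fin n) ℚ →+* Rp :=
    (MvPolynomial.rename (Sum.inl : Fin n → Fin n ⊕ Fin n)).toRingHom with hφ
  -- a small rescale-C lemma
  have rescale_C' : ∀ (a c : Rp),
      PowerSeries.rescale a (PowerSeries.C (R := Rp) c) = PowerSeries.C (R := Rp) c := by
    intro a c
    refine PowerSeries.ext fun k => ?_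
    rw [PowerSeries.coeff_rescale]
    cases k with
    | zero => simp
    | succ k => simp [PowerSeries.coeff_C]
  -- step I: per-j identity
  have h1 : ∀ j : Fin n,
      (PowerSeries.mk fun r : ℕ => (MvPolynomial.X (Sum.inr j) : Rp) ^ r * QX n q r) *
          ∏ i : Fin n, (1 - PowerSeries.C (R := Rp)
            (MvPolynomial.X (Sum.inl i) * MvPolynomial.X (Sum.inr j)) * PowerSeries.X)
        = ∏ i : Fin n, (1 + PowerSeries.C (R := Rp)
            (MvPolynomial.X (Sum.inl i) * MvPolynomial.X (Sum.inr j)) * PowerSeries.X) := by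
    intro j
    have happ := congrArg (PowerSeries.map φ) hq
    rw [map_mul, map_prod, map_prod] at happ
    have hmk : PowerSeries.map φ (PowerSeries.mk fun r : ℕ => q r)
        = PowerSeries.mk fun r : ℕ => QX n q r := by
      refine PowerSeries.ext fun k => ?_
      rw [PowerSeries.coeff_map, PowerSeries.coeff_mk, PowerSeries.coeff_mk]
      rfl
    rw [hmk] at happ
    have hfac : ∀ i : Fin n,
        PowerSeries.map φ (1 - PowerSeries.C (R := MvPolynomial (Fin n) ℚ) (MvPolynomial.X i) *
            PowerSeries.X)
          = 1 - PowerSeries.C (R := Rp) (MvPolynomial.X (Sum.inl i)) * PowerSeries.X := by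
      intro i
      have hx : φ (MvPolynomial.X i) = MvPolynomial.X (Sum.inl i) :=
        MvPolynomial.rename_X Sum.inl i
      rw [map_sub, map_one, map_mul, PowerSeries.map_C, PowerSeries.map_X, hx]
    have hfac' : ∀ i : Fin n,
        PowerSeries.map φ (1 + PowerSeries.C (R := MvPolynomial (Fin n) ℚ) (MvPolynomial.X i) *
            PowerSeries.X)
          = 1 + PowerSeries.C (R := Rp) (MvPolynomial.X (Sum.inl i)) * PowerSeries.X := by
      intro i
      have hx : φ (MvPolynomial.X i) = MvPolynomial.X (Sum.inl i) :=
        MvPolynomial.rename_X Sum.inl i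
      rw [map_add, map_one, map_mul, PowerSeries.map_C, PowerSeries.map_X, hx]
    rw [Finset.prod_congr rfl fun i _ => hfac i, Finset.prod_congr rfl fun i _ => hfac' i]
      at happ
    have hres := congrArg (PowerSeries.rescale (MvPolynomial.X (Sum.inr j) : Rp)) happ
    rw [map_mul, map_prod, map_prod, PowerSeries.rescale_mk] at hres
    have hres1 : ∀ i : Fin n,
        PowerSeries.rescale (MvPolynomial.X (Sum.inr j) : Rp)
            (1 - PowerSeries.C (R := Rp) (MvPolynomial.X (Sum.inl i)) * PowerSeries.X)
          = 1 - PowerSeries.C (R := Rp)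
              (MvPolynomial.X (Sum.inl i) * MvPolynomial.X (Sum.inr j)) * PowerSeries.X := by
      intro i
      rw [map_sub, map_one, map_mul, rescale_C', PowerSeries.rescale_X, ← mul_assoc, ← map_mul]
    have hres2 : ∀ i : Fin n,
        PowerSeries.rescale (MvPolynomial.X (Sum.inr j) : Rp)
            (1 + PowerSeries.C (R := Rp) (MvPolynomial.X (Sum.inl i)) * PowerSeries.X)
          = 1 + PowerSeries.C (R := Rp)
              (MvPolynomial.X (Sum.inl i) * MvPolynomial.X (Sum.inr j)) * PowerSeries.X := by
      intro i
      rw [map_add, map_one, map_mul, rescale_C', PowerSeries.rescale_X, ← mul_assoc, ← map_mul]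
    rw [Finset.prod_congr rfl fun i _ => hres1 i, Finset.prod_congr rfl fun i _ => hres2 i]
      at hres
    exact hres
  -- step II: multiply over j
  have hPm : (∏ p : Fin n × Fin n, (1 - PowerSeries.C (R := Rp)
        (MvPolynomial.X (Sum.inl p.1) * MvPolynomial.X (Sum.inr p.2)) * PowerSeries.X))
      = ∏ j : Fin n, ∏ i : Fin n, (1 - PowerSeries.C (R := Rp)
        (MvPolynomial.X (Sum.inl i) * MvPolynomial.X (Sum.inr j)) * PowerSeries.X) := by
    rw [Fintype.prod_prod_type]
    exact Finset.prod_comm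
  have hPp : (∏ p : Fin n × Fin n, (1 + PowerSeries.C (R := Rp)
        (MvPolynomial.X (Sum.inl p.1) * MvPolynomial.X (Sum.inr p.2)) * PowerSeries.X))
      = ∏ j : Fin n, ∏ i : Fin n, (1 + PowerSeries.C (R := Rp)
        (MvPolynomial.X (Sum.inl i) * MvPolynomial.X (Sum.inr j)) * PowerSeries.X) := by
    rw [Fintype.prod_prod_type]
    exact Finset.prod_comm
  have h2 : (∏ j : Fin n,
        PowerSeries.mk fun r : ℕ => (MvPolynomial.X (Sum.inr j) : Rp) ^ r * QX n q r) *
      (∏ p : Fin n × Fin n, (1 - PowerSeries.C (R := Rp)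
        (MvPolynomial.X (Sum.inl p.1) * MvPolynomial.X (Sum.inr p.2)) * PowerSeries.X))
      = ∏ p : Fin n × Fin n, (1 + PowerSeries.C (R := Rp)
        (MvPolynomial.X (Sum.inl p.1) * MvPolynomial.X (Sum.inr p.2)) * PowerSeries.X) := by
    rw [hPm, hPp, ← Finset.prod_mul_distrib]
    exact Finset.prod_congr rfl fun j _ => h1 j
  -- step III: nonvanishing of a_δ
  have hC : (PowerSeries.C (R := Rp)) (AA n (dlt n)) ≠ 0 := by
    intro h
    apply AA_dlt_ne_zero (n := n)
    have := congrArg (PowerSeries.coeff (R := Rp) 0) h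
    simpa using this
  -- step IV: the main identification
  have h3 : (PowerSeries.mk fun d =>
        ∑ f ∈ PLen n d,
          MvPolynomial.rename (Sum.inr : Fin n → Fin n ⊕ Fin n) (S f) *
            MvPolynomial.rename (Sum.inl : Fin n → Fin n ⊕ Fin n) (Sred n q f))
      = ∏ j : Fin n,
          PowerSeries.mk fun r : ℕ => (MvPolynomial.X (Sum.inr j) : Rp) ^ r * QX n q r := by
    apply mul_left_cancel₀ hC
    refine PowerSeries.ext fun d => ?_
    rw [PowerSeries.coeff_C_mul, PowerSeries.coeff_C_mul, PowerSeries.coeff_mk]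
    have hco : PowerSeries.coeff (R := Rp) d (∏ j : Fin n,
          PowerSeries.mk fun r : ℕ => (MvPolynomial.X (Sum.inr j) : Rp) ^ r * QX n q r)
        = ∑ γ ∈ Mset n d, ∏ j, (MvPolynomial.X (Sum.inr j) : Rp) ^ γ j * QX n q (γ j) :=
      coeff_prod_univ _ d
    rw [hco]
    have hL : AA n (dlt n) * ∑ f ∈ PLen n d,
          MvPolynomial.rename (Sum.inr : Fin n → Fin n ⊕ Fin n) (S f) *
            MvPolynomial.rename (Sum.inl : Fin n → Fin n ⊕ Fin n) (Sred n q f)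
        = ∑ f ∈ PLen n d, AA n (fun i => f i + dlt n i) *
            MvPolynomial.rename (Sum.inl : Fin n → Fin n ⊕ Fin n) (Sred n q f) := by
      rw [Finset.mul_sum]
      refine Finset.sum_congr rfl fun f _ => ?_
      have hSf : AA n (dlt n) * MvPolynomial.rename (Sum.inr : Fin n → Fin n ⊕ Fin n) (S f)
          = AA n (fun i => f i + dlt n i) := by
        have hmap := congrArg
          (MvPolynomial.rename (Sum.inr : Fin n → Fin n ⊕ Fin n)) (hS f)
        rw [map_mul] at hmap
        exact hmap
      rw [← mul_assoc, hSf]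
    rw [hL]
    exact ((cauchy_key1 q d).trans ((cauchy_key2 q hneg d).trans (cauchy_key3 hn q d))).symm
  rw [h3]
  exact h2
end

section
/- Let n ≥ 1, Δ = (n, n−1, …, 1), δ = (n−1, …, 1, 0), and for each partition λ of length at most n define s_λ(y²) as the Schur polynomial in y₁²,…,y_n². Then a_δ(y²) · Σ_{μ ∈ P^{(n)}} s_μ(y²) S_{2μ+Δ}(x) = Σ_{u ∈ (ℤ_{≥0})^n} (Π_{j=1}^n q_{2u_j + 1 − (n−j)}(x)) · a_u(y²), where a_α(y) = Σ_{σ ∈ S_n} sgn(σ) σ(y^α) is the antisymmetrization and S_λ(x) = det(q_{λ_i−i+j}(x)) is the 2-reduced Schur polynomial with q_r = 0 for r < 0. -/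
open Finset

/-- The antisymmetrization evaluated at squared variables,
`a_α(y²) = ∑_{σ ∈ S_k} sgn(σ) ∏ᵢ y_{σ(i)}^{2αᵢ}`. -/
noncomputable def aaltSq (k : ℕ) (α : Fin k → ℕ) : MvPolynomial (Fin k) ℚ :=
  ∑ σ : Equiv.Perm (Fin k), ((Equiv.Perm.sign σ : ℤ) : MvPolynomial (Fin k) ℚ) *
    ∏ i, MvPolynomial.X (σ i) ^ (2 * α i)

/-- All vectors `u ∈ (ℤ_{≥0})^n` of total sum `m`. -/
def Vecs (n m : ℕ) : Finset (Fin n → ℕ) :=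
  (Fintype.piFinset fun _ => Finset.range (m + 1)).filter fun f => ∑ i, f i = m

section Aux

open MvPolynomial

lemma aaltSq_eq_aalt (k : ℕ) (α : Fin k → ℕ) : aaltSq k α = aalt k (fun i => 2 * α i) := rfl

lemma aalt_comp_perm (k : ℕ) (α : Fin k → ℕ) (τ : Equiv.Perm (Fin k)) :
    aalt k (α ∘ τ) = ((Equiv.Perm.sign τ : ℤ) : MvPolynomial (Fin k) ℚ) * aalt k α := by
  have hsg : ∀ σ : Equiv.Perm (Fin k),
      (Equiv.Perm.sign τ : ℤ) * (Equiv.Perm.sign (σ * τ⁻¹) : ℤ) = (Equiv.Perm.sign σ : ℤ) := by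
    intro σ
    rcases Int.units_eq_one_or (Equiv.Perm.sign τ) with h | h <;>
      simp [map_mul, Equiv.Perm.sign_inv, h]
  unfold aalt
  rw [Finset.mul_sum]
  apply Fintype.sum_equiv (Equiv.mulRight τ⁻¹)
  intro σ
  have h1 : ∏ i, (X (σ i) : MvPolynomial (Fin k) ℚ) ^ (α ∘ τ) i
      = ∏ i, X ((σ * τ⁻¹) i) ^ α i := by
    rw [← Equiv.prod_comp τ (fun i => (X ((σ * τ⁻¹) i) : MvPolynomial (Fin k) ℚ) ^ α i)]
    apply Finset.prod_congr rfl
    intro i _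
    simp [Equiv.Perm.mul_apply]
  rw [h1, Equiv.coe_mulRight, ← hsg σ]
  push_cast
  ring

lemma aaltSq_comp_perm (k : ℕ) (α : Fin k → ℕ) (τ : Equiv.Perm (Fin k)) :
    aaltSq k (α ∘ τ) = ((Equiv.Perm.sign τ : ℤ) : MvPolynomial (Fin k) ℚ) * aaltSq k α := by
  rw [aaltSq_eq_aalt, aaltSq_eq_aalt, ← aalt_comp_perm]
  rfl

lemma aaltSq_eq_zero (k : ℕ) (α : Fin k → ℕ) (h : ¬ Function.Injective α) :
    aaltSq k α = 0 := by
  simp only [Function.Injective, not_forall] at h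
  obtain ⟨i, j, hij, hne⟩ := h
  have hτ : α ∘ (Equiv.swap i j) = α := by
    funext x
    by_cases hx : x = i
    · simp [hx, Equiv.swap_apply_left, hij]
    by_cases hy : x = j
    · simp [hy, Equiv.swap_apply_right, hij]
    · simp [Function.comp, Equiv.swap_apply_of_ne_of_ne hx hy]
  have h0 := aaltSq_comp_perm k α (Equiv.swap i j)
  rw [hτ, Equiv.Perm.sign_swap hne] at h0
  push_cast at h0
  have h2 : (2 : MvPolynomial (Fin k) ℚ) * aaltSq k α = 0 := by linear_combination h0
  exact (mul_eq_zero.mp h2).resolve_left two_ne_zero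

lemma aaltSq_eq_aeval (k : ℕ) (α : Fin k → ℕ) :
    aaltSq k α = aeval (fun i => (X i : MvPolynomial (Fin k) ℚ) ^ 2) (aalt k α) := by
  unfold aalt aaltSq
  rw [map_sum]
  apply Finset.sum_congr rfl
  intro σ _
  rw [map_mul, map_intCast, map_prod]
  congr 1
  apply Finset.prod_congr rfl
  intro i _
  rw [map_pow, aeval_X, ← pow_mul]

lemma strictMono_bound {k : ℕ} {v : Fin k → ℕ} (hv : StrictMono v) :
    ∀ e : ℕ, ∀ i j : Fin k, (i : ℕ) + e = j → v i + e ≤ v j := by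
  intro e
  induction e with
  | zero =>
    intro i j h
    have : i = j := Fin.ext (by omega)
    subst this; simp
  | succ e ih =>
    intro i j h
    have hi1 : (i : ℕ) + 1 < k := by have := j.isLt; omega
    set i' : Fin k := ⟨(i : ℕ) + 1, hi1⟩ with hi'
    have h1 : v i < v i' := hv (by rw [Fin.lt_def]; simp [hi'])
    have h2 : v i' + e ≤ v j := ih i' j (by simp [hi']; omega)
    omega

lemma strictAnti_bound {k : ℕ} {w : Fin k → ℕ} (hw : StrictAnti w) {i j : Fin k}
    (hij : i ≤ j) : w j + ((j : ℕ) - (i : ℕ)) ≤ w i := by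
  have hv : StrictMono (fun a : Fin k => w (Fin.rev a)) := by
    intro a b hab
    exact hw (by rwa [Fin.rev_lt_rev])
  have := strictMono_bound hv ((j : ℕ) - (i : ℕ)) (Fin.rev j) (Fin.rev i) ?_
  · simpa [Fin.rev_rev] using this
  · have h1 := i.isLt; have h2 := j.isLt
    have hij' : (i : ℕ) ≤ j := hij
    simp [Fin.rev]
    omega

lemma strictAnti_ge_rev {k : ℕ} {w : Fin k → ℕ} (hw : StrictAnti w) (i : Fin k) :
    k - 1 - (i : ℕ) ≤ w i := by
  rcases Nat.eq_zero_or_pos k with hk | hk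
  · exact absurd i.isLt (by omega)
  have hlast : i ≤ (⟨k - 1, by omega⟩ : Fin k) := by
    rw [Fin.le_def]; simp; omega
  have := strictAnti_bound hw hlast
  simp at this
  omega

lemma perm_strictMono_eq_id {k : ℕ} (π : Equiv.Perm (Fin k)) (hπ : StrictMono (⇑π)) :
    π = 1 := by
  have hmono : StrictMono (fun a : Fin k => ((π a : Fin k) : ℕ)) := by
    intro a b hab; exact hπ hab
  have hge : ∀ i : Fin k, (i : ℕ) ≤ (π i : ℕ) := by
    intro i
    have h0 : (0 : ℕ) < k := i.pos
    have := strictMono_bound hmono (i : ℕ) ⟨0, h0⟩ i (by simp)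
    omega
  have hsum : ∑ i : Fin k, ((π i : Fin k) : ℕ) = ∑ i : Fin k, (i : ℕ) :=
    Equiv.sum_comp π (fun i : Fin k => (i : ℕ))
  have heq := (Finset.sum_eq_sum_iff_of_le (fun i _ => hge i)).mp hsum.symm
  ext i
  exact (heq i (Finset.mem_univ i)).symm

lemma sum_dlt (n : ℕ) : ∑ i : Fin n, dlt n i = n * (n - 1) / 2 := by
  show ∑ i : Fin n, (n - 1 - (i : ℕ)) = n * (n - 1) / 2
  rw [Fin.sum_univ_eq_sum_range (fun r => n - 1 - r) n]
  rw [Finset.sum_range_reflect (fun r => r) n]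
  exact Finset.sum_range_id n

lemma mem_PLen {n d : ℕ} {f : Fin n → ℕ} :
    f ∈ PLen n d ↔ (∀ i j : Fin n, i ≤ j → f j ≤ f i) ∧ ∑ i, f i = d := by
  simp only [PLen, Finset.mem_filter, Fintype.mem_piFinset, Finset.mem_range]
  constructor
  · tauto
  · intro h
    refine ⟨fun i => ?_, h⟩
    have : f i ≤ ∑ j, f j := Finset.single_le_sum (fun j _ => Nat.zero_le _) (mem_univ i)
    omega

lemma mem_Vecs {n m : ℕ} {f : Fin n → ℕ} : f ∈ Vecs n m ↔ ∑ i, f i = m := by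
  simp only [Vecs, Finset.mem_filter, Fintype.mem_piFinset, Finset.mem_range]
  constructor
  · tauto
  · intro h
    refine ⟨fun i => ?_, h⟩
    have : f i ≤ ∑ j, f j := Finset.single_le_sum (fun j _ => Nat.zero_le _) (mem_univ i)
    omega

lemma plen_strictAnti {n d : ℕ} {f : Fin n → ℕ} (hf : f ∈ PLen n d) :
    StrictAnti (fun i => f i + dlt n i) := by
  intro i j hij
  have h1 : f j ≤ f i := (mem_PLen.mp hf).1 i j hij.le
  have h2 : dlt n j < dlt n i := by
    simp only [dlt]
    have hj := j.isLt
    have hij' : (i : ℕ) < (j : ℕ) := hij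
    omega
  simp only
  omega

end Aux

/-- `a_δ(y²) · ∑_{μ ∈ P⁽ⁿ⁾} s_μ(y²) S_{2μ+Δ}(x)
  = ∑_{u ∈ (ℤ_{≥0})ⁿ} (∏ⱼ q_{2uⱼ+1-(n-j)}(x)) a_u(y²)`,
stated degreewise: both sides are graded by `|μ|` resp. `|u| - |δ|` (equivalently by the
`y`-degree), and the degree-`d` parts are equated for every `d`.  Here `x` and `y` are two
independent sets of `n` variables (the `x`-variables are `Sum.inl`, the `y`-variables
`Sum.inr`), `S` is the family of Schur polynomials characterized by `a_δ · s_μ = a_{μ+δ}`,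
`Δ = (n, …, 1)`, and `q` is characterized by its generating function. -/
theorem adelta_mul_sum_schur_Sred (n : ℕ) (hn : 1 ≤ n)
    (q : ℤ → MvPolynomial (Fin n) ℚ)
    (hneg : ∀ r : ℤ, r < 0 → q r = 0)
    (hq : (PowerSeries.mk fun r : ℕ => q r) *
        ∏ i : Fin n, (1 - PowerSeries.C (MvPolynomial.X i : MvPolynomial (Fin n) ℚ) *
          PowerSeries.X)
      = ∏ i : Fin n, (1 + PowerSeries.C (MvPolynomial.X i : MvPolynomial (Fin n) ℚ) *
          PowerSeries.X))
    (S : (Fin n → ℕ) → MvPolynomial (Fin n) ℚ)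
    (hS : ∀ f : Fin n → ℕ, aalt n (dlt n) * S f = aalt n fun i => f i + dlt n i)
    (d : ℕ) :
    MvPolynomial.rename (Sum.inr : Fin n → Fin n ⊕ Fin n) (aaltSq n (dlt n)) *
        ∑ f ∈ PLen n d,
          MvPolynomial.rename (Sum.inr : Fin n → Fin n ⊕ Fin n)
              (MvPolynomial.aeval (fun i => (MvPolynomial.X i) ^ 2) (S f)) *
            MvPolynomial.rename (Sum.inl : Fin n → Fin n ⊕ Fin n)
              (Sred n q fun i => 2 * f i + (n - (i : ℕ)))
      = ∑ u ∈ Vecs n (d + n * (n - 1) / 2),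
          MvPolynomial.rename (Sum.inl : Fin n → Fin n ⊕ Fin n)
              (∏ j : Fin n, q ((2 * (u j : ℤ) + (j : ℕ) + 2) - n)) *
            MvPolynomial.rename (Sum.inr : Fin n → Fin n ⊕ Fin n) (aaltSq n u) := by
  classical
  set m := d + n * (n - 1) / 2 with hm
  set inl : Fin n → Fin n ⊕ Fin n := Sum.inl with hinl
  set inr : Fin n → Fin n ⊕ Fin n := Sum.inr with hinr
  set T : (Fin n → ℕ) → MvPolynomial (Fin n ⊕ Fin n) ℚ := fun u =>
    MvPolynomial.rename inl (∏ j : Fin n, q ((2 * (u j : ℤ) + (j : ℕ) + 2) - n)) *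
      MvPolynomial.rename inr (aaltSq n u) with hT
  set Φ : (Fin n → ℕ) × Equiv.Perm (Fin n) → (Fin n → ℕ) := fun p =>
    (fun i => p.1 i + dlt n i) ∘ ⇑p.2 with hΦ
  -- Step L : LHS equals the "Middle" sum
  have stepL : MvPolynomial.rename inr (aaltSq n (dlt n)) *
        ∑ f ∈ PLen n d,
          MvPolynomial.rename inr
              (MvPolynomial.aeval (fun i => (MvPolynomial.X i) ^ 2) (S f)) *
            MvPolynomial.rename inl (Sred n q fun i => 2 * f i + (n - (i : ℕ)))
      = ∑ f ∈ PLen n d,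
          MvPolynomial.rename inl (Sred n q fun i => 2 * f i + (n - (i : ℕ))) *
            MvPolynomial.rename inr (aaltSq n fun i => f i + dlt n i) := by
    rw [Finset.mul_sum]
    apply Finset.sum_congr rfl
    intro f _
    have h1 : aaltSq n (dlt n) *
          MvPolynomial.aeval (fun i => (MvPolynomial.X i : MvPolynomial (Fin n) ℚ) ^ 2) (S f)
        = aaltSq n fun i => f i + dlt n i := by
      rw [aaltSq_eq_aeval, ← map_mul, hS f, ← aaltSq_eq_aeval]
    calc MvPolynomial.rename inr (aaltSq n (dlt n)) *
          (MvPolynomial.rename inr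
              (MvPolynomial.aeval (fun i => (MvPolynomial.X i) ^ 2) (S f)) *
            MvPolynomial.rename inl (Sred n q fun i => 2 * f i + (n - (i : ℕ))))
        = (MvPolynomial.rename inr (aaltSq n (dlt n)) *
            MvPolynomial.rename inr
              (MvPolynomial.aeval (fun i => (MvPolynomial.X i) ^ 2) (S f))) *
            MvPolynomial.rename inl (Sred n q fun i => 2 * f i + (n - (i : ℕ))) := by ring
      _ = MvPolynomial.rename inr (aaltSq n fun i => f i + dlt n i) *
            MvPolynomial.rename inl (Sred n q fun i => 2 * f i + (n - (i : ℕ))) := by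
          rw [← map_mul, h1]
      _ = _ := by ring
  rw [stepL]
  -- Step R1 : restrict the right-hand sum to injective u
  have stepR1 : ∑ u ∈ (Vecs n m).filter (fun u => Function.Injective u), T u
      = ∑ u ∈ Vecs n m, T u := by
    apply Finset.sum_filter_of_ne
    intro u _ hTu
    by_contra hni
    apply hTu
    rw [hT]
    simp only [aaltSq_eq_zero n u hni, map_zero, mul_zero]
  rw [show (∑ u ∈ Vecs n m,
      MvPolynomial.rename inl (∏ j : Fin n, q ((2 * (u j : ℤ) + (j : ℕ) + 2) - n)) *
        MvPolynomial.rename inr (aaltSq n u)) = ∑ u ∈ Vecs n m, T u from rfl, ← stepR1]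
  -- Step R2 : the injective u are exactly the Φ (f, τ)
  have stepR2 : ∑ p ∈ (PLen n d) ×ˢ (Finset.univ : Finset (Equiv.Perm (Fin n))), T (Φ p)
      = ∑ u ∈ (Vecs n m).filter (fun u => Function.Injective u), T u := by
    apply Finset.sum_bij (fun p _ => Φ p)
    · -- maps into the filter
      rintro ⟨f, τ⟩ hp
      obtain ⟨hf, -⟩ := Finset.mem_product.mp hp
      have hw := plen_strictAnti hf
      rw [Finset.mem_filter]
      constructor
      · rw [mem_Vecs]
        have : ∑ i, ((fun i => f i + dlt n i) ∘ ⇑τ) i = ∑ i, (f i + dlt n i) :=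
          Equiv.sum_comp τ (fun i => f i + dlt n i)
        rw [hΦ]
        simp only at this ⊢
        rw [this, Finset.sum_add_distrib, (mem_PLen.mp hf).2, sum_dlt]
      · exact hw.injective.comp τ.injective
    · -- injectivity
      rintro ⟨f, τ⟩ hp ⟨g, ρ⟩ hp' heq
      obtain ⟨hf, -⟩ := Finset.mem_product.mp hp
      obtain ⟨hg, -⟩ := Finset.mem_product.mp hp'
      have hwf := plen_strictAnti hf
      have hwg := plen_strictAnti hg
      have heqfun : ∀ i, f (τ i) + dlt n (τ i) = g (ρ i) + dlt n (ρ i) := by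
        intro i
        have := congrFun heq i
        simpa [hΦ] using this
      set π : Equiv.Perm (Fin n) := ρ⁻¹.trans τ with hπ
      have hcomp : ∀ i, g i + dlt n i = f (π i) + dlt n (π i) := by
        intro i
        have := heqfun (ρ⁻¹ i)
        simpa [hπ] using this.symm
      have hπmono : StrictMono (⇑π) := by
        intro a b hab
        have h1 : g b + dlt n b < g a + dlt n a := hwg hab
        rw [hcomp a, hcomp b] at h1
        by_contra hle
        push_neg at hle
        rcases eq_or_lt_of_le hle with hEq | hlt
        · rw [hEq] at h1; omega
        · have := hwf hlt
          simp only at this h1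
          omega
      have hπ1 : π = 1 := perm_strictMono_eq_id π hπmono
      have hτρ : τ = ρ := by
        apply Equiv.ext
        intro x
        have := Equiv.ext_iff.mp hπ1 (ρ x)
        simpa [hπ] using this
      have hfg : f = g := by
        funext i
        have h2 := hcomp i
        rw [hπ1] at h2
        simp at h2
        omega
      exact Prod.ext hfg hτρ
    · -- surjectivity
      intro u hu
      obtain ⟨huV, huI⟩ := Finset.mem_filter.mp hu
      set ρ : Equiv.Perm (Fin n) := Tuple.sort u with hρ
      have hmono : Monotone (u ∘ ⇑ρ) := Tuple.monotone_sort u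
      have hsm : StrictMono (u ∘ ⇑ρ) :=
        hmono.strictMono_of_injective (huI.comp ρ.injective)
      set w : Fin n → ℕ := fun i => (u ∘ ⇑ρ) (Fin.rev i) with hw
      have hwa : StrictAnti w := by
        intro i j hij
        exact hsm (by rwa [Fin.rev_lt_rev])
      have hge : ∀ i, dlt n i ≤ w i := fun i => strictAnti_ge_rev hwa i
      set f : Fin n → ℕ := fun i => w i - dlt n i with hf
      have hfw : ∀ i, f i + dlt n i = w i := by
        intro i
        have := hge i
        simp only [hf]
        omega
      have hsumw : ∑ i, w i = m := by
        have h1 : ∑ i, w i = ∑ i, u i := by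
          rw [hw]
          exact Equiv.sum_comp (Fin.revPerm.trans ρ) u
        rw [h1]
        exact mem_Vecs.mp huV
      have hfP : f ∈ PLen n d := by
        rw [mem_PLen]
        constructor
        · intro i j hij
          rcases eq_or_lt_of_le hij with hEq | hlt
          · rw [hEq]
          · have hb := strictAnti_bound hwa hij
            have h1 := hge i
            have h2 := hge j
            have hj := j.isLt
            have hij' : (i : ℕ) ≤ (j : ℕ) := hij
            simp only [hf, dlt] at *
            omega
        · have h1 : ∑ i, (f i + dlt n i) = ∑ i, w i := by
            apply Finset.sum_congr rfl
            intro i _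
            exact hfw i
          rw [Finset.sum_add_distrib, sum_dlt, hsumw] at h1
          omega
      refine ⟨⟨f, ρ⁻¹.trans Fin.revPerm⟩, Finset.mem_product.mpr ⟨hfP, Finset.mem_univ _⟩, ?_⟩
      funext i
      rw [hΦ]
      simp only [Function.comp_apply, Equiv.trans_apply, Fin.revPerm_apply]
      rw [hfw (Fin.rev (ρ⁻¹ i))]
      simp [hw, Fin.rev_rev]
    · intro p _
      rfl
  rw [← stepR2]
  -- Step R3 : the double sum equals the Middle sum
  rw [Finset.sum_product]
  apply Finset.sum_congr rfl
  intro f hf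
  have hdet : Sred n q (fun i => 2 * f i + (n - (i : ℕ)))
      = ∑ τ : Equiv.Perm (Fin n),
          ((Equiv.Perm.sign τ : ℤ) : MvPolynomial (Fin n) ℚ) *
            ∏ j, q ((2 * ((f (τ j) + dlt n (τ j) : ℕ) : ℤ) + (j : ℕ) + 2) - n) := by
    rw [Sred, Matrix.det_apply']
    apply Finset.sum_congr rfl
    intro τ _
    congr 1
    apply Finset.prod_congr rfl
    intro j _
    rw [Matrix.of_apply]
    congr 1
    have hlt := (τ j).isLt
    simp only [dlt]
    push_cast
    omega
  rw [hdet]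
  rw [map_sum, Finset.sum_mul]
  apply Finset.sum_congr rfl
  intro τ _
  have haa : aaltSq n (Φ (f, τ)) = ((Equiv.Perm.sign τ : ℤ) : MvPolynomial (Fin n) ℚ) *
      aaltSq n (fun i => f i + dlt n i) := by
    rw [hΦ]
    exact aaltSq_comp_perm n (fun i => f i + dlt n i) τ
  rw [hT]
  simp only
  have hΦapp : ∀ x, Φ (f, τ) x = f (τ x) + dlt n (τ x) := fun x => rfl
  simp only [hΦapp]
  rw [haa]
  simp only [map_mul, map_intCast]
  ring
end
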